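/- arXiv:1704.01777 — 11 statements merged into one kernel-verified Lean document; each statement's English description precedes it below -/
import Mathlib

section
/- The subgroup ℤS of ℤ^d generated by S has finite index, the subgroup H generated by ω_{n−d+1}e₁, …, ω_n e_d has index D = (ω_{n−d+1}⋯ω_n)/[ℤ^d : ℤS] in ℤS, every coset of H contained in ℤS contains an element of S₀, and consequently the (finite) cardinality of S₀ satisfies #S₀ ≥ D. -/
lemma aux_neg_mem {G : Type*} [AddGroup G] [Finite G] (M : AddSubmonoid G) {x : G}
    (hx : x ∈ M) : -x ∈ M := by
  have hpos : 0 < addOrderOf x := addOrderOf_pos x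
  have h : (addOrderOf x - 1) • x + x = 0 := by
    rw [← succ_nsmul, Nat.sub_add_cancel hpos]; exact addOrderOf_nsmul_eq_zero x
  rw [show -x = (addOrderOf x - 1) • x from neg_eq_of_add_eq_zero_left h]
  exact M.nsmul_mem hx _

lemma aux_closure_le {G : Type*} [AddGroup G] [Finite G] (T : Set G) {x : G}
    (hx : x ∈ AddSubgroup.closure T) : x ∈ AddSubmonoid.closure T := by
  have : AddSubgroup.closure T ≤
      { toAddSubmonoid := AddSubmonoid.closure T,
        neg_mem' := fun h => aux_neg_mem _ h } :=
    AddSubgroup.closure_le _ |>.2 AddSubmonoid.subset_closure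
  exact this hx

/-- With `S ⊆ ℕ^d` the simplicial affine semigroup and `ℤS ⊆ ℤ^d` the
group it generates: `ℤS` has finite index in `ℤ^d`, the subgroup `H` generated by
`ω_{n-d+1}e₁, …, ω_n e_d` satisfies `H ≤ ℤS` and has index
`D = (ω_{n-d+1}⋯ω_n)/[ℤ^d : ℤS]` in `ℤS`, every coset of `H` contained in `ℤS`
contains an element of `S₀`, and `#S₀ ≥ D`. -/
theorem stmt_1 (d n : ℕ) (hd : 1 ≤ d) (hdn : d ≤ n)
    (ω : Fin d → ℕ) (hω : ∀ i, 0 < ω i)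
    (a : Fin n → (Fin d → ℕ))
    (ha : ∀ (i : Fin d) (j : Fin n), (j : ℕ) = n - d + (i : ℕ) →
      a j = fun k => if k = i then ω i else 0)
    (S : AddSubmonoid (Fin d → ℕ))
    (hS : S = AddSubmonoid.closure (Set.range a))
    (S₀ : Set (Fin d → ℕ))
    (hS₀ : S₀ = {s | s ∈ S ∧ ∀ i : Fin d,
      ¬ ∃ t ∈ S, (fun k => (t k : ℤ)) =
        fun k => (s k : ℤ) - (if k = i then (ω i : ℤ) else 0)})
    (ZS : AddSubgroup (Fin d → ℤ))
    (hZS : ZS = AddSubgroup.closure {v | ∃ s ∈ S, v = fun k => (s k : ℤ)})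
    (H : AddSubgroup (Fin d → ℤ))
    (hH : H = AddSubgroup.closure
      {v | ∃ i : Fin d, v = fun k => if k = i then (ω i : ℤ) else 0}) :
    ZS.index ≠ 0 ∧
    H ≤ ZS ∧
    H.relIndex ZS = (∏ i, ω i) / ZS.index ∧
    (∀ z ∈ ZS, ∃ s₀ ∈ S₀, (fun k => ((s₀ k : ℤ))) - z ∈ H) ∧
    (∏ i, ω i) / ZS.index ≤ S₀.ncard := by
  -- notation
  set ι : (Fin d → ℕ) →+ (Fin d → ℤ) :=
    { toFun := fun s k => (s k : ℤ)
      map_zero' := by funext k; simp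
      map_add' := by intro s t; funext k; push_cast; simp } with hι
  have hιapp : ∀ (s : Fin d → ℕ) (k), ι s k = (s k : ℤ) := fun s k => rfl
  -- the distinguished indices
  have hjlt : ∀ i : Fin d, n - d + (i : ℕ) < n := by
    intro i
    have : (i : ℕ) < d := i.isLt
    omega
  set jdx : Fin d → Fin n := fun i => ⟨n - d + (i : ℕ), hjlt i⟩ with hjdx
  have haj : ∀ i : Fin d, a (jdx i) = fun k => if k = i then ω i else 0 :=
    fun i => ha i (jdx i) rfl
  -- membership in H
  have hHpi : H = AddSubgroup.pi Set.univ (fun i => AddSubgroup.zmultiples (ω i : ℤ)) := by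
    rw [hH]
    apply le_antisymm
    · rw [AddSubgroup.closure_le]
      rintro v ⟨i, rfl⟩
      rw [SetLike.mem_coe, AddSubgroup.mem_pi]
      intro k _
      rw [Int.mem_zmultiples_iff]
      by_cases hk : k = i <;> simp [hk]
    · intro v hv
      rw [AddSubgroup.mem_pi] at hv
      have hdvd : ∀ k, (ω k : ℤ) ∣ v k := fun k =>
        Int.mem_zmultiples_iff.mp (hv k (Set.mem_univ k))
      have hrepr : v = ∑ i : Fin d,
          (v i / (ω i : ℤ)) • (fun k => if k = i then (ω i : ℤ) else 0) := by
        funext k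
        rw [Finset.sum_apply]
        simp only [Pi.smul_apply, smul_eq_mul, mul_ite, mul_zero]
        rw [Finset.sum_ite_eq Finset.univ k (fun i => v i / (ω i : ℤ) * (ω i : ℤ))]
        simp [Int.ediv_mul_cancel (hdvd k)]
      rw [hrepr]
      refine AddSubgroup.sum_mem _ fun i _ => AddSubgroup.zsmul_mem _ ?_ _
      exact AddSubgroup.subset_closure ⟨i, rfl⟩
  have hmemH : ∀ v : Fin d → ℤ, v ∈ H ↔ ∀ k, (ω k : ℤ) ∣ v k := by
    intro v
    rw [hHpi, AddSubgroup.mem_pi]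
    simp [Int.mem_zmultiples_iff]
  have heH : ∀ i : Fin d, (fun k => if k = i then (ω i : ℤ) else 0) ∈ H := by
    intro i
    rw [hH]
    exact AddSubgroup.subset_closure ⟨i, rfl⟩
  -- index of H
  have hHindex : H.index = ∏ i, ω i := by
    rw [hHpi, AddSubgroup.index_pi]
    simp [Int.index_zmultiples]
  have hprodpos : 0 < ∏ i, ω i := Finset.prod_pos fun i _ => hω i
  -- divisible nonneg vectors are in S
  have haS : ∀ j, a j ∈ S := by
    intro j; rw [hS]; exact AddSubmonoid.subset_closure ⟨j, rfl⟩
  have hdvdS : ∀ v : Fin d → ℕ, (∀ k, ω k ∣ v k) → v ∈ S := by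
    intro v hv
    have hrepr : v = ∑ i : Fin d, (v i / ω i) • a (jdx i) := by
      funext k
      rw [Finset.sum_apply]
      simp only [haj, Pi.smul_apply, smul_eq_mul, mul_ite, mul_zero]
      rw [Finset.sum_ite_eq Finset.univ k (fun i => v i / ω i * ω i)]
      simp [Nat.div_mul_cancel (hv k)]
    rw [hrepr]
    exact AddSubmonoid.sum_mem _ fun i _ => AddSubmonoid.nsmul_mem _ (haS _) _
  -- H ≤ ZS
  have hHZS : H ≤ ZS := by
    rw [hH, hZS, AddSubgroup.closure_le]
    rintro v ⟨i, rfl⟩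
    refine AddSubgroup.subset_closure ⟨a (jdx i), haS _, ?_⟩
    rw [haj]
    funext k
    by_cases hk : k = i <;> simp [hk]
  -- index arithmetic
  have hrel : H.relIndex ZS * ZS.index = ∏ i, ω i := by
    rw [← hHindex]; exact AddSubgroup.relIndex_mul_index hHZS
  have hZSindex : ZS.index ≠ 0 := by
    intro h0; rw [h0, Nat.mul_zero] at hrel; omega
  have hrelval : H.relIndex ZS = (∏ i, ω i) / ZS.index :=
    (Nat.div_eq_of_eq_mul_left (Nat.pos_of_ne_zero hZSindex) hrel.symm).symm
  -- the finite quotient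
  have hcard : Nat.card ((Fin d → ℤ) ⧸ H) ≠ 0 := by
    rw [← AddSubgroup.index_eq_card, hHindex]; omega
  haveI hfinQ : Finite ((Fin d → ℤ) ⧸ H) := (Nat.card_ne_zero.mp hcard).2
  set π : (Fin d → ℤ) →+ ((Fin d → ℤ) ⧸ H) := QuotientAddGroup.mk' H with hπ
  -- every coset of ZS contains an element of S
  have hstep1 : ∀ z ∈ ZS, ∃ s ∈ S, ι s - z ∈ H := by
    intro z hz
    have hTim : (⇑π) '' {v | ∃ s ∈ S, v = fun k => ((s k : ℤ))} =
        (⇑(π.comp ι)) '' (S : Set (Fin d → ℕ)) := by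
      ext q
      constructor
      · rintro ⟨v, ⟨s, hs, rfl⟩, rfl⟩; exact ⟨s, hs, rfl⟩
      · rintro ⟨s, hs, rfl⟩; exact ⟨ι s, ⟨s, hs, rfl⟩, rfl⟩
    have hπz : π z ∈ AddSubmonoid.closure ((⇑π) '' {v | ∃ s ∈ S, v = fun k => ((s k : ℤ))}) := by
      apply aux_closure_le
      rw [← AddMonoidHom.map_closure, ← hZS]
      exact ⟨z, hz, rfl⟩
    rw [hTim, ← AddMonoidHom.map_mclosure, AddSubmonoid.closure_eq] at hπz
    obtain ⟨s, hs, hπs⟩ := hπz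
    refine ⟨s, hs, ?_⟩
    have : π (ι s) = π z := hπs
    have h2 : -(ι s) + z ∈ H := (QuotientAddGroup.eq).mp this
    have h3 := H.neg_mem h2
    simpa [neg_add_rev, sub_eq_add_neg, add_comm] using h3
  -- descent: every element of S is congruent mod H to an element of S₀
  have hdescent : ∀ s ∈ S, ∃ s₀ ∈ S₀, ι s₀ - ι s ∈ H := by
    suffices h : ∀ N : ℕ, ∀ s, s ∈ S → (∑ k, s k) = N → ∃ s₀ ∈ S₀, ι s₀ - ι s ∈ H by
      intro s hs; exact h _ s hs rfl
    intro N
    induction N using Nat.strong_induction_on with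
    | _ N ih =>
      intro s hs hsum
      by_cases h0 : s ∈ S₀
      · exact ⟨s, h0, by simpa using H.zero_mem⟩
      · rw [hS₀, Set.mem_setOf_eq] at h0
        push_neg at h0
        obtain ⟨i, t, ht, hti⟩ := h0 hs
        have htk : ∀ k, (t k : ℤ) = (s k : ℤ) - (if k = i then (ω i : ℤ) else 0) :=
          fun k => congrFun hti k
        have htle : ∀ k, t k ≤ s k := by
          intro k
          by_cases hk : k = i
          · subst hk
            have := htk k
            simp at this
            omega
          · have := htk k
            simp only [if_neg hk] at this
            omega
        have htlt : t i < s i := by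
          have h1 := htk i
          simp at h1
          have h2 := hω i
          omega
        have hsumlt : (∑ k, t k) < N := by
          rw [← hsum]
          exact Finset.sum_lt_sum (fun k _ => htle k) ⟨i, Finset.mem_univ i, htlt⟩
        obtain ⟨s₀, hs₀, hH'⟩ := ih _ hsumlt t ht rfl
        refine ⟨s₀, hs₀, ?_⟩
        have hts : ι t - ι s ∈ H := by
          rw [hmemH]
          intro k
          rw [Pi.sub_apply, hιapp, hιapp, htk k]
          by_cases hk : k = i
          · subst hk; simp
          · simp [hk]
        simpa using H.add_mem hH' hts
  -- part 4
  have hpart4 : ∀ z ∈ ZS, ∃ s₀ ∈ S₀, ι s₀ - z ∈ H := by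
    intro z hz
    obtain ⟨s, hs, hsz⟩ := hstep1 z hz
    obtain ⟨s₀, hs₀, hss⟩ := hdescent s hs
    exact ⟨s₀, hs₀, by simpa using H.add_mem hss hsz⟩
  -- finiteness of S₀
  have hanti : ∀ g : (Fin d → ℤ) ⧸ H,
      IsAntichain (· ≤ ·) {s | s ∈ S₀ ∧ π (ι s) = g} := by
    intro g s hsmem s' hs'mem hne hle
    obtain ⟨hs, hg⟩ := hsmem
    have hle' : ∀ k, s k ≤ s' k := Pi.le_def.mp hle
    obtain ⟨hs', hg'⟩ := hs'mem
    have hsS : s ∈ S := (hS₀ ▸ hs).1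
    have hcos : ι s' - ι s ∈ H := by
      have hq : π (ι s) = π (ι s') := hg.trans hg'.symm
      have := (QuotientAddGroup.eq (s := H)).mp hq
      have h2 := this
      rwa [neg_add_eq_sub] at h2
    have hdvdZ : ∀ k, (ω k : ℤ) ∣ (s' k : ℤ) - (s k : ℤ) := by
      intro k
      have := (hmemH _).mp hcos k
      simpa [hιapp] using this
    have hdvd : ∀ k, ω k ∣ s' k - s k := by
      intro k
      have hcast : ((s' k - s k : ℕ) : ℤ) = (s' k : ℤ) - (s k : ℤ) :=
        Nat.cast_sub (hle' k)
      have := hdvdZ k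
      rw [← hcast] at this
      exact_mod_cast this
    have hex : ∃ i, s i ≠ s' i := by
      by_contra hc
      push_neg at hc
      exact hne (funext hc)
    obtain ⟨i, hi⟩ := hex
    have hui : ω i ≤ s' i - s i := by
      refine Nat.le_of_dvd ?_ (hdvd i)
      have := hle' i
      omega
    set w : Fin d → ℕ := fun k => (s' k - s k) - (if k = i then ω i else 0) with hw
    have hwd : ∀ k, ω k ∣ w k := by
      intro k
      rw [hw]
      by_cases hk : k = i
      · subst hk; simpa using Nat.dvd_sub (hdvd k) dvd_rfl
      · simpa [hk] using hdvd k
    have hwS : w ∈ S := hdvdS w hwd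
    have htS : s + w ∈ S := S.add_mem hsS hwS
    refine (hS₀ ▸ hs').2 i ⟨s + w, htS, ?_⟩
    funext k
    have hlek := hle' k
    by_cases hk : k = i
    · subst hk
      simp only [Pi.add_apply, hw, if_pos rfl]
      push_cast [Nat.sub_sub]
      omega
    · simp only [Pi.add_apply, hw, if_neg hk]
      push_cast
      omega
  have hfin : S₀.Finite := by
    have hcover : S₀ ⊆ ⋃ g : (Fin d → ℤ) ⧸ H, {s | s ∈ S₀ ∧ π (ι s) = g} :=
      fun s hs => Set.mem_iUnion.mpr ⟨π (ι s), hs, rfl⟩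
    refine Set.Finite.subset (Set.finite_iUnion fun g => ?_) hcover
    exact (hanti g).finite_of_partiallyWellOrderedOn (Set.isPWO_of_wellQuasiOrderedLE _)
  -- counting
  have hcount : H.relIndex ZS ≤ S₀.ncard := by
    haveI : Finite ↥S₀ := hfin.to_subtype
    have hsur : ∀ q : ZS ⧸ H.addSubgroupOf ZS,
        ∃ s₀, s₀ ∈ S₀ ∧ ι s₀ - ((q.out : ZS) : Fin d → ℤ) ∈ H := by
      intro q
      obtain ⟨s₀, h1, h2⟩ := hpart4 _ (q.out : ZS).2
      exact ⟨s₀, h1, h2⟩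
    choose f hf1 hf2 using hsur
    have hinj : Function.Injective (fun q => (⟨f q, hf1 q⟩ : S₀)) := by
      intro q1 q2 h
      have hfe : f q1 = f q2 := congrArg Subtype.val h
      have hmem : (((q1.out : ZS) : Fin d → ℤ)) - ((q2.out : ZS) : Fin d → ℤ) ∈ H := by
        have h3 := H.sub_mem (hf2 q1) (hf2 q2)
        rw [hfe] at h3
        simpa using H.neg_mem h3
      have hmem2 : -(q1.out : ZS) + q2.out ∈ H.addSubgroupOf ZS := by
        rw [AddSubgroup.mem_addSubgroupOf]
        have := H.neg_mem hmem
        simpa [neg_sub, sub_eq_neg_add] using this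
      have heq : (QuotientAddGroup.mk q1.out : ZS ⧸ H.addSubgroupOf ZS) =
          QuotientAddGroup.mk q2.out := (QuotientAddGroup.eq).mpr hmem2
      rwa [QuotientAddGroup.out_eq', QuotientAddGroup.out_eq'] at heq
    calc H.relIndex ZS = Nat.card (ZS ⧸ H.addSubgroupOf ZS) :=
          AddSubgroup.index_eq_card _
      _ ≤ Nat.card ↥S₀ := Nat.card_le_card_of_injective _ hinj
      _ = S₀.ncard := (Nat.card_coe_set_eq _)
  exact ⟨hZSindex, hHZS, hrelval, hpart4, hrelval ▸ hcount⟩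
end

section
/- The set Δ = {s ∈ S : s − a_{n−1} ∈ S, s − a_n ∈ S and s − a_{n−1} − a_n ∉ S} is finite with exactly #S₀ − D elements, where D = ω_{n−1}·ω_n/[ℤ² : ℤS]. In particular Δ is empty if and only if #S₀ = D (the combinatorial criterion for K[S] to be Cohen–Macaulay). -/
namespace Stmt2Aux


/-- Core staircase lemma: for a nonempty up-closed set `A ⊆ ℕ²`, the set of minimal
elements has one more element than the set of "outer corners". -/
theorem core (A : Set (ℕ × ℕ)) (hne : A.Nonempty)
    (hup1 : ∀ p ∈ A, (p.1 + 1, p.2) ∈ A) (hup2 : ∀ p ∈ A, (p.1, p.2 + 1) ∈ A) :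
    ({p ∈ A | ¬(1 ≤ p.1 ∧ (p.1 - 1, p.2) ∈ A) ∧ ¬(1 ≤ p.2 ∧ (p.1, p.2 - 1) ∈ A)} : Set (ℕ × ℕ)).Finite ∧
    ({p : ℕ × ℕ | (1 ≤ p.1 ∧ (p.1 - 1, p.2) ∈ A) ∧ (1 ≤ p.2 ∧ (p.1, p.2 - 1) ∈ A) ∧
        ¬(1 ≤ p.1 ∧ 1 ≤ p.2 ∧ (p.1 - 1, p.2 - 1) ∈ A)}).Finite ∧
    ({p ∈ A | ¬(1 ≤ p.1 ∧ (p.1 - 1, p.2) ∈ A) ∧ ¬(1 ≤ p.2 ∧ (p.1, p.2 - 1) ∈ A)} : Set (ℕ × ℕ)).ncard =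
      ({p : ℕ × ℕ | (1 ≤ p.1 ∧ (p.1 - 1, p.2) ∈ A) ∧ (1 ≤ p.2 ∧ (p.1, p.2 - 1) ∈ A) ∧
        ¬(1 ≤ p.1 ∧ 1 ≤ p.2 ∧ (p.1 - 1, p.2 - 1) ∈ A)}).ncard + 1 := by
  classical
  set M := {p ∈ A | ¬(1 ≤ p.1 ∧ (p.1 - 1, p.2) ∈ A) ∧ ¬(1 ≤ p.2 ∧ (p.1, p.2 - 1) ∈ A)} with hM
  set D := {p : ℕ × ℕ | (1 ≤ p.1 ∧ (p.1 - 1, p.2) ∈ A) ∧ (1 ≤ p.2 ∧ (p.1, p.2 - 1) ∈ A) ∧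
        ¬(1 ≤ p.1 ∧ 1 ≤ p.2 ∧ (p.1 - 1, p.2 - 1) ∈ A)} with hD
  -- the set of nonempty columns
  have hCne : {j | ∃ i, (i, j) ∈ A}.Nonempty := ⟨hne.choose.2, hne.choose.1, by simpa using hne.choose_spec⟩
  set j₀ := sInf {j | ∃ i, (i, j) ∈ A} with hj₀
  have hj₀mem : ∃ i, (i, j₀) ∈ A := Nat.sInf_mem hCne
  -- column characterization
  have hcol : ∀ j, j₀ ≤ j → ∃ i, (i, j) ∈ A := by
    intro j hj
    obtain ⟨i, hi⟩ := hj₀mem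
    obtain ⟨k, rfl⟩ := Nat.exists_eq_add_of_le hj
    clear hj
    induction k with
    | zero => exact ⟨i, hi⟩
    | succ k ih =>
      obtain ⟨i', hi'⟩ := ih
      exact ⟨i', by simpa [← Nat.add_assoc] using hup2 _ hi'⟩
  set f : ℕ → ℕ := fun j => sInf {i | (i, j) ∈ A} with hf
  have key : ∀ i j, (i, j) ∈ A ↔ (j₀ ≤ j ∧ f j ≤ i) := by
    intro i j
    constructor
    · intro h
      exact ⟨Nat.sInf_le ⟨i, h⟩, Nat.sInf_le h⟩
    · rintro ⟨hj, hfi⟩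
      have hbase : (f j, j) ∈ A := Nat.sInf_mem (hcol j hj)
      obtain ⟨k, rfl⟩ := Nat.exists_eq_add_of_le hfi
      clear hfi
      induction k with
      | zero => simpa using hbase
      | succ k ih => simpa [← Nat.add_assoc] using hup1 _ ih
  have fanti : ∀ j k, j₀ ≤ j → j ≤ k → f k ≤ f j := by
    intro j k hj hjk
    obtain ⟨m, rfl⟩ := Nat.exists_eq_add_of_le hjk
    clear hjk
    induction m with
    | zero => exact le_rfl
    | succ m ih =>
      have h1 : (f (j + m), j + m) ∈ A := Nat.sInf_mem (hcol _ (le_trans hj (Nat.le_add_right _ _)))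
      have h2 := hup2 _ h1
      have h3 := ((key (f (j+m)) (j+m+1)).1 h2).2
      calc f (j + (m+1)) = f (j + m + 1) := by ring_nf
        _ ≤ f (j + m) := h3
        _ ≤ f j := ih
  -- descent set
  set Dsc := {j | j₀ < j ∧ f j < f (j - 1)} with hDsc
  have hDscFin : Dsc.Finite := by
    apply Set.Finite.of_finite_image (f := f)
    · apply (Set.finite_Iic (f j₀)).subset
      rintro x ⟨j, ⟨hj1, hj2⟩, rfl⟩
      exact Set.mem_Iic.2 (le_trans hj2.le (fanti j₀ (j-1) le_rfl (by omega)))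
    · intro j hj k hk hjk
      simp only [hDsc, Set.mem_setOf_eq] at hj hk
      by_contra hne'
      rcases Nat.lt_or_ge j k with h | h
      · have : f k < f j := lt_of_lt_of_le hk.2 (fanti j (k-1) (by omega) (by omega))
        omega
      · have h' : k < j := by omega
        have : f j < f k := lt_of_lt_of_le hj.2 (fanti k (j-1) (by omega) (by omega))
        omega
  -- characterize M
  have hMeq : M = (fun j => (f j, j)) '' ({j₀} ∪ Dsc) := by
    ext ⟨i, j⟩
    simp only [hM, Set.mem_setOf_eq, Set.mem_image, Set.mem_union, Set.mem_singleton_iff, hDsc]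
    constructor
    · rintro ⟨hmem, h1, h2⟩
      rw [key] at hmem
      obtain ⟨hj, hfi⟩ := hmem
      have hieq : i = f j := by
        by_contra hne'
        exact h1 ⟨by omega, (key _ _).2 ⟨hj, by omega⟩⟩
      subst hieq
      refine ⟨j, ?_, rfl⟩
      by_cases hjj : j = j₀
      · exact Or.inl hjj
      · right
        refine ⟨by omega, ?_⟩
        by_contra hle
        push_neg at hle
        exact h2 ⟨by omega, (key _ _).2 ⟨by omega, hle⟩⟩
    · rintro ⟨j, hj, heq⟩
      cases heq
      have hmem : (f j, j) ∈ A := by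
        rcases hj with rfl | ⟨hj1, _⟩
        · exact (key _ _).2 ⟨le_rfl, le_rfl⟩
        · exact (key _ _).2 ⟨hj1.le, le_rfl⟩
      refine ⟨hmem, ?_, ?_⟩
      · rintro ⟨hi1, hiA⟩
        have := ((key _ _).1 hiA).2
        omega
      · rintro ⟨hj1, hjA⟩
        have h' := (key _ _).1 hjA
        rcases hj with rfl | ⟨hj1', hj2'⟩
        · omega
        · exact absurd h'.2 (by omega)
  -- characterize D
  have hDeq : D = (fun j => (f (j - 1), j)) '' Dsc := by
    ext ⟨i, j⟩
    simp only [hD, Set.mem_setOf_eq, Set.mem_image, hDsc]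
    constructor
    · rintro ⟨⟨hi1, hiA⟩, ⟨hj1, hjA⟩, h3⟩
      have c1 := (key _ _).1 hiA
      have c2 := (key _ _).1 hjA
      have hieq : i = f (j - 1) := by
        by_contra hne'
        exact h3 ⟨hi1, hj1, (key _ _).2 ⟨c2.1, by omega⟩⟩
      subst hieq
      exact ⟨j, ⟨by omega, by omega⟩, rfl⟩
    · rintro ⟨j, ⟨hj1, hj2⟩, heq⟩
      cases heq
      refine ⟨⟨by omega, (key _ _).2 ⟨by omega, by omega⟩⟩,
        ⟨by omega, (key _ _).2 ⟨by omega, le_rfl⟩⟩, ?_⟩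
      rintro ⟨-, -, hbad⟩
      have := ((key _ _).1 hbad).2
      omega
  -- injectivity of the parametrizations
  have hinj1 : Function.Injective (fun j => (f j, j)) := fun x y h => congrArg Prod.snd h
  have hinj2 : Function.Injective (fun j => (f (j - 1), j)) := fun x y h => congrArg Prod.snd h
  have hJfin : ({j₀} ∪ Dsc : Set ℕ).Finite := (Set.finite_singleton _).union hDscFin
  have hMfin : M.Finite := hMeq ▸ hJfin.image _
  have hDfin : D.Finite := hDeq ▸ hDscFin.image _
  refine ⟨hMfin, hDfin, ?_⟩
  rw [hMeq, hDeq, Set.ncard_image_of_injective _ hinj1, Set.ncard_image_of_injective _ hinj2]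
  have hj₀not : j₀ ∉ Dsc := by simp [hDsc]
  rw [Set.union_comm, ← Set.ncard_insert_of_notMem hj₀not hDscFin]
  simp [Set.union_comm]



theorem count_residues (ω₁ ω₂ : ℕ) (hω₁ : 0 < ω₁) (hω₂ : 0 < ω₂)
    (S : AddSubmonoid (ℕ × ℕ))
    (h1 : ((ω₁ : ℕ), (0 : ℕ)) ∈ S) (h2 : ((0 : ℕ), ω₂) ∈ S)
    (ZS : AddSubgroup (ℤ × ℤ))
    (hZS : ZS = AddSubgroup.closure {v | ∃ s ∈ S, v = ((s.1 : ℤ), (s.2 : ℤ))}) :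
    ((fun s : ℕ × ℕ => (s.1 % ω₁, s.2 % ω₂)) '' S).ncard * ZS.index = ω₁ * ω₂ := by
  classical
  haveI : NeZero ω₁ := ⟨hω₁.ne'⟩
  haveI : NeZero ω₂ := ⟨hω₂.ne'⟩
  set φ : ℤ × ℤ →+ ZMod ω₁ × ZMod ω₂ :=
    AddMonoidHom.prodMap (Int.castAddHom (ZMod ω₁)) (Int.castAddHom (ZMod ω₂)) with hφ
  set Ψ : ℕ × ℕ →+ ZMod ω₁ × ZMod ω₂ :=
    AddMonoidHom.prodMap (Nat.castAddMonoidHom (ZMod ω₁)) (Nat.castAddMonoidHom (ZMod ω₂)) with hΨ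
  have hΨapp : ∀ p : ℕ × ℕ, Ψ p = (((p.1 : ZMod ω₁)), ((p.2 : ZMod ω₂))) := fun p => rfl
  have hφapp : ∀ v : ℤ × ℤ, φ v = ((((v.1 : ℤ) : ZMod ω₁)), (((v.2 : ℤ) : ZMod ω₂))) := fun v => rfl
  have hφΨ : ∀ p : ℕ × ℕ, φ ((p.1 : ℤ), (p.2 : ℤ)) = Ψ p := by
    intro p
    rw [hφapp, hΨapp]
    push_cast
    rfl
  have hφsurj : Function.Surjective φ := by
    rw [hφ]
    simp only [AddMonoidHom.coe_prodMap]
    exact Prod.map_surjective.2 ⟨ZMod.intCast_surjective, ZMod.intCast_surjective⟩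
  have hgen : ∀ s : ℕ × ℕ, s ∈ S → (((s.1 : ℤ), (s.2 : ℤ)) : ℤ × ℤ) ∈ ZS := by
    intro s hs
    rw [hZS]
    exact AddSubgroup.subset_closure ⟨s, hs, rfl⟩
  have hker : φ.ker ≤ ZS := by
    rintro ⟨x, y⟩ hxy
    rw [AddMonoidHom.mem_ker] at hxy
    rw [hφapp] at hxy
    have hx : ((x : ZMod ω₁)) = 0 := congrArg Prod.fst hxy
    have hy : ((y : ZMod ω₂)) = 0 := congrArg Prod.snd hxy
    obtain ⟨a, ha⟩ := (ZMod.intCast_zmod_eq_zero_iff_dvd x ω₁).1 hx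
    obtain ⟨b, hb⟩ := (ZMod.intCast_zmod_eq_zero_iff_dvd y ω₂).1 hy
    have hv : ((x, y) : ℤ × ℤ) = a • (((ω₁ : ℤ), (0 : ℤ)) : ℤ × ℤ) + b • (((0 : ℤ), (ω₂ : ℤ)) : ℤ × ℤ) := by
      simp [Prod.ext_iff, ha, hb, mul_comm]
    rw [hv]
    exact AddSubgroup.add_mem _
      (AddSubgroup.zsmul_mem _ (by simpa using hgen _ h1) _)
      (AddSubgroup.zsmul_mem _ (by simpa using hgen _ h2) _)
  set K := ZS.map φ with hK
  have hKidx : K.index = ZS.index := AddSubgroup.index_map_eq ZS hφsurj hker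
  have hLagrange : Nat.card K * K.index = ω₁ * ω₂ := by
    have := AddSubgroup.card_mul_index K
    rwa [Nat.card_prod, Nat.card_zmod, Nat.card_zmod] at this
  -- Ψ '' S is closed under negation
  have hΨim_neg : ∀ x ∈ Ψ '' (S : Set (ℕ × ℕ)), -x ∈ Ψ '' (S : Set (ℕ × ℕ)) := by
    rintro x ⟨s, hs, rfl⟩
    have hord : 0 < addOrderOf (Ψ s) := addOrderOf_pos _
    refine ⟨(addOrderOf (Ψ s) - 1) • s, AddSubmonoid.nsmul_mem S hs _, ?_⟩
    rw [map_nsmul]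
    have h' : (addOrderOf (Ψ s) - 1) • (Ψ s) + Ψ s = 0 := by
      rw [← succ_nsmul, Nat.sub_add_cancel hord]
      exact addOrderOf_nsmul_eq_zero (Ψ s)
    exact eq_neg_of_add_eq_zero_left h'
  -- K as a set is Ψ '' S
  have hKset : (K : Set (ZMod ω₁ × ZMod ω₂)) = Ψ '' (S : Set (ℕ × ℕ)) := by
    apply Set.Subset.antisymm
    · rintro x hx
      obtain ⟨v, hv, rfl⟩ := hx
      rw [hZS] at hv
      induction hv using AddSubgroup.closure_induction with
      | mem v hv =>
        obtain ⟨s, hs, rfl⟩ := hv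
        exact ⟨s, hs, (hφΨ s).symm⟩
      | zero => exact ⟨0, S.zero_mem, by simp⟩
      | add v w _ _ ihv ihw =>
        obtain ⟨s, hs, hsv⟩ := ihv
        obtain ⟨t, ht, htw⟩ := ihw
        exact ⟨s + t, S.add_mem hs ht, by rw [map_add, map_add, hsv, htw]⟩
      | neg v _ ihv =>
        obtain ⟨s, hs, hsv⟩ := ihv
        have := hΨim_neg (Ψ s) ⟨s, hs, rfl⟩
        rw [hsv] at this
        simpa using this
    · rintro x ⟨s, hs, rfl⟩
      exact ⟨((s.1 : ℤ), (s.2 : ℤ)), hgen s hs, hφΨ s⟩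
  -- the residue image equals Ψ '' S up to the bijection
  have hmodcast : ∀ s : ℕ × ℕ, Ψ (s.1 % ω₁, s.2 % ω₂) = Ψ s := by
    intro s
    rw [hΨapp, hΨapp]
    simp [ZMod.natCast_mod]
  have himeq : Ψ '' ((fun s : ℕ × ℕ => (s.1 % ω₁, s.2 % ω₂)) '' S) = Ψ '' (S : Set (ℕ × ℕ)) := by
    rw [Set.image_image]
    exact Set.image_congr (fun s _ => hmodcast s)
  have hinjOn : Set.InjOn Ψ ((fun s : ℕ × ℕ => (s.1 % ω₁, s.2 % ω₂)) '' S) := by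
    rintro p ⟨s, _, rfl⟩ q ⟨t, _, rfl⟩ hpq
    rw [hΨapp, hΨapp] at hpq
    have h1' : ((s.1 % ω₁ : ℕ) : ZMod ω₁) = ((t.1 % ω₁ : ℕ) : ZMod ω₁) := congrArg Prod.fst hpq
    have h2' : ((s.2 % ω₂ : ℕ) : ZMod ω₂) = ((t.2 % ω₂ : ℕ) : ZMod ω₂) := congrArg Prod.snd hpq
    have e1 : s.1 % ω₁ = t.1 % ω₁ := by
      have := congrArg ZMod.val h1'
      rwa [ZMod.val_cast_of_lt (Nat.mod_lt _ hω₁), ZMod.val_cast_of_lt (Nat.mod_lt _ hω₁)] at this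
    have e2 : s.2 % ω₂ = t.2 % ω₂ := by
      have := congrArg ZMod.val h2'
      rwa [ZMod.val_cast_of_lt (Nat.mod_lt _ hω₂), ZMod.val_cast_of_lt (Nat.mod_lt _ hω₂)] at this
    exact Prod.ext e1 e2
  have hncard : ((fun s : ℕ × ℕ => (s.1 % ω₁, s.2 % ω₂)) '' S).ncard = Nat.card K := by
    rw [← Set.ncard_image_of_injOn hinjOn, himeq, ← hKset]
    exact (Nat.card_coe_set_eq _).symm
  rw [hncard, ← hKidx]
  exact hLagrange



def res (ω₁ ω₂ : ℕ) : ℕ × ℕ → ℕ × ℕ := fun s => (s.1 % ω₁, s.2 % ω₂)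

def NS₀ (ω₁ ω₂ : ℕ) (S : AddSubmonoid (ℕ × ℕ)) : Set (ℕ × ℕ) :=
  {s | s ∈ S ∧ ¬(ω₁ ≤ s.1 ∧ (s.1 - ω₁, s.2) ∈ S) ∧ ¬(ω₂ ≤ s.2 ∧ (s.1, s.2 - ω₂) ∈ S)}

def NΔ (ω₁ ω₂ : ℕ) (S : AddSubmonoid (ℕ × ℕ)) : Set (ℕ × ℕ) :=
  {s | s ∈ S ∧ (ω₁ ≤ s.1 ∧ (s.1 - ω₁, s.2) ∈ S) ∧ (ω₂ ≤ s.2 ∧ (s.1, s.2 - ω₂) ∈ S) ∧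
    ¬(ω₁ ≤ s.1 ∧ ω₂ ≤ s.2 ∧ (s.1 - ω₁, s.2 - ω₂) ∈ S)}

theorem fiber_counts (ω₁ ω₂ : ℕ) (hω₁ : 0 < ω₁) (hω₂ : 0 < ω₂)
    (S : AddSubmonoid (ℕ × ℕ))
    (h1 : ((ω₁ : ℕ), (0 : ℕ)) ∈ S) (h2 : ((0 : ℕ), ω₂) ∈ S)
    (ρ : ℕ × ℕ) (hρ : ρ ∈ res ω₁ ω₂ '' S) :
    (NS₀ ω₁ ω₂ S ∩ res ω₁ ω₂ ⁻¹' {ρ}).Finite ∧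
    (NΔ ω₁ ω₂ S ∩ res ω₁ ω₂ ⁻¹' {ρ}).Finite ∧
    (NS₀ ω₁ ω₂ S ∩ res ω₁ ω₂ ⁻¹' {ρ}).ncard = (NΔ ω₁ ω₂ S ∩ res ω₁ ω₂ ⁻¹' {ρ}).ncard + 1 := by
  classical
  obtain ⟨s₀, hs₀S, hs₀ρ⟩ := hρ
  have hρ1 : ρ.1 < ω₁ := by
    rw [← hs₀ρ]; exact Nat.mod_lt _ hω₁
  have hρ2 : ρ.2 < ω₂ := by
    rw [← hs₀ρ]; exact Nat.mod_lt _ hω₂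
  set A : Set (ℕ × ℕ) := {p | ((ρ.1 + p.1 * ω₁, ρ.2 + p.2 * ω₂) : ℕ × ℕ) ∈ S} with hA
  set g : ℕ × ℕ → ℕ × ℕ := fun p => (ρ.1 + p.1 * ω₁, ρ.2 + p.2 * ω₂) with hg
  have hup1 : ∀ p ∈ A, (p.1 + 1, p.2) ∈ A := by
    intro p hp
    have := S.add_mem hp h1
    simpa [hA, Prod.ext_iff, add_mul, add_comm, add_left_comm, add_assoc] using this
  have hup2 : ∀ p ∈ A, (p.1, p.2 + 1) ∈ A := by
    intro p hp
    have := S.add_mem hp h2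
    simpa [hA, Prod.ext_iff, add_mul, add_comm, add_left_comm, add_assoc] using this
  have hs₀dec : g (s₀.1 / ω₁, s₀.2 / ω₂) = s₀ := by
    have e1 : ρ.1 = s₀.1 % ω₁ := by rw [← hs₀ρ]; rfl
    have e2 : ρ.2 = s₀.2 % ω₂ := by rw [← hs₀ρ]; rfl
    simp only [hg, Prod.ext_iff]
    constructor
    · rw [e1]; exact Nat.mod_add_div' s₀.1 ω₁
    · rw [e2]; exact Nat.mod_add_div' s₀.2 ω₂
  have hne : A.Nonempty := ⟨(s₀.1 / ω₁, s₀.2 / ω₂), by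
    show g (s₀.1 / ω₁, s₀.2 / ω₂) ∈ S
    rw [hs₀dec]; exact hs₀S⟩
  -- g is injective
  have hginj : Function.Injective g := by
    rintro ⟨i, j⟩ ⟨k, l⟩ h
    simp only [hg, Prod.ext_iff] at h
    obtain ⟨h1', h2'⟩ := h
    have : i * ω₁ = k * ω₁ := by omega
    have e1 : i = k := Nat.eq_of_mul_eq_mul_right hω₁ this
    have : j * ω₂ = l * ω₂ := by omega
    have e2 : j = l := Nat.eq_of_mul_eq_mul_right hω₂ this
    simp [e1, e2]
  -- residue of g p is ρ
  have hres : ∀ p : ℕ × ℕ, res ω₁ ω₂ (g p) = ρ := by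
    intro p
    simp only [hg, res, Prod.ext_iff]
    constructor
    · rw [Nat.add_mul_mod_self_right, Nat.mod_eq_of_lt hρ1]
    · rw [Nat.add_mul_mod_self_right, Nat.mod_eq_of_lt hρ2]
  -- every element with residue ρ is in the image of g
  have hsurj : ∀ s : ℕ × ℕ, res ω₁ ω₂ s = ρ → g (s.1 / ω₁, s.2 / ω₂) = s := by
    intro s hs
    simp only [res, Prod.ext_iff] at hs
    simp only [hg, Prod.ext_iff]
    constructor
    · rw [← hs.1]; exact Nat.mod_add_div' s.1 ω₁
    · rw [← hs.2]; exact Nat.mod_add_div' s.2 ω₂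
  -- condition translations
  have cond1 : ∀ p : ℕ × ℕ, (ω₁ ≤ (g p).1 ∧ ((g p).1 - ω₁, (g p).2) ∈ S)
      ↔ (1 ≤ p.1 ∧ (p.1 - 1, p.2) ∈ A) := by
    rintro ⟨i, j⟩
    simp only [hg, hA, Set.mem_setOf_eq]
    constructor
    · rintro ⟨hle, hmem⟩
      have hi : 1 ≤ i := by
        rcases Nat.eq_zero_or_pos i with rfl | h
        · simp at hle; omega
        · exact h
      refine ⟨hi, ?_⟩
      have : ρ.1 + i * ω₁ - ω₁ = ρ.1 + (i - 1) * ω₁ := by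
        rw [Nat.sub_mul, one_mul]
        have : ω₁ ≤ i * ω₁ := Nat.le_mul_of_pos_left _ hi
        omega
      rwa [this] at hmem
    · rintro ⟨hi, hmem⟩
      have hle : ω₁ ≤ i * ω₁ := Nat.le_mul_of_pos_left _ hi
      refine ⟨by omega, ?_⟩
      have : ρ.1 + i * ω₁ - ω₁ = ρ.1 + (i - 1) * ω₁ := by
        rw [Nat.sub_mul, one_mul]; omega
      rwa [this]
  have cond2 : ∀ p : ℕ × ℕ, (ω₂ ≤ (g p).2 ∧ ((g p).1, (g p).2 - ω₂) ∈ S)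
      ↔ (1 ≤ p.2 ∧ (p.1, p.2 - 1) ∈ A) := by
    rintro ⟨i, j⟩
    simp only [hg, hA, Set.mem_setOf_eq]
    constructor
    · rintro ⟨hle, hmem⟩
      have hj : 1 ≤ j := by
        rcases Nat.eq_zero_or_pos j with rfl | h
        · simp at hle; omega
        · exact h
      refine ⟨hj, ?_⟩
      have : ρ.2 + j * ω₂ - ω₂ = ρ.2 + (j - 1) * ω₂ := by
        rw [Nat.sub_mul, one_mul]
        have : ω₂ ≤ j * ω₂ := Nat.le_mul_of_pos_left _ hj
        omega
      rwa [this] at hmem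
    · rintro ⟨hj, hmem⟩
      have hle : ω₂ ≤ j * ω₂ := Nat.le_mul_of_pos_left _ hj
      refine ⟨by omega, ?_⟩
      have : ρ.2 + j * ω₂ - ω₂ = ρ.2 + (j - 1) * ω₂ := by
        rw [Nat.sub_mul, one_mul]; omega
      rwa [this]
  have cond3 : ∀ p : ℕ × ℕ, (ω₁ ≤ (g p).1 ∧ ω₂ ≤ (g p).2 ∧ ((g p).1 - ω₁, (g p).2 - ω₂) ∈ S)
      ↔ (1 ≤ p.1 ∧ 1 ≤ p.2 ∧ (p.1 - 1, p.2 - 1) ∈ A) := by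
    rintro ⟨i, j⟩
    simp only [hg, hA, Set.mem_setOf_eq]
    constructor
    · rintro ⟨hle1, hle2, hmem⟩
      have hi : 1 ≤ i := by
        rcases Nat.eq_zero_or_pos i with rfl | h
        · simp at hle1; omega
        · exact h
      have hj : 1 ≤ j := by
        rcases Nat.eq_zero_or_pos j with rfl | h
        · simp at hle2; omega
        · exact h
      refine ⟨hi, hj, ?_⟩
      have e1 : ρ.1 + i * ω₁ - ω₁ = ρ.1 + (i - 1) * ω₁ := by
        rw [Nat.sub_mul, one_mul]
        have : ω₁ ≤ i * ω₁ := Nat.le_mul_of_pos_left _ hi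
        omega
      have e2 : ρ.2 + j * ω₂ - ω₂ = ρ.2 + (j - 1) * ω₂ := by
        rw [Nat.sub_mul, one_mul]
        have : ω₂ ≤ j * ω₂ := Nat.le_mul_of_pos_left _ hj
        omega
      rwa [e1, e2] at hmem
    · rintro ⟨hi, hj, hmem⟩
      have hle1 : ω₁ ≤ i * ω₁ := Nat.le_mul_of_pos_left _ hi
      have hle2 : ω₂ ≤ j * ω₂ := Nat.le_mul_of_pos_left _ hj
      refine ⟨by omega, by omega, ?_⟩
      have e1 : ρ.1 + i * ω₁ - ω₁ = ρ.1 + (i - 1) * ω₁ := by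
        rw [Nat.sub_mul, one_mul]; omega
      have e2 : ρ.2 + j * ω₂ - ω₂ = ρ.2 + (j - 1) * ω₂ := by
        rw [Nat.sub_mul, one_mul]; omega
      rwa [e1, e2]
  have hmemA : ∀ p : ℕ × ℕ, g p ∈ S ↔ p ∈ A := fun p => Iff.rfl
  -- image equalities
  set M := {p ∈ A | ¬(1 ≤ p.1 ∧ (p.1 - 1, p.2) ∈ A) ∧ ¬(1 ≤ p.2 ∧ (p.1, p.2 - 1) ∈ A)} with hM
  set D := {p : ℕ × ℕ | (1 ≤ p.1 ∧ (p.1 - 1, p.2) ∈ A) ∧ (1 ≤ p.2 ∧ (p.1, p.2 - 1) ∈ A) ∧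
        ¬(1 ≤ p.1 ∧ 1 ≤ p.2 ∧ (p.1 - 1, p.2 - 1) ∈ A)} with hD
  have hMim : NS₀ ω₁ ω₂ S ∩ res ω₁ ω₂ ⁻¹' {ρ} = g '' M := by
    ext s
    constructor
    · rintro ⟨⟨hsS, hc1, hc2⟩, hsρ⟩
      have hsρ' : res ω₁ ω₂ s = ρ := hsρ
      have hgp := hsurj s hsρ'
      refine ⟨(s.1 / ω₁, s.2 / ω₂), ?_, hgp⟩
      rw [hM]
      refine ⟨?_, ?_, ?_⟩
      · rw [← hmemA]; rw [hgp]; exact hsS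
      · rw [← cond1]; rw [hgp]; exact hc1
      · rw [← cond2]; rw [hgp]; exact hc2
    · rintro ⟨p, hp, rfl⟩
      rw [hM] at hp
      obtain ⟨hpA, hp1, hp2⟩ := hp
      exact ⟨⟨(hmemA p).2 hpA, fun h => hp1 ((cond1 p).1 h), fun h => hp2 ((cond2 p).1 h)⟩, hres p⟩
  have hDim : NΔ ω₁ ω₂ S ∩ res ω₁ ω₂ ⁻¹' {ρ} = g '' D := by
    ext s
    constructor
    · rintro ⟨⟨hsS, hc1, hc2, hc3⟩, hsρ⟩
      have hsρ' : res ω₁ ω₂ s = ρ := hsρ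
      have hgp := hsurj s hsρ'
      refine ⟨(s.1 / ω₁, s.2 / ω₂), ?_, hgp⟩
      rw [hD]
      refine ⟨?_, ?_, ?_⟩
      · rw [← cond1]; rw [hgp]; exact hc1
      · rw [← cond2]; rw [hgp]; exact hc2
      · rw [← cond3]; rw [hgp]; exact hc3
    · rintro ⟨p, hp, rfl⟩
      rw [hD] at hp
      obtain ⟨hp1, hp2, hp3⟩ := hp
      have hpA : p ∈ A := by
        have := hup1 _ hp1.2
        have e : (p.1 - 1 + 1, p.2) = p := by
          have := hp1.1; exact Prod.ext (by omega) rfl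
        rwa [e] at this
      exact ⟨⟨(hmemA p).2 hpA, (cond1 p).2 hp1, (cond2 p).2 hp2,
        fun h => hp3 ((cond3 p).1 h)⟩, hres p⟩
  obtain ⟨hMfin, hDfin, hcount⟩ := core A hne hup1 hup2
  rw [hMim, hDim]
  exact ⟨hMfin.image g, hDfin.image g,
    by rw [Set.ncard_image_of_injective _ hginj, Set.ncard_image_of_injective _ hginj]
       exact hcount⟩

theorem partition_count {β : Type*} [DecidableEq β] (r : (ℕ × ℕ) → β) (B : Finset β)
    (T : Set (ℕ × ℕ))
    (hT : ∀ x ∈ T, r x ∈ B) (hfib : ∀ b ∈ B, (T ∩ r ⁻¹' {b}).Finite) :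
    T.Finite ∧ T.ncard = ∑ b ∈ B, (T ∩ r ⁻¹' {b}).ncard := by
  classical
  induction B using Finset.induction generalizing T with
  | empty =>
    have hTe : T = ∅ := by
      ext x
      simp only [Set.mem_empty_iff_false, iff_false]
      intro hx
      simpa using hT x hx
    simp [hTe]
  | @insert b B' hb ih =>
    set F := T ∩ r ⁻¹' {b} with hF
    set T' := {x ∈ T | r x ≠ b} with hT'
    have hT'sub : ∀ x ∈ T', r x ∈ B' := by
      rintro x ⟨hx, hxb⟩
      have := hT x hx
      rw [Finset.mem_insert] at this
      tauto
    have hfibeq : ∀ b' ∈ B', T' ∩ r ⁻¹' {b'} = T ∩ r ⁻¹' {b'} := by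
      intro b' hb'
      ext x
      constructor
      · rintro ⟨⟨hx, _⟩, hx'⟩
        exact ⟨hx, hx'⟩
      · rintro ⟨hx, hx'⟩
        have hxb' : r x = b' := hx'
        refine ⟨⟨hx, ?_⟩, hx'⟩
        rintro rfl
        exact hb (hxb' ▸ hb')
    have hfib' : ∀ b' ∈ B', (T' ∩ r ⁻¹' {b'}).Finite := by
      intro b' hb'
      rw [hfibeq b' hb']
      exact hfib b' (Finset.mem_insert_of_mem hb')
    obtain ⟨hT'fin, hT'card⟩ := ih T' hT'sub hfib'
    have hFfin : F.Finite := hfib b (Finset.mem_insert_self _ _)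
    have hsplit : T = F ∪ T' := by
      ext x
      constructor
      · intro hx
        by_cases hxb : r x = b
        · exact Or.inl ⟨hx, hxb⟩
        · exact Or.inr ⟨hx, hxb⟩
      · rintro (⟨hx, _⟩ | ⟨hx, _⟩) <;> exact hx
    have hdisj : Disjoint F T' := by
      rw [Set.disjoint_left]
      rintro x ⟨_, hxb⟩ ⟨_, hxb'⟩
      exact hxb' hxb
    have hTfin : T.Finite := by rw [hsplit]; exact hFfin.union hT'fin
    refine ⟨hTfin, ?_⟩
    rw [hsplit, Set.ncard_union_eq hdisj hFfin hT'fin, hT'card,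
      Finset.sum_insert hb]
    congr 1
    · rw [← hsplit]
    · apply Finset.sum_congr rfl
      intro b' hb'
      rw [← hsplit, ← hfibeq b' hb']


end Stmt2Aux

/-- For a two-dimensional simplicial affine semigroup `S ⊆ ℕ²`
(with `a_{n-1} = (ω_{n-1},0)`, `a_n = (0,ω_n)`), the set
`Δ = {s ∈ S : s - a_{n-1} ∈ S, s - a_n ∈ S, s - a_{n-1} - a_n ∉ S}` is finite with
exactly `#S₀ - D` elements, where `D = ω_{n-1}·ω_n/[ℤ² : ℤS]`; in particular
`Δ = ∅ ↔ #S₀ = D`. -/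
theorem stmt_2 (n : ℕ) (hn : 2 ≤ n)
    (ω₁ ω₂ : ℕ) (hω₁ : 0 < ω₁) (hω₂ : 0 < ω₂)
    (a : Fin n → ℕ × ℕ)
    (ha₁ : ∀ j : Fin n, (j : ℕ) = n - 2 → a j = (ω₁, 0))
    (ha₂ : ∀ j : Fin n, (j : ℕ) = n - 1 → a j = (0, ω₂))
    (S : AddSubmonoid (ℕ × ℕ))
    (hS : S = AddSubmonoid.closure (Set.range a))
    (ZS : AddSubgroup (ℤ × ℤ))
    (hZS : ZS = AddSubgroup.closure {v | ∃ s ∈ S, v = ((s.1 : ℤ), (s.2 : ℤ))})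
    (hidx : ZS.index ≠ 0)
    (S₀ : Set (ℕ × ℕ))
    (hS₀ : S₀ = {s | s ∈ S ∧
      (¬ ∃ t ∈ S, ((t.1 : ℤ), (t.2 : ℤ)) = ((s.1 : ℤ) - (ω₁ : ℤ), (s.2 : ℤ))) ∧
      (¬ ∃ t ∈ S, ((t.1 : ℤ), (t.2 : ℤ)) = ((s.1 : ℤ), (s.2 : ℤ) - (ω₂ : ℤ)))})
    (Δ : Set (ℕ × ℕ))
    (hΔ : Δ = {s | s ∈ S ∧
      (∃ t ∈ S, ((t.1 : ℤ), (t.2 : ℤ)) = ((s.1 : ℤ) - (ω₁ : ℤ), (s.2 : ℤ))) ∧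
      (∃ t ∈ S, ((t.1 : ℤ), (t.2 : ℤ)) = ((s.1 : ℤ), (s.2 : ℤ) - (ω₂ : ℤ))) ∧
      (¬ ∃ t ∈ S, ((t.1 : ℤ), (t.2 : ℤ)) = ((s.1 : ℤ) - (ω₁ : ℤ), (s.2 : ℤ) - (ω₂ : ℤ)))}) :
    Δ.Finite ∧
    Δ.ncard + ω₁ * ω₂ / ZS.index = S₀.ncard ∧
    (Δ = ∅ ↔ S₀.ncard = ω₁ * ω₂ / ZS.index) := by
  classical
  open Stmt2Aux in
  -- the two distinguished generators lie in S
  have hω1S : ((ω₁, 0) : ℕ × ℕ) ∈ S := by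
    have h := ha₁ ⟨n - 2, by omega⟩ rfl
    rw [hS, ← h]
    exact AddSubmonoid.subset_closure (Set.mem_range_self _)
  have hω2S : ((0, ω₂) : ℕ × ℕ) ∈ S := by
    have h := ha₂ ⟨n - 1, by omega⟩ rfl
    rw [hS, ← h]
    exact AddSubmonoid.subset_closure (Set.mem_range_self _)
  -- translation of the ℤ-conditions into ℕ-conditions
  have tr1 : ∀ s : ℕ × ℕ,
      (∃ t ∈ S, ((t.1 : ℤ), (t.2 : ℤ)) = ((s.1 : ℤ) - (ω₁ : ℤ), (s.2 : ℤ)))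
      ↔ (ω₁ ≤ s.1 ∧ ((s.1 - ω₁, s.2) : ℕ × ℕ) ∈ S) := by
    intro s
    constructor
    · rintro ⟨t, ht, heq⟩
      rw [Prod.mk.injEq] at heq
      obtain ⟨e1, e2⟩ := heq
      have hle : ω₁ ≤ s.1 := by omega
      have et : t = (s.1 - ω₁, s.2) := by
        apply Prod.ext <;> simp <;> omega
      exact ⟨hle, et ▸ ht⟩
    · rintro ⟨hle, hmem⟩
      refine ⟨(s.1 - ω₁, s.2), hmem, ?_⟩
      rw [Prod.mk.injEq]
      constructor <;> simp <;> omega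
  have tr2 : ∀ s : ℕ × ℕ,
      (∃ t ∈ S, ((t.1 : ℤ), (t.2 : ℤ)) = ((s.1 : ℤ), (s.2 : ℤ) - (ω₂ : ℤ)))
      ↔ (ω₂ ≤ s.2 ∧ ((s.1, s.2 - ω₂) : ℕ × ℕ) ∈ S) := by
    intro s
    constructor
    · rintro ⟨t, ht, heq⟩
      rw [Prod.mk.injEq] at heq
      obtain ⟨e1, e2⟩ := heq
      have hle : ω₂ ≤ s.2 := by omega
      have et : t = (s.1, s.2 - ω₂) := by
        apply Prod.ext <;> simp <;> omega
      exact ⟨hle, et ▸ ht⟩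
    · rintro ⟨hle, hmem⟩
      refine ⟨(s.1, s.2 - ω₂), hmem, ?_⟩
      rw [Prod.mk.injEq]
      constructor <;> simp <;> omega
  have tr3 : ∀ s : ℕ × ℕ,
      (∃ t ∈ S, ((t.1 : ℤ), (t.2 : ℤ)) = ((s.1 : ℤ) - (ω₁ : ℤ), (s.2 : ℤ) - (ω₂ : ℤ)))
      ↔ (ω₁ ≤ s.1 ∧ ω₂ ≤ s.2 ∧ ((s.1 - ω₁, s.2 - ω₂) : ℕ × ℕ) ∈ S) := by
    intro s
    constructor
    · rintro ⟨t, ht, heq⟩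
      rw [Prod.mk.injEq] at heq
      obtain ⟨e1, e2⟩ := heq
      have hle1 : ω₁ ≤ s.1 := by omega
      have hle2 : ω₂ ≤ s.2 := by omega
      have et : t = (s.1 - ω₁, s.2 - ω₂) := by
        apply Prod.ext <;> simp <;> omega
      exact ⟨hle1, hle2, et ▸ ht⟩
    · rintro ⟨hle1, hle2, hmem⟩
      refine ⟨(s.1 - ω₁, s.2 - ω₂), hmem, ?_⟩
      rw [Prod.mk.injEq]
      constructor <;> simp <;> omega
  -- identify S₀ and Δ with their ℕ-versions
  have hS₀eq : S₀ = NS₀ ω₁ ω₂ S := by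
    rw [hS₀]
    ext s
    simp only [NS₀, Set.mem_setOf_eq]
    rw [tr1 s, tr2 s]
  have hΔeq : Δ = NΔ ω₁ ω₂ S := by
    rw [hΔ]
    ext s
    simp only [NΔ, Set.mem_setOf_eq]
    rw [tr1 s, tr2 s, tr3 s]
  -- the set of residues
  set R' := res ω₁ ω₂ '' S with hR'
  have hR'fin : R'.Finite := by
    apply ((Set.finite_Iio ω₁).prod (Set.finite_Iio ω₂)).subset
    rintro x ⟨s, hs, rfl⟩
    exact ⟨Nat.mod_lt _ hω₁, Nat.mod_lt _ hω₂⟩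
  set B := hR'fin.toFinset with hB
  have hBmem : ∀ b, b ∈ B ↔ b ∈ R' := fun b => Set.Finite.mem_toFinset _
  -- counting via the partition
  have hfibs : ∀ b ∈ B, (NS₀ ω₁ ω₂ S ∩ res ω₁ ω₂ ⁻¹' {b}).Finite ∧
      (NΔ ω₁ ω₂ S ∩ res ω₁ ω₂ ⁻¹' {b}).Finite ∧
      (NS₀ ω₁ ω₂ S ∩ res ω₁ ω₂ ⁻¹' {b}).ncard =
        (NΔ ω₁ ω₂ S ∩ res ω₁ ω₂ ⁻¹' {b}).ncard + 1 := by
    intro b hb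
    exact fiber_counts ω₁ ω₂ hω₁ hω₂ S hω1S hω2S b ((hBmem b).1 hb)
  have hp₀ := partition_count (res ω₁ ω₂) B (NS₀ ω₁ ω₂ S)
    (fun x hx => (hBmem _).2 ⟨x, hx.1, rfl⟩) (fun b hb => (hfibs b hb).1)
  have hpΔ := partition_count (res ω₁ ω₂) B (NΔ ω₁ ω₂ S)
    (fun x hx => (hBmem _).2 ⟨x, hx.1, rfl⟩) (fun b hb => (hfibs b hb).2.1)
  obtain ⟨hS₀fin, hS₀card⟩ := hp₀
  obtain ⟨hΔfin, hΔcard⟩ := hpΔ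
  have hsum : (NS₀ ω₁ ω₂ S).ncard = (NΔ ω₁ ω₂ S).ncard + B.card := by
    rw [hS₀card, hΔcard]
    rw [Finset.sum_congr rfl (fun b hb => (hfibs b hb).2.2), Finset.sum_add_distrib]
    simp
  -- the value of D
  have hcnt := count_residues ω₁ ω₂ hω₁ hω₂ S hω1S hω2S ZS hZS
  have hBcard : B.card = R'.ncard := (Set.ncard_eq_toFinset_card R' hR'fin).symm
  have hcnt' : R'.ncard * ZS.index = ω₁ * ω₂ := hcnt
  have hDval : ω₁ * ω₂ / ZS.index = B.card := by
    rw [hBcard, ← hcnt']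
    exact Nat.mul_div_cancel _ (Nat.pos_of_ne_zero hidx)
  have hmain : Δ.ncard + ω₁ * ω₂ / ZS.index = S₀.ncard := by
    rw [hΔeq, hS₀eq, hDval, hsum]
  refine ⟨hΔeq ▸ hΔfin, hmain, ?_⟩
  constructor
  · intro he
    rw [← hmain, he]
    simp
  · intro he
    have : Δ.ncard = 0 := by omega
    exact (Set.ncard_eq_zero (hΔeq ▸ hΔfin)).1 this
end

section
/- The set S' = {b_C + λ₁·ω_{n−d+1}e₁ + ⋯ + λ_d·ω_n e_d : C an ∼-equivalence class of S₀, λ₁, …, λ_d ∈ ℕ} contains S and is closed under addition, i.e., S' is an additive submonoid of ℕ^d containing S. (S' is the semigroup defining the Macaulayfication K[S'] of K[S].) -/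
/-- Let `S₀` be as before, `∼` the congruence modulo the subgroup `H`
generated by `ω_{n-d+1}e₁, …, ω_n e_d`, and for each `∼`-equivalence class `C` of `S₀`
let `b_C` be the coordinatewise minimum of `C`. Then the set
`S' = {b_C + λ₁·ω_{n-d+1}e₁ + ⋯ + λ_d·ω_n e_d}` contains `S` and is closed under
addition (so `S'` is an additive submonoid of `ℕ^d` containing `S`). -/
theorem stmt_3 (d n : ℕ) (hd : 1 ≤ d) (hdn : d ≤ n)
    (ω : Fin d → ℕ) (hω : ∀ i, 0 < ω i)
    (a : Fin n → (Fin d → ℕ))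
    (ha : ∀ (i : Fin d) (j : Fin n), (j : ℕ) = n - d + (i : ℕ) →
      a j = fun k => if k = i then ω i else 0)
    (S : AddSubmonoid (Fin d → ℕ))
    (hS : S = AddSubmonoid.closure (Set.range a))
    (S₀ : Set (Fin d → ℕ))
    (hS₀ : S₀ = {s | s ∈ S ∧ ∀ i : Fin d,
      ¬ ∃ t ∈ S, (fun k => (t k : ℤ)) =
        fun k => (s k : ℤ) - (if k = i then (ω i : ℤ) else 0)})
    (H : AddSubgroup (Fin d → ℤ))
    (hH : H = AddSubgroup.closure
      {v | ∃ i : Fin d, v = fun k => if k = i then (ω i : ℤ) else 0})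
    (classes : Set (Set (Fin d → ℕ)))
    (hclasses : classes = {C | ∃ s ∈ S₀,
      C = {t | t ∈ S₀ ∧ (fun k => (t k : ℤ) - (s k : ℤ)) ∈ H}})
    (b : Set (Fin d → ℕ) → (Fin d → ℕ))
    (hb : ∀ C, b C = fun k => sInf ((fun t => t k) '' C))
    (S' : Set (Fin d → ℕ))
    (hS' : S' = {x | ∃ C ∈ classes, ∃ lam : Fin d → ℕ,
      x = b C + fun k => lam k * ω k}) :
    (↑S ⊆ S') ∧ (∀ x ∈ S', ∀ y ∈ S', x + y ∈ S') := by
  classical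
  -- basic facts about `b`
  have hbk : ∀ (C : Set (Fin d → ℕ)) k, b C k = sInf ((fun t => t k) '' C) := by
    intro C k; rw [hb]
  have hble : ∀ (C : Set (Fin d → ℕ)) k t, t ∈ C → b C k ≤ t k := by
    intro C k t ht; rw [hbk]; exact Nat.sInf_le ⟨t, ht, rfl⟩
  have hbmem : ∀ (C : Set (Fin d → ℕ)) k, C.Nonempty → ∃ t ∈ C, t k = b C k := by
    rintro C k ⟨w, hw⟩
    have hne : ((fun t => t k) '' C).Nonempty := ⟨w k, w, hw, rfl⟩
    obtain ⟨t, ht, htk⟩ := Nat.sInf_mem hne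
    exact ⟨t, ht, by rw [hbk]; exact htk⟩
  -- elements of H have all coordinates divisible by ω
  have hHdvd : ∀ v ∈ H, ∀ k, (ω k : ℤ) ∣ v k := by
    intro v hv k
    rw [hH] at hv
    have hle : AddSubgroup.closure
        {v : Fin d → ℤ | ∃ i : Fin d, v = fun k => if k = i then (ω i : ℤ) else 0} ≤
        { carrier := {v : Fin d → ℤ | ∀ k, (ω k : ℤ) ∣ v k}
          zero_mem' := fun k => dvd_zero _
          add_mem' := fun ha hb k => dvd_add (ha k) (hb k)
          neg_mem' := fun ha k => dvd_neg.mpr (ha k) } := by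
      rw [AddSubgroup.closure_le]
      rintro v ⟨i, rfl⟩ j
      by_cases h : j = i
      · subst h; simp
      · simp [h]
    exact hle hv k
  -- coordinatewise multiples of ω lie in H
  have hHmul : ∀ c : Fin d → ℤ, (fun k => c k * ω k) ∈ H := by
    intro c
    rw [hH]
    have h1 : (fun k => c k * ω k)
        = ∑ i : Fin d, c i • (fun k => if k = i then (ω i : ℤ) else 0) := by
      funext k
      rw [Finset.sum_apply]
      simp only [Pi.smul_apply, smul_eq_mul, mul_ite, mul_zero]
      rw [Finset.sum_ite_eq]
      simp
    rw [h1]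
    refine AddSubgroup.sum_mem _ fun i _ => AddSubgroup.zsmul_mem _ ?_ _
    exact AddSubgroup.subset_closure ⟨i, rfl⟩
  have hS₀sub : S₀ ⊆ ↑S := by
    intro s hs; rw [hS₀] at hs; exact hs.1
  -- reduction: every element of S is an element of S₀ plus a combination of the ω e_i
  have hred : ∀ N (s : Fin d → ℕ), s ∈ S → (∑ k, s k) ≤ N →
      ∃ u ∈ S₀, ∃ ρ : Fin d → ℕ, ∀ k, s k = u k + ρ k * ω k := by
    intro N
    induction N using Nat.strong_induction_on with
    | _ N ih =>
      intro s hs hsum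
      by_cases h0 : ∀ i : Fin d, ¬ ∃ t ∈ S, (fun k => (t k : ℤ)) =
          fun k => (s k : ℤ) - (if k = i then (ω i : ℤ) else 0)
      · refine ⟨s, ?_, fun _ => 0, fun k => by simp⟩
        rw [hS₀]
        exact ⟨hs, h0⟩
      · push_neg at h0
        obtain ⟨i, t, ht, heq⟩ := h0
        have hti : (t i : ℤ) = (s i : ℤ) - ω i := by simpa using congrFun heq i
        have htk : ∀ k, k ≠ i → t k = s k := by
          intro k hk
          have h := congrFun heq k
          simp only [if_neg hk, sub_zero] at h
          exact_mod_cast h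
        have hsi : t i + ω i = s i := by
          have h : (t i : ℤ) + ω i = s i := by linarith
          exact_mod_cast h
        have hlt : (∑ k, t k) < ∑ k, s k := by
          apply Finset.sum_lt_sum
          · intro k _
            by_cases hk : k = i
            · subst hk; omega
            · rw [htk k hk]
          · exact ⟨i, Finset.mem_univ i, by have := hω i; omega⟩
        obtain ⟨u, hu, ρ, hρ⟩ := ih (∑ k, t k) (by omega) t ht le_rfl
        refine ⟨u, hu, (fun k => ρ k + if k = i then 1 else 0), ?_⟩
        intro k
        by_cases hk : k = i
        · subst hk
          show s k = u k + (ρ k + if k = k then 1 else 0) * ω k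
          have hone : (ρ k + if k = k then 1 else 0) = ρ k + 1 := by simp
          rw [hone, ← hsi, hρ k]
          ring
        · show s k = u k + (ρ k + if k = i then 1 else 0) * ω k
          rw [if_neg hk, add_zero, ← htk k hk]
          exact hρ k
  -- membership of classes
  have hclassMem : ∀ s ∈ S₀,
      {t | t ∈ S₀ ∧ (fun k => (t k : ℤ) - (s k : ℤ)) ∈ H} ∈ classes := by
    intro s hs; rw [hclasses]; exact ⟨s, hs, rfl⟩
  have hselfMem : ∀ s ∈ S₀, s ∈ {t | t ∈ S₀ ∧ (fun k => (t k : ℤ) - (s k : ℤ)) ∈ H} := by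
    intro s hs
    refine ⟨hs, ?_⟩
    have h : (fun k => (s k : ℤ) - (s k : ℤ)) = (0 : Fin d → ℤ) := by
      funext k; exact sub_self _
    rw [h]; exact H.zero_mem
  constructor
  · -- S ⊆ S'
    intro x hx
    obtain ⟨u, huS₀, ρ, hρ⟩ := hred (∑ k, x k) x hx le_rfl
    set C : Set (Fin d → ℕ) := {t | t ∈ S₀ ∧ (fun k => (t k : ℤ) - (u k : ℤ)) ∈ H} with hC
    have hCmem : C ∈ classes := hclassMem u huS₀
    have huC : u ∈ C := hselfMem u huS₀
    have key : ∀ k, ∃ m : ℕ, x k = b C k + m * ω k := by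
      intro k
      obtain ⟨w, hwC, hwk⟩ := hbmem C k ⟨u, huC⟩
      have hd1 : (ω k : ℤ) ∣ (w k : ℤ) - u k := hHdvd _ hwC.2 k
      have hle1 : b C k ≤ u k := hble C k u huC
      have hdvdnat : ω k ∣ u k - b C k := by
        have h : (ω k : ℤ) ∣ ((u k - b C k : ℕ) : ℤ) := by
          rw [Nat.cast_sub hle1, ← hwk, ← neg_sub]
          exact dvd_neg.mpr hd1
        exact_mod_cast h
      refine ⟨ρ k + (u k - b C k) / ω k, ?_⟩
      rw [add_mul, Nat.div_mul_cancel hdvdnat]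
      have h := hρ k
      generalize ρ k * ω k = M at h ⊢
      omega
    rw [hS']
    refine ⟨C, hCmem, fun k => (key k).choose, ?_⟩
    funext k
    have h := (key k).choose_spec
    simpa using h
  · -- closed under addition
    intro x hx y hy
    rw [hS'] at hx hy ⊢
    obtain ⟨C, hC, lam, rfl⟩ := hx
    obtain ⟨D, hD, mu, rfl⟩ := hy
    rw [hclasses] at hC hD
    obtain ⟨s, hsS₀, rfl⟩ := hC
    obtain ⟨t, htS₀, rfl⟩ := hD
    set C : Set (Fin d → ℕ) := {w | w ∈ S₀ ∧ (fun k => (w k : ℤ) - (s k : ℤ)) ∈ H} with hCdef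
    set D : Set (Fin d → ℕ) := {w | w ∈ S₀ ∧ (fun k => (w k : ℤ) - (t k : ℤ)) ∈ H} with hDdef
    have hsC : s ∈ C := hselfMem s hsS₀
    have htD : t ∈ D := hselfMem t htS₀
    have hst : s + t ∈ S := S.add_mem (hS₀sub hsS₀) (hS₀sub htS₀)
    obtain ⟨u, huS₀, ρ, hρ⟩ := hred (∑ k, (s + t) k) (s + t) hst le_rfl
    set E : Set (Fin d → ℕ) := {w | w ∈ S₀ ∧ (fun k => (w k : ℤ) - (u k : ℤ)) ∈ H} with hEdef
    have hEmem : E ∈ classes := hclassMem u huS₀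
    have huE : u ∈ E := hselfMem u huS₀
    have key : ∀ k, ∃ m : ℕ, b C k + b D k = b E k + m * ω k := by
      intro k
      obtain ⟨s', hs'C, hs'k⟩ := hbmem C k ⟨s, hsC⟩
      obtain ⟨t', ht'D, ht'k⟩ := hbmem D k ⟨t, htD⟩
      have hs't' : s' + t' ∈ S := S.add_mem (hS₀sub hs'C.1) (hS₀sub ht'D.1)
      obtain ⟨u', hu'S₀, ρ', hρ'⟩ := hred (∑ j, (s' + t') j) (s' + t') hs't' le_rfl
      have e1 : ∀ j, (s j : ℤ) + t j = u j + ρ j * ω j := by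
        intro j; exact_mod_cast (hρ j : s j + t j = u j + ρ j * ω j)
      have e2 : ∀ j, (s' j : ℤ) + t' j = u' j + ρ' j * ω j := by
        intro j; exact_mod_cast (hρ' j : s' j + t' j = u' j + ρ' j * ω j)
      have hu'E : u' ∈ E := by
        refine ⟨hu'S₀, ?_⟩
        have hveq : (fun j => (u' j : ℤ) - (u j : ℤ))
            = (fun j => (s' j : ℤ) - (s j : ℤ))
              + ((fun j => (t' j : ℤ) - (t j : ℤ))
                + fun j => ((ρ j : ℤ) - (ρ' j : ℤ)) * ω j) := by
          funext j
          simp only [Pi.add_apply]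
          linear_combination e1 j - e2 j
        rw [hveq]
        exact H.add_mem hs'C.2 (H.add_mem ht'D.2 (hHmul _))
      have h3 : u' k ≤ b C k + b D k := by
        have h := hρ' k
        have h' : s' k + t' k = u' k + ρ' k * ω k := h
        rw [hs'k, ht'k] at h'
        rw [h']
        exact Nat.le_add_right _ _
      have hle1 : b E k ≤ b C k + b D k := (hble E k u' hu'E).trans h3
      obtain ⟨w, hwE, hwk⟩ := hbmem E k ⟨u, huE⟩
      have d1 : (ω k : ℤ) ∣ (w k : ℤ) - u k := hHdvd _ hwE.2 k
      have d2 : (ω k : ℤ) ∣ (u' k : ℤ) - u k := hHdvd _ hu'E.2 k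
      have hdvdnat : ω k ∣ b C k + b D k - b E k := by
        have c1 : ((b C k : ℕ) : ℤ) = (s' k : ℤ) := by exact_mod_cast hs'k.symm
        have c2 : ((b D k : ℕ) : ℤ) = (t' k : ℤ) := by exact_mod_cast ht'k.symm
        have c3 : ((b E k : ℕ) : ℤ) = (w k : ℤ) := by exact_mod_cast hwk.symm
        have h : (ω k : ℤ) ∣ ((b C k + b D k - b E k : ℕ) : ℤ) := by
          rw [Nat.cast_sub hle1]
          push_cast
          rw [c1, c2, c3]
          have heq : (s' k : ℤ) + t' k - w k
              = ((u' k : ℤ) - u k) - ((w k : ℤ) - u k) + (ρ' k : ℤ) * ω k := by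
            linear_combination e2 k
          rw [heq]
          exact dvd_add (dvd_sub d2 d1) (dvd_mul_left _ _)
        exact_mod_cast h
      refine ⟨(b C k + b D k - b E k) / ω k, ?_⟩
      rw [Nat.div_mul_cancel hdvdnat]
      omega
    refine ⟨E, hEmem, fun k => lam k + mu k + (key k).choose, ?_⟩
    funext k
    have h := (key k).choose_spec
    simp only [Pi.add_apply]
    generalize hM : (key k).choose = M at h
    rw [add_mul, add_mul]
    generalize lam k * ω k = A
    generalize mu k * ω k = B
    generalize M * ω k = Q at h ⊢
    omega
end

section
/- With S' = {b_C + λ₁·ω_{n−d+1}e₁ + ⋯ + λ_d·ω_n e_d : C an ∼-equivalence class of S₀, λ₁, …, λ_d ∈ ℕ} and B = {b_C : C an ∼-equivalence class of S₀}, one has B = {b ∈ S' : b − ω_{n−d+i}e_i ∉ S' for all i = 1, …, d}, and B has exactly D = (ω_{n−d+1}⋯ω_n)/[ℤ^d : ℤS] elements. (By the Cohen–Macaulayness criterion this says K[S'] is Cohen–Macaulay.) -/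
private lemma dvd_sub_trans' {a x y z : ℤ} (h1 : a ∣ x - y) (h2 : a ∣ y - z) : a ∣ x - z := by
  have := dvd_add h1 h2
  rwa [sub_add_sub_cancel] at this

private lemma dvd_sub_symm' {a x y : ℤ} (h : a ∣ x - y) : a ∣ y - x := by
  rw [← neg_sub]; exact h.neg_right

private lemma H_eq_pi (d : ℕ) (ω : Fin d → ℕ) :
    AddSubgroup.closure
        {v : Fin d → ℤ | ∃ i : Fin d, v = fun k => if k = i then (ω i : ℤ) else 0}
      = AddSubgroup.pi Set.univ (fun k => AddSubgroup.zmultiples (ω k : ℤ)) := by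
  apply le_antisymm
  · rw [AddSubgroup.closure_le]
    rintro v ⟨i, rfl⟩
    rw [SetLike.mem_coe, AddSubgroup.mem_pi]
    intro k _
    rw [Int.mem_zmultiples_iff]
    by_cases h : k = i
    · subst h
      simp
    · simp only [if_neg h, dvd_zero]
  · intro v hv
    rw [AddSubgroup.mem_pi] at hv
    have hvk : ∀ k, (ω k : ℤ) ∣ v k := fun k =>
      Int.mem_zmultiples_iff.mp (hv k (Set.mem_univ k))
    have hv' : v = ∑ k : Fin d, (v k / (ω k : ℤ)) •
        (fun j => if j = k then (ω k : ℤ) else 0 : Fin d → ℤ) := by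
      funext j
      rw [Finset.sum_apply]
      rw [Finset.sum_eq_single j]
      · simp [Int.ediv_mul_cancel (hvk j)]
      · intro k _ hk
        simp [Ne.symm hk]
      · simp
    rw [hv']
    refine AddSubgroup.sum_mem _ fun k _ =>
      AddSubgroup.zsmul_mem _ (AddSubgroup.subset_closure ?_) _
    exact ⟨k, rfl⟩

private lemma memH_iff (d : ℕ) (ω : Fin d → ℕ) (v : Fin d → ℤ) :
    v ∈ AddSubgroup.closure
        {v : Fin d → ℤ | ∃ i : Fin d, v = fun k => if k = i then (ω i : ℤ) else 0}
      ↔ ∀ k, (ω k : ℤ) ∣ v k := by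
  rw [H_eq_pi, AddSubgroup.mem_pi]
  constructor
  · intro h k
    exact Int.mem_zmultiples_iff.mp (h k (Set.mem_univ k))
  · intro h k _
    exact Int.mem_zmultiples_iff.mpr (h k)

/-- With `S'` the Macaulayfication semigroup and
`B = {b_C : C a ∼-class of S₀}`, one has
`B = {b ∈ S' : b - ω_{n-d+i}e_i ∉ S' for all i}` and
`#B = D = (ω_{n-d+1}⋯ω_n)/[ℤ^d : ℤS]` (the Cohen–Macaulayness criterion for `K[S']`). -/
theorem stmt_4 (d n : ℕ) (hd : 1 ≤ d) (hdn : d ≤ n)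
    (ω : Fin d → ℕ) (hω : ∀ i, 0 < ω i)
    (a : Fin n → (Fin d → ℕ))
    (ha : ∀ (i : Fin d) (j : Fin n), (j : ℕ) = n - d + (i : ℕ) →
      a j = fun k => if k = i then ω i else 0)
    (S : AddSubmonoid (Fin d → ℕ))
    (hS : S = AddSubmonoid.closure (Set.range a))
    (ZS : AddSubgroup (Fin d → ℤ))
    (hZS : ZS = AddSubgroup.closure {v | ∃ s ∈ S, v = fun k => (s k : ℤ)})
    (hidx : ZS.index ≠ 0)
    (S₀ : Set (Fin d → ℕ))
    (hS₀ : S₀ = {s | s ∈ S ∧ ∀ i : Fin d,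
      ¬ ∃ t ∈ S, (fun k => (t k : ℤ)) =
        fun k => (s k : ℤ) - (if k = i then (ω i : ℤ) else 0)})
    (H : AddSubgroup (Fin d → ℤ))
    (hH : H = AddSubgroup.closure
      {v | ∃ i : Fin d, v = fun k => if k = i then (ω i : ℤ) else 0})
    (classes : Set (Set (Fin d → ℕ)))
    (hclasses : classes = {C | ∃ s ∈ S₀,
      C = {t | t ∈ S₀ ∧ (fun k => (t k : ℤ) - (s k : ℤ)) ∈ H}})
    (b : Set (Fin d → ℕ) → (Fin d → ℕ))
    (hb : ∀ C, b C = fun k => sInf ((fun t => t k) '' C))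
    (S' : Set (Fin d → ℕ))
    (hS' : S' = {x | ∃ C ∈ classes, ∃ lam : Fin d → ℕ,
      x = b C + fun k => lam k * ω k}) :
    b '' classes = {x | x ∈ S' ∧ ∀ i : Fin d,
      ¬ ∃ t ∈ S', (fun k => (t k : ℤ)) =
        fun k => (x k : ℤ) - (if k = i then (ω i : ℤ) else 0)} ∧
    (b '' classes).ncard = (∏ i, ω i) / ZS.index := by
  classical
  -- membership in H is coordinatewise divisibility
  have hmemH : ∀ v : Fin d → ℤ, v ∈ H ↔ ∀ k, (ω k : ℤ) ∣ v k := by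
    intro v; rw [hH]; exact memH_iff d ω v
  -- the generators ω_i e_i belong to S
  have hωS : ∀ i : Fin d, (fun k => if k = i then ω i else 0 : Fin d → ℕ) ∈ S := by
    intro i
    have hlt : n - d + (i : ℕ) < n := by omega
    have := ha i ⟨n - d + (i : ℕ), hlt⟩ rfl
    rw [hS]
    exact this ▸ AddSubmonoid.subset_closure (Set.mem_range_self _)
  have hSZS : ∀ s ∈ S, (fun k => (s k : ℤ)) ∈ ZS := by
    intro s hs
    rw [hZS]
    exact AddSubgroup.subset_closure ⟨s, hs, rfl⟩
  have hHle : H ≤ ZS := by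
    rw [hH, AddSubgroup.closure_le]
    rintro v ⟨i, rfl⟩
    have := hSZS _ (hωS i)
    have heq : (fun k => (((if k = i then ω i else 0 : ℕ)) : ℤ))
        = (fun k => if k = i then (ω i : ℤ) else 0) := by
      funext k; split <;> simp
    rw [heq] at this
    exact this
  have hS₀S : S₀ ⊆ (S : Set (Fin d → ℕ)) := by
    rw [hS₀]; exact fun s hs => hs.1
  -- every class has a representative
  have hrep : ∀ C ∈ classes, ∃ s, s ∈ C ∧ s ∈ S₀ ∧
      C = {t | t ∈ S₀ ∧ (fun k => (t k : ℤ) - (s k : ℤ)) ∈ H} := by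
    intro C hC
    rw [hclasses] at hC
    obtain ⟨s, hs, rfl⟩ := hC
    refine ⟨s, ⟨hs, ?_⟩, hs, rfl⟩
    rw [hmemH]; intro k; simp
  -- the min in each coordinate is attained
  have hbmem : ∀ C ∈ classes, ∀ k : Fin d, ∃ t ∈ C, b C k = t k := by
    intro C hC k
    obtain ⟨s, hsC, -, -⟩ := hrep C hC
    have hne : ((fun t => t k) '' C).Nonempty := ⟨s k, s, hsC, rfl⟩
    have hbk : b C k = sInf ((fun t => t k) '' C) := by rw [hb]
    have := Nat.sInf_mem hne
    rw [← hbk] at this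
    obtain ⟨t, htC, ht⟩ := this
    exact ⟨t, htC, ht.symm⟩
  -- any two elements of a class are congruent
  have hCcong : ∀ C ∈ classes, ∀ s ∈ C, ∀ t ∈ C, ∀ k, (ω k : ℤ) ∣ (s k : ℤ) - t k := by
    intro C hC s hs t ht k
    obtain ⟨s₀, -, -, hCeq⟩ := hrep C hC
    rw [hCeq] at hs ht
    have h1 := (hmemH _).1 hs.2 k
    have h2 := (hmemH _).1 ht.2 k
    exact dvd_sub_trans' h1 (dvd_sub_symm' h2)
  -- b C is congruent to every element of C
  have hbcong : ∀ C ∈ classes, ∀ s ∈ C, ∀ k, (ω k : ℤ) ∣ (s k : ℤ) - b C k := by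
    intro C hC s hs k
    obtain ⟨t, htC, ht⟩ := hbmem C hC k
    rw [ht]
    exact hCcong C hC s hs t htC k
  -- congruent classes are equal
  have hclass_eq : ∀ C ∈ classes, ∀ C' ∈ classes,
      (∀ k, (ω k : ℤ) ∣ (b C k : ℤ) - b C' k) → C = C' := by
    intro C hC C' hC' hcong
    obtain ⟨s, hsC, -, hCeq⟩ := hrep C hC
    obtain ⟨s', hs'C', -, hC'eq⟩ := hrep C' hC'
    have hss' : ∀ k, (ω k : ℤ) ∣ (s k : ℤ) - s' k := by
      intro k
      have h1 := hbcong C hC s hsC k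
      have h2 := hbcong C' hC' s' hs'C' k
      exact dvd_sub_trans' (dvd_sub_trans' h1 (hcong k)) (dvd_sub_symm' h2)
    rw [hCeq, hC'eq]
    ext t
    simp only [Set.mem_setOf_eq, hmemH]
    constructor
    · rintro ⟨ht, hcg⟩
      exact ⟨ht, fun k => dvd_sub_trans' (hcg k) (hss' k)⟩
    · rintro ⟨ht, hcg⟩
      exact ⟨ht, fun k => dvd_sub_trans' (hcg k) (dvd_sub_symm' (hss' k))⟩
  -- Part 1 : the set equality
  have part1 : b '' classes = {x | x ∈ S' ∧ ∀ i : Fin d,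
      ¬ ∃ t ∈ S', (fun k => (t k : ℤ)) =
        fun k => (x k : ℤ) - (if k = i then (ω i : ℤ) else 0)} := by
    ext x
    constructor
    · rintro ⟨C, hC, rfl⟩
      refine ⟨?_, ?_⟩
      · rw [hS']
        exact ⟨C, hC, fun _ => 0, by funext k; simp⟩
      · rintro i ⟨t, htS', hteq⟩
        rw [hS'] at htS'
        obtain ⟨C', hC', lam, rfl⟩ := htS'
        have hCC' : C = C' := by
          apply hclass_eq C hC C' hC'
          intro k
          have h := congrFun hteq k
          simp only [Pi.add_apply] at h
          by_cases hk : k = i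
          · subst hk
            rw [if_pos rfl] at h
            refine ⟨(lam k : ℤ) + 1, ?_⟩
            push_cast at h ⊢
            linarith
          · rw [if_neg hk] at h
            refine ⟨(lam k : ℤ), ?_⟩
            push_cast at h ⊢
            linarith
        subst hCC'
        have h := congrFun hteq i
        simp only [Pi.add_apply, if_pos rfl] at h
        have hωi := hω i
        push_cast at h
        nlinarith [h, hωi]
    · rintro ⟨hxS', hnot⟩
      rw [hS'] at hxS'
      obtain ⟨C, hC, lam, rfl⟩ := hxS'
      have hlam : ∀ i, lam i = 0 := by
        intro i
        by_contra hli
        apply hnot i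
        refine ⟨b C + fun k => (Function.update lam i (lam i - 1)) k * ω k,
          by rw [hS']; exact ⟨C, hC, _, rfl⟩, ?_⟩
        funext k
        simp only [Pi.add_apply]
        by_cases hk : k = i
        · subst hk
          rw [Function.update_self, if_pos rfl]
          have h1 : 1 ≤ lam k := Nat.one_le_iff_ne_zero.2 hli
          push_cast [Nat.sub_mul, Nat.one_mul]
          have : ω k ≤ lam k * ω k := Nat.le_mul_of_pos_left _ (Nat.pos_of_ne_zero hli)
          push_cast [Nat.cast_sub this]
          ring
        · rw [Function.update_of_ne hk, if_neg hk]
          push_cast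
          ring
      have hx : (b C + fun k => lam k * ω k) = b C := by
        funext k; simp [hlam k]
      rw [hx]
      exact ⟨C, hC, rfl⟩
  refine ⟨part1, ?_⟩
  -- Part 2 : counting
  -- reduction from S to S₀
  have hred : ∀ m : ℕ, ∀ s ∈ S, (∑ k, s k) = m →
      ∃ u ∈ S₀, ∀ k, (ω k : ℤ) ∣ (s k : ℤ) - u k := by
    intro m
    induction m using Nat.strong_induction_on with
    | _ m ih =>
      intro s hs hsum
      by_cases hs0 : s ∈ S₀
      · exact ⟨s, hs0, fun k => by simp⟩
      · rw [hS₀] at hs0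
        simp only [Set.mem_setOf_eq, not_and, not_forall, not_not] at hs0
        obtain ⟨i, t, htS, hteq⟩ := hs0 hs
        have hcoord : ∀ k, s k = t k + (if k = i then ω i else 0) := by
          intro k
          have h := congrFun hteq k
          by_cases hk : k = i
          · subst hk
            rw [if_pos rfl] at h ⊢
            omega
          · rw [if_neg hk] at h ⊢
            omega
        have hsumst : ∑ k, s k = (∑ k, t k) + ω i := by
          rw [Finset.sum_congr rfl fun k _ => hcoord k, Finset.sum_add_distrib,
            Finset.sum_ite_eq' Finset.univ i fun _ => ω i]
          simp
        have hlt : ∑ k, t k < m := by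
          have := hω i
          omega
        obtain ⟨u, hu, hdvd⟩ := ih _ hlt t htS rfl
        refine ⟨u, hu, fun k => ?_⟩
        have h1 : (ω k : ℤ) ∣ (s k : ℤ) - t k := by
          rw [hcoord k]
          by_cases hk : k = i
          · subst hk; simp
          · simp [hk]
        exact dvd_sub_trans' h1 (hdvd k)
  -- reduction from ZS to S
  have hNpos : 0 < ∏ i, ω i := Finset.prod_pos fun i _ => hω i
  have hNdvd : ∀ k : Fin d, (ω k : ℤ) ∣ ((∏ i, ω i : ℕ) : ℤ) := by
    intro k
    exact_mod_cast Int.natCast_dvd_natCast.2 (Finset.dvd_prod_of_mem ω (Finset.mem_univ k))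
  have hZred : ∀ z ∈ ZS, ∃ s ∈ S, ∀ k, (ω k : ℤ) ∣ z k - s k := by
    intro z hz
    rw [hZS] at hz
    induction hz using AddSubgroup.closure_induction with
    | mem v hv =>
      obtain ⟨s, hs, rfl⟩ := hv
      exact ⟨s, hs, fun k => by simp⟩
    | zero => exact ⟨0, zero_mem S, fun k => by simp⟩
    | add x y hx hy ihx ihy =>
      obtain ⟨s, hs, hds⟩ := ihx
      obtain ⟨t, ht, hdt⟩ := ihy
      refine ⟨s + t, add_mem hs ht, fun k => ?_⟩
      have := dvd_add (hds k) (hdt k)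
      have heq : (x + y) k - ((s + t) k : ℤ) = (x k - s k) + (y k - t k) := by
        simp only [Pi.add_apply]; push_cast; ring
      rwa [← heq] at this
    | neg x hx ihx =>
      obtain ⟨s, hs, hds⟩ := ihx
      refine ⟨(∏ i, ω i - 1) • s, AddSubmonoid.nsmul_mem S hs _, fun k => ?_⟩
      have h1 : (ω k : ℤ) ∣ -(x k - s k) := (hds k).neg_right
      have h2 : (ω k : ℤ) ∣ ((∏ i, ω i : ℕ) : ℤ) * s k := (hNdvd k).mul_right _
      have := dvd_sub h1 h2
      have heq : (-x) k - (((∏ i, ω i - 1) • s : Fin d → ℕ) k : ℤ)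
          = -(x k - s k) - ((∏ i, ω i : ℕ) : ℤ) * s k := by
        simp only [Pi.neg_apply, Pi.smul_apply, smul_eq_mul]
        push_cast [Nat.sub_mul, Nat.one_mul,
          Nat.cast_sub (Nat.le_mul_of_pos_left (s k) hNpos)]
        ring
      rwa [← heq] at this
  have hZred0 : ∀ z ∈ ZS, ∃ u ∈ S₀, ∀ k, (ω k : ℤ) ∣ z k - u k := by
    intro z hz
    obtain ⟨s, hs, hds⟩ := hZred z hz
    obtain ⟨u, hu, hdu⟩ := hred (∑ k, s k) s hs rfl
    exact ⟨u, hu, fun k => dvd_sub_trans' (hds k) (hdu k)⟩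
  -- the quotient map
  set φ : ZS →+ (Fin d → ℤ) ⧸ H := (QuotientAddGroup.mk' H).comp ZS.subtype with hφ
  set g : (Fin d → ℕ) → (Fin d → ℤ) ⧸ H :=
    fun x => QuotientAddGroup.mk' H (fun k => (x k : ℤ)) with hg
  have hbZS : ∀ C ∈ classes, (fun k => (b C k : ℤ)) ∈ ZS := by
    intro C hC
    obtain ⟨s, hsC, hs₀, -⟩ := hrep C hC
    have h1 : (fun k => (s k : ℤ)) ∈ ZS := hSZS s (hS₀S hs₀)
    have h2 : (fun k => (s k : ℤ) - b C k) ∈ H := by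
      rw [hmemH]; exact fun k => hbcong C hC s hsC k
    have heq : (fun k => (b C k : ℤ))
        = (fun k => (s k : ℤ)) - (fun k => (s k : ℤ) - b C k) := by
      funext k; simp
    rw [heq]
    exact sub_mem h1 (hHle h2)
  -- g is injective on B
  have hinj : Set.InjOn g (b '' classes) := by
    rintro x ⟨C, hC, rfl⟩ y ⟨C', hC', rfl⟩ hxy
    have : (fun k => (b C k : ℤ)) - (fun k => (b C' k : ℤ)) ∈ H := by
      simp only [hg, QuotientAddGroup.mk'_apply] at hxy
      exact (QuotientAddGroup.eq_iff_sub_mem).mp hxy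
    rw [hmemH] at this
    have := hclass_eq C hC C' hC' fun k => by simpa using this k
    rw [this]
  -- image of B under g is the range of φ
  have himg : g '' (b '' classes) = (φ.range : Set ((Fin d → ℤ) ⧸ H)) := by
    ext q
    constructor
    · rintro ⟨x, ⟨C, hC, rfl⟩, rfl⟩
      exact ⟨⟨_, hbZS C hC⟩, rfl⟩
    · rintro ⟨⟨z, hz⟩, rfl⟩
      obtain ⟨u, hu, hdu⟩ := hZred0 z hz
      have hCu : {t | t ∈ S₀ ∧ (fun k => (t k : ℤ) - (u k : ℤ)) ∈ H} ∈ classes := by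
        rw [hclasses]; exact ⟨u, hu, rfl⟩
      set C := {t | t ∈ S₀ ∧ (fun k => (t k : ℤ) - (u k : ℤ)) ∈ H} with hCdef
      have huC : u ∈ C := by
        refine ⟨hu, ?_⟩
        rw [hmemH]; intro k; simp
      refine ⟨b C, ⟨C, hCu, rfl⟩, ?_⟩
      simp only [hg, hφ, AddMonoidHom.comp_apply, AddSubgroup.coe_subtype]
      rw [QuotientAddGroup.mk'_apply, QuotientAddGroup.mk'_apply,
        QuotientAddGroup.eq_iff_sub_mem, hmemH]
      intro k
      have h1 := hbcong C hCu u huC k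
      have h2 := hdu k
      simpa using dvd_sub_symm' (dvd_sub_trans' h2 h1)
  -- cardinality computation
  have hker : φ.ker = H.addSubgroupOf ZS := by
    ext ⟨z, hz⟩
    simp only [AddMonoidHom.mem_ker, hφ, AddMonoidHom.comp_apply, AddSubgroup.coe_subtype,
      QuotientAddGroup.mk'_apply, QuotientAddGroup.eq_zero_iff, AddSubgroup.mem_addSubgroupOf]
  have hcard1 : (b '' classes).ncard = Nat.card φ.range := by
    rw [← Set.ncard_image_of_injOn hinj, himg]
    rw [← Nat.card_coe_set_eq]
    rfl
  have hcard2 : Nat.card φ.range = H.relIndex ZS := by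
    rw [← Nat.card_congr (QuotientAddGroup.quotientKerEquivRange φ).toEquiv, hker]
    rfl
  have hHidx : H.index = ∏ i, ω i := by
    rw [hH, H_eq_pi, AddSubgroup.index_pi]
    congr 1
    funext i
    rw [Int.index_zmultiples, Int.natAbs_natCast]
  have hmul : H.relIndex ZS * ZS.index = ∏ i, ω i := by
    rw [AddSubgroup.relIndex_mul_index hHle, hHidx]
  rw [hcard1, hcard2, ← hmul, Nat.mul_div_cancel _ (Nat.pos_of_ne_zero hidx)]
end

section
/- Let K be a field, let d ≥ 2, and let M ⊆ K[y_1, …, y_d] be an ideal generated by monomials. If for every i ∈ {1, …, d} there exists a monomial y^α ∈ M with y_i ∤ y^α (i.e., α_i = 0), then the Krull dimension of the quotient ring K[y_1, …, y_d]/M is at most d − 2. -/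
open MvPolynomial

section Aux

variable {K : Type*} [Field K]

/-- Monomials with exponents `≤ B` span the polynomials of total degree `≤ B`. -/
private lemma stmt5_span_monomials {m B : ℕ} (g : MvPolynomial (Fin m) K)
    (hg : g.totalDegree ≤ B) :
    g ∈ Submodule.span K (Set.range fun γ : Fin m → Fin (B + 1) =>
      (monomial (Finsupp.equivFunOnFinite.symm fun i => (γ i : ℕ)) (1 : K))) := by
  rw [as_sum g]
  refine Submodule.sum_mem _ fun α hα => ?_
  have hbound : ∀ i, α i ≤ B := by
    intro i
    refine le_trans ?_ (le_trans (le_totalDegree hα) hg)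
    by_cases h : i ∈ α.support
    · exact Finset.single_le_sum (f := fun j => α j) (fun _ _ => Nat.zero_le _) h
    · simp [Finsupp.notMem_support_iff.mp h]
  have h1 : (monomial α) (coeff α g) = (coeff α g) • (monomial α (1 : K)) := by
    rw [smul_monomial, smul_eq_mul, mul_one]
  rw [h1]
  refine Submodule.smul_mem _ _ (Submodule.subset_span ?_)
  refine ⟨fun i => ⟨α i, Nat.lt_succ_of_le (hbound i)⟩, ?_⟩
  show (monomial (Finsupp.equivFunOnFinite.symm fun i : Fin m =>
      ((⟨α i, Nat.lt_succ_of_le (hbound i)⟩ : Fin (B + 1)) : ℕ))) (1 : K) = (monomial α) 1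
  have h2 : (Finsupp.equivFunOnFinite.symm fun i : Fin m =>
      ((⟨α i, Nat.lt_succ_of_le (hbound i)⟩ : Fin (B + 1)) : ℕ)) = α := by
    ext i; simp
  rw [h2]

private lemma stmt5_arith_contra (m D : ℕ) :
    ∃ N B : ℕ, (m + 1) * (N * D) ≤ B ∧ (B + 1) ^ m < (N + 1) ^ (m + 1) := by
  refine ⟨((m + 1) * D + 2) ^ (m + 1), ((m + 1) * D + 2) ^ (m + 1) * ((m + 1) * D + 1), ?_, ?_⟩
  · calc (m + 1) * (((m + 1) * D + 2) ^ (m + 1) * D)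
        = ((m + 1) * D + 2) ^ (m + 1) * ((m + 1) * D) := by ring
      _ ≤ ((m + 1) * D + 2) ^ (m + 1) * ((m + 1) * D + 1) := by
          exact Nat.mul_le_mul_left _ (Nat.le_succ _)
  · have h2 : (2 : ℕ) ≤ (m + 1) * D + 2 := by omega
    have hN1 : (1 : ℕ) ≤ ((m + 1) * D + 2) ^ (m + 1) := Nat.one_le_iff_ne_zero.mpr (by positivity)
    calc (((m + 1) * D + 2) ^ (m + 1) * ((m + 1) * D + 1) + 1) ^ m
        ≤ (((m + 1) * D + 2) ^ (m + 1) * ((m + 1) * D + 2)) ^ m := by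
          refine Nat.pow_le_pow_left ?_ m
          nlinarith [hN1]
      _ = ((m + 1) * D + 2) ^ ((m + 1) * m + m) := by rw [mul_pow, ← pow_mul, ← pow_add]
      _ < ((m + 1) * D + 2) ^ ((m + 1) * (m + 1)) := by
          refine Nat.pow_lt_pow_right (by omega) (by nlinarith)
      _ = (((m + 1) * D + 2) ^ (m + 1)) ^ (m + 1) := by rw [← pow_mul]
      _ ≤ (((m + 1) * D + 2) ^ (m + 1) + 1) ^ (m + 1) := Nat.pow_le_pow_left (Nat.le_succ _) _

/-- There are no `m + 1` algebraically independent polynomials in `m` variables. -/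
private lemma stmt5_no_algIndep {m : ℕ} (f : Fin (m + 1) → MvPolynomial (Fin m) K) :
    ¬ AlgebraicIndependent K f := by
  intro hf
  obtain ⟨N, B, hNB, harith⟩ := stmt5_arith_contra m
    ((Finset.univ.sup fun i => (f i).totalDegree) + 1)
  have hfD : ∀ i, (f i).totalDegree ≤ (Finset.univ.sup fun i => (f i).totalDegree) + 1 :=
    fun i => Nat.le_succ_of_le (Finset.le_sup (f := fun i => (f i).totalDegree)
      (Finset.mem_univ i))
  set D : ℕ := (Finset.univ.sup fun i => (f i).totalDegree) + 1 with hD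
  have e_inj : Function.Injective (fun β : Fin (m + 1) → Fin (N + 1) =>
      Finsupp.equivFunOnFinite.symm fun i => (β i : ℕ)) := by
    intro β₁ β₂ h
    funext i
    have := congrArg (fun s : Fin (m + 1) →₀ ℕ => s i) h
    simpa [Fin.val_injective.eq_iff] using this
  have hli : LinearIndependent K (fun β : Fin (m + 1) → Fin (N + 1) =>
      aeval f (monomial (Finsupp.equivFunOnFinite.symm fun i => (β i : ℕ)) (1 : K))) := by
    have h1 : LinearIndependent K fun s : Fin (m + 1) →₀ ℕ =>
        (monomial s (1 : K) : MvPolynomial (Fin (m + 1)) K) := by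
      have := (basisMonomials (Fin (m + 1)) K).linearIndependent
      rwa [coe_basisMonomials] at this
    have h3 := (h1.comp _ e_inj).map' (aeval f).toLinearMap (LinearMap.ker_eq_bot.mpr hf)
    simpa [Function.comp_def] using h3
  have hdeg : ∀ β : Fin (m + 1) → Fin (N + 1),
      (aeval f (monomial (Finsupp.equivFunOnFinite.symm fun i => (β i : ℕ))
        (1 : K))).totalDegree ≤ B := by
    intro β
    have h0 : aeval f (monomial (Finsupp.equivFunOnFinite.symm fun i => (β i : ℕ)) (1 : K))
        = ∏ i : Fin (m + 1), f i ^ (β i : ℕ) := by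
      rw [aeval_monomial, map_one, one_mul, Finsupp.prod_pow]
      simp
    rw [h0]
    refine le_trans (totalDegree_finset_prod _ _) ?_
    have hterm : ∀ i ∈ (Finset.univ : Finset (Fin (m + 1))),
        (f i ^ (β i : ℕ)).totalDegree ≤ N * D := by
      intro i _
      refine le_trans (totalDegree_pow _ _) ?_
      exact Nat.mul_le_mul (Nat.lt_succ_iff.mp (β i).isLt) (hfD i)
    refine le_trans (Finset.sum_le_sum hterm) ?_
    refine le_trans (Finset.sum_le_card_nsmul _ _ _ (fun i hi => le_refl (N * D))) ?_
    simp only [smul_eq_mul, Finset.card_univ, Fintype.card_fin]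
    exact hNB
  have hspan : Set.range (fun β : Fin (m + 1) → Fin (N + 1) =>
        aeval f (monomial (Finsupp.equivFunOnFinite.symm fun i => (β i : ℕ)) (1 : K)))
      ≤ ↑(Submodule.span K (Set.range fun γ : Fin m → Fin (B + 1) =>
        (monomial (Finsupp.equivFunOnFinite.symm fun i => (γ i : ℕ)) (1 : K)))) := by
    rintro _ ⟨β, rfl⟩
    exact stmt5_span_monomials _ (hdeg β)
  haveI : Fintype ↑(Set.range fun γ : Fin m → Fin (B + 1) =>
      (monomial (Finsupp.equivFunOnFinite.symm fun i => (γ i : ℕ)) (1 : K))) :=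
    Fintype.ofFinite _
  have hcard := linearIndependent_le_span_aux' _ hli _ hspan
  have hcard2 : Fintype.card ↑(Set.range fun γ : Fin m → Fin (B + 1) =>
      (monomial (Finsupp.equivFunOnFinite.symm fun i => (γ i : ℕ)) (1 : K))) ≤ (B + 1) ^ m := by
    refine le_trans (Fintype.card_range_le _) ?_
    simp [Fintype.card_fun]
  have hfinal : (N + 1) ^ (m + 1) ≤ (B + 1) ^ m := by
    calc (N + 1) ^ (m + 1) = Fintype.card (Fin (m + 1) → Fin (N + 1)) := by
          simp [Fintype.card_fun]
      _ ≤ (B + 1) ^ m := le_trans hcard hcard2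
  exact absurd hfinal (not_le.mpr harith)

/-- Lifting along an algebra hom: if the images are independent, so are the sources. -/
private lemma stmt5_indep_of_comp {B C : Type*} [CommRing B] [CommRing C] [Algebra K B]
    [Algebra K C] {ι : Type*} (ψ : B →ₐ[K] C) (z : ι → B)
    (h : AlgebraicIndependent K (fun i => ψ (z i))) : AlgebraicIndependent K z := by
  rw [algebraicIndependent_iff] at h ⊢
  intro p hp
  refine h p ?_
  rw [← comp_aeval_apply, hp, map_zero]

private lemma stmt5_card_le_of_indep {m n : ℕ} {B : Type*} [CommRing B] [Algebra K B]
    (ψ : MvPolynomial (Fin m) K →ₐ[K] B) (hψ : Function.Surjective ψ)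
    (y : Fin n → B) (hy : AlgebraicIndependent K y) : n ≤ m := by
  by_contra hlt
  push_neg at hlt
  have hy' : AlgebraicIndependent K (y ∘ (Fin.castLE hlt : Fin (m + 1) → Fin n)) :=
    hy.comp _ (Fin.castLE_injective _)
  choose z hz using fun i : Fin (m + 1) => hψ (y (Fin.castLE hlt i))
  have hz' : AlgebraicIndependent K z := by
    refine stmt5_indep_of_comp ψ z ?_
    have h : (fun i => ψ (z i)) = y ∘ (Fin.castLE hlt) := funext fun i => hz i
    rw [h]
    exact hy'
  exact stmt5_no_algIndep z hz'

/-- The key step: going down in a strict chain of primes adds an independent element. -/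
private lemma stmt5_indep_step {A : Type*} [CommRing A] [Algebra K A] {p q : Ideal A}
    [hp : p.IsPrime] [hq : q.IsPrime] (hpq : p < q) {n : ℕ} (x : Fin n → A)
    (hx : AlgebraicIndependent K (fun i => Ideal.Quotient.mkₐ K q (x i))) :
    ∃ y : Fin (n + 1) → A, AlgebraicIndependent K (fun i => Ideal.Quotient.mkₐ K p (y i)) := by
  obtain ⟨a, haq, hap⟩ := SetLike.exists_of_lt hpq
  refine ⟨Fin.cons a x, ?_⟩
  rw [algebraicIndependent_iff]
  intro f hf
  set E : Polynomial (MvPolynomial (Fin n) K) →+* A :=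
    Polynomial.eval₂RingHom ((aeval x : MvPolynomial (Fin n) K →ₐ[K] A) :
      MvPolynomial (Fin n) K →+* A) a with hE
  have hEC : ∀ g : MvPolynomial (Fin n) K, E (Polynomial.C g) = aeval x g := fun g =>
    Polynomial.eval₂_C _ _
  have hEX : E Polynomial.X = a := Polynomial.eval₂_X _ _
  have hcoeff : ∀ g : MvPolynomial (Fin n) K, aeval x g ∈ q → g = 0 := by
    intro g hg
    rw [algebraicIndependent_iff] at hx
    refine hx g ?_
    rw [← comp_aeval_apply]
    rwa [Ideal.Quotient.mkₐ_eq_mk, Ideal.Quotient.eq_zero_iff_mem]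
  have hdecomp : ∀ F : Polynomial (MvPolynomial (Fin n) K),
      E F = a * E F.divX + aeval x (F.coeff 0) := by
    intro F
    conv_lhs => rw [← Polynomial.X_mul_divX_add F]
    rw [map_add, map_mul, hEX, hEC]
  have key : ∀ (k : ℕ) (F : Polynomial (MvPolynomial (Fin n) K)),
      F.natDegree ≤ k → E F ∈ p → F = 0 := by
    intro k
    induction k with
    | zero =>
      intro F hdeg hF
      have hFC : F = Polynomial.C (F.coeff 0) := Polynomial.eq_C_of_natDegree_le_zero hdeg
      rw [hFC] at hF ⊢
      rw [hEC] at hF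
      rw [hcoeff _ (hpq.le hF), map_zero]
    | succ k ih =>
      intro F hdeg hF
      have hc0 : F.coeff 0 = 0 := by
        refine hcoeff _ ?_
        have h1 : a * E F.divX + aeval x (F.coeff 0) ∈ q := by
          rw [← hdecomp]; exact hpq.le hF
        have h2 : a * E F.divX ∈ q := Ideal.mul_mem_right _ _ haq
        simpa using Ideal.sub_mem _ h1 h2
      have hFX : F = Polynomial.X * F.divX := by
        conv_lhs => rw [← Polynomial.X_mul_divX_add F]
        rw [hc0, map_zero, add_zero]
      have hdiv : E F.divX ∈ p := by
        have h1 : a * E F.divX ∈ p := by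
          rw [hdecomp, hc0, map_zero, add_zero] at hF
          exact hF
        rcases hp.mem_or_mem h1 with h | h
        · exact absurd h hap
        · exact h
      have hdd : F.divX.natDegree ≤ k := by
        rw [Polynomial.natDegree_divX_eq_natDegree_tsub_one]
        omega
      rw [hFX, ih _ hdd hdiv, mul_zero]
  have bridge : (Ideal.Quotient.mk p).comp (E.comp
        ((finSuccEquiv K n : MvPolynomial (Fin (n + 1)) K ≃ₐ[K]
          Polynomial (MvPolynomial (Fin n) K)) :
          MvPolynomial (Fin (n + 1)) K →+* Polynomial (MvPolynomial (Fin n) K)))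
      = ((aeval (fun i => Ideal.Quotient.mkₐ K p ((Fin.cons a x : Fin (n + 1) → A) i))
          : MvPolynomial (Fin (n + 1)) K →ₐ[K] A ⧸ p) :
          MvPolynomial (Fin (n + 1)) K →+* A ⧸ p) := by
    apply ringHom_ext
    · intro r
      have h1 : (finSuccEquiv K n) (C r) = Polynomial.C (C r) := by
        rw [← MvPolynomial.algebraMap_eq, AlgEquiv.commutes]
        rfl
      simp [h1, hEC, aeval_C, Ideal.Quotient.mkₐ_eq_mk, ← Ideal.Quotient.algebraMap_eq,
        ← IsScalarTower.algebraMap_apply]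
    · intro i
      refine Fin.cases ?_ ?_ i
      · simp [finSuccEquiv_X_zero, hEX]
      · intro j
        simp [finSuccEquiv_X_succ, hEC]
  have hmem : E ((finSuccEquiv K n) f) ∈ p := by
    rw [← Ideal.Quotient.eq_zero_iff_mem]
    have h2 := congrArg (fun φ : MvPolynomial (Fin (n + 1)) K →+* A ⧸ p => φ f) bridge
    simp only [RingHom.coe_comp, Function.comp_apply, RingHom.coe_coe, AlgHom.coe_coe] at h2
    rw [h2]
    simpa using hf
  have hzero : (finSuccEquiv K n) f = 0 := key _ _ le_rfl hmem
  exact (finSuccEquiv K n).injective (a₁ := f) (a₂ := 0) (by rw [hzero, map_zero])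

/-- A prime containing a monomial contains one of its variables. -/
private lemma stmt5_exists_var_mem {d : ℕ} {P : Ideal (MvPolynomial (Fin d) K)} [hP : P.IsPrime]
    {α : Fin d →₀ ℕ} (hmem : monomial α (1 : K) ∈ P) :
    ∃ i : Fin d, α i ≠ 0 ∧ X i ∈ P := by
  have h1 : (α.prod fun n e => (X n : MvPolynomial (Fin d) K) ^ e) ∈ P := by
    have := monomial_eq (s := α) (a := (1 : K))
    rwa [this, map_one, one_mul] at hmem
  rw [Finsupp.prod] at h1
  rw [Ideal.IsPrime.prod_mem_iff] at h1
  obtain ⟨i, hi, hXi⟩ := h1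
  have hα : α i ≠ 0 := Finsupp.mem_support_iff.mp hi
  exact ⟨i, hα, (hP.pow_mem_iff_mem _ (Nat.pos_of_ne_zero hα)).mp hXi⟩

/-- A prime containing `M` contains two distinct variables. -/
private lemma stmt5_two_vars_mem {d : ℕ} (hd : 2 ≤ d) {M P : Ideal (MvPolynomial (Fin d) K)}
    [P.IsPrime] (hMP : M ≤ P)
    (hvar : ∀ i : Fin d, ∃ α : Fin d →₀ ℕ, α i = 0 ∧ MvPolynomial.monomial α (1 : K) ∈ M) :
    ∃ a b : Fin d, a ≠ b ∧ X a ∈ P ∧ X b ∈ P := by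
  obtain ⟨α₀, -, hα₀⟩ := hvar ⟨0, by omega⟩
  obtain ⟨a, -, hXa⟩ := stmt5_exists_var_mem (hMP hα₀)
  obtain ⟨α, hαa, hα⟩ := hvar a
  obtain ⟨b, hb0, hXb⟩ := stmt5_exists_var_mem (hMP hα)
  exact ⟨a, b, fun h => hb0 (h ▸ hαa), hXa, hXb⟩

private lemma stmt5_surj_small {d : ℕ} {q0 : Ideal (MvPolynomial (Fin d) K)}
    {a b : Fin d} (hab : a ≠ b) (hXa : X a ∈ q0) (hXb : X b ∈ q0) :
    ∃ ψ : MvPolynomial (Fin (d - 2)) K →ₐ[K] (MvPolynomial (Fin d) K ⧸ q0),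
      Function.Surjective ψ := by
  classical
  set s : Finset (Fin d) := {a, b} with hs
  have hcard : Fintype.card {i : Fin d // i ∈ sᶜ} = d - 2 := by
    rw [Fintype.card_coe, Finset.card_compl, hs, Finset.card_pair hab, Fintype.card_fin]
  obtain ⟨e⟩ : Nonempty (Fin (d - 2) ≃ {i : Fin d // i ∈ sᶜ}) :=
    ⟨(Fintype.equivFinOfCardEq hcard).symm⟩
  refine ⟨aeval fun j => Ideal.Quotient.mk q0 (X ((e j) : Fin d)), ?_⟩
  intro y
  obtain ⟨f, rfl⟩ := Ideal.Quotient.mk_surjective y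
  suffices h : Ideal.Quotient.mk q0 f ∈
      (aeval fun j : Fin (d - 2) => Ideal.Quotient.mk q0 (X ((e j) : Fin d))).range by
    obtain ⟨g, hg⟩ := h
    exact ⟨g, hg⟩
  induction f using MvPolynomial.induction_on with
  | C r =>
    have : (Ideal.Quotient.mk q0) (C r) = algebraMap K _ r := rfl
    rw [this]
    exact Subalgebra.algebraMap_mem _ r
  | add p q hp hq =>
    rw [RingHom.map_add]
    exact add_mem hp hq
  | mul_X p i hp =>
    rw [RingHom.map_mul]
    refine mul_mem hp ?_
    by_cases hi : i ∈ sᶜ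
    · refine ⟨X (e.symm ⟨i, hi⟩), ?_⟩
      show (aeval fun j : Fin (d - 2) => Ideal.Quotient.mk q0 (X ((e j) : Fin d)))
        (X (e.symm ⟨i, hi⟩)) = _
      rw [aeval_X]
      congr
      simp
    · have hiab : i = a ∨ i = b := by
        simp only [Finset.mem_compl, not_not, hs, Finset.mem_insert, Finset.mem_singleton] at hi
        exact hi
      have hX0 : (Ideal.Quotient.mk q0) (X i) = 0 := by
        rcases hiab with h | h
        · rw [h, Ideal.Quotient.eq_zero_iff_mem]; exact hXa
        · rw [h, Ideal.Quotient.eq_zero_iff_mem]; exact hXb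
      rw [hX0]
      exact zero_mem _

end Aux

/-- Let `M ⊆ K[y_1,…,y_d]` be a monomial ideal (`d ≥ 2`). If for every
`i` there is a monomial `y^α ∈ M` with `y_i ∤ y^α` (i.e. `α i = 0`), then the Krull
dimension of `K[y_1,…,y_d]/M` is at most `d - 2`. -/
theorem stmt_5 (K : Type*) [Field K] (d : ℕ) (hd : 2 ≤ d)
    (M : Ideal (MvPolynomial (Fin d) K))
    (hmono : ∃ G : Set (Fin d →₀ ℕ),
      M = Ideal.span ((fun α => MvPolynomial.monomial α (1 : K)) '' G))
    (hvar : ∀ i : Fin d, ∃ α : Fin d →₀ ℕ,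
      α i = 0 ∧ MvPolynomial.monomial α (1 : K) ∈ M) :
    ringKrullDim (MvPolynomial (Fin d) K ⧸ M) ≤ ((d - 2 : ℕ) : WithBot (WithTop ℕ)) := by
  refine iSup_le fun c => ?_
  suffices h : c.length ≤ d - 2 by exact (Nat.cast_le (α := WithBot ℕ∞)).mpr h
  set R := MvPolynomial (Fin d) K with hR
  set n := c.length with hn
  -- pull the chain back to primes of `R` containing `M`
  set P : Fin (n + 1) → Ideal R := fun i => (c i).asIdeal.comap (Ideal.Quotient.mk M) with hP
  haveI hPprime : ∀ i, (P i).IsPrime := fun i => Ideal.IsPrime.comap _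
  have hPstrict : ∀ i j : Fin (n + 1), i < j → P i < P j := by
    intro i j hij
    have hlt : c i < c j := c.strictMono hij
    have hle : P i ≤ P j := Ideal.comap_mono (le_of_lt hlt)
    refine lt_of_le_of_ne hle ?_
    intro heq
    have := congrArg (Ideal.map (Ideal.Quotient.mk M)) heq
    rw [Ideal.map_comap_of_surjective _ Ideal.Quotient.mk_surjective,
      Ideal.map_comap_of_surjective _ Ideal.Quotient.mk_surjective] at this
    exact (ne_of_lt hlt) (PrimeSpectrum.ext this)
  have hMP : ∀ i, M ≤ P i := by
    intro i x hx
    show Ideal.Quotient.mk M x ∈ (c i).asIdeal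
    rw [Ideal.Quotient.eq_zero_iff_mem.mpr hx]
    exact zero_mem _
  -- build an algebraically independent family of size `n` mod `P 0`
  have hchain : ∀ j : ℕ, j ≤ n → ∃ x : Fin j → R,
      AlgebraicIndependent K (fun i => Ideal.Quotient.mkₐ K (P ⟨n - j, by omega⟩) (x i)) := by
    intro j
    induction j with
    | zero =>
      intro _
      refine ⟨Fin.elim0, ?_⟩
      haveI : Nontrivial (R ⧸ P ⟨n, by omega⟩) :=
        Ideal.Quotient.nontrivial_iff.mpr (hPprime ⟨n, by omega⟩).ne_top
      rw [show (fun i : Fin 0 => Ideal.Quotient.mkₐ K (P ⟨n - 0, by omega⟩) (Fin.elim0 i))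
        = Fin.elim0 from funext fun i => i.elim0]
      exact algebraicIndependent_empty_type_iff.mpr (algebraMap K _).injective
    | succ j ih =>
      intro hj
      obtain ⟨x, hx⟩ := ih (by omega)
      have hlt : (⟨n - (j + 1), by omega⟩ : Fin (n + 1)) < ⟨n - j, by omega⟩ := by
        simp only [Fin.mk_lt_mk]
        omega
      obtain ⟨y, hy⟩ := stmt5_indep_step (hPstrict _ _ hlt) x hx
      exact ⟨y, hy⟩
  obtain ⟨x, hx⟩ := hchain n le_rfl
  have h00 : (⟨n - n, by omega⟩ : Fin (n + 1)) = ⟨0, by omega⟩ := by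
    simp only [Fin.mk.injEq]
    omega
  rw [h00] at hx
  -- `P 0` contains two distinct variables
  obtain ⟨a, b, hab, hXa, hXb⟩ := stmt5_two_vars_mem hd (hMP ⟨0, by omega⟩) hvar
  obtain ⟨ψ, hψ⟩ := stmt5_surj_small hab hXa hXb
  exact stmt5_card_le_of_indep ψ hψ _ hx
end

section
/- With q = ⌊(m_1 − 1)/(n − 1)⌋ and l = m_1 − q(n − 1) ∈ {1, …, n−1}, the following hold: (a) q + d + 1 = min{b ∈ ℤ⁺ : b·m_1 ∈ ℕm_2 + ⋯ + ℕm_n}; (b) q + 1 = min{b ∈ ℤ⁺ : b·m_n ∈ ℕm_1 + ⋯ + ℕm_{n−1}}; (c) (q + d)·a_1 + a_i = a_{l+i} + q·a_n + d·a_{n+1} in ℕ² for all i ∈ {1, …, n − l}. -/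
/-- For the arithmetic sequence `m_i = m_1 + (i-1)d` with
`gcd(m_1,d)=1`, `q = ⌊(m_1-1)/(n-1)⌋` and `l = m_1 - q(n-1)`:
(a) `q+d+1` is the least positive `b` with `b·m_1 ∈ ℕm_2 + ⋯ + ℕm_n`;
(b) `q+1` is the least positive `b` with `b·m_n ∈ ℕm_1 + ⋯ + ℕm_{n-1}`;
(c) `(q+d)·a_1 + a_i = a_{l+i} + q·a_n + d·a_{n+1}` for all `1 ≤ i ≤ n-l`. -/
theorem stmt_6 (n m₁ d : ℕ) (hn : 2 ≤ n) (hm₁ : 0 < m₁) (hd : 0 < d)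
    (hgcd : Nat.gcd m₁ d = 1)
    (m : ℕ → ℕ) (hm : ∀ i, m i = m₁ + (i - 1) * d)
    (a : ℕ → ℕ × ℕ)
    (ha : ∀ i, a i = if i = n + 1 then (0, m n) else (m i, m n - m i))
    (q l : ℕ) (hq : q = (m₁ - 1) / (n - 1)) (hl : l = m₁ - q * (n - 1)) :
    IsLeast {b : ℕ | 0 < b ∧
      ∃ c : ℕ → ℕ, b * m 1 = ∑ i ∈ Finset.Icc 2 n, c i * m i} (q + d + 1) ∧
    IsLeast {b : ℕ | 0 < b ∧
      ∃ c : ℕ → ℕ, b * m n = ∑ i ∈ Finset.Icc 1 (n - 1), c i * m i} (q + 1) ∧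
    (∀ i, 1 ≤ i → i ≤ n - l →
      (q + d) • a 1 + a i = a (l + i) + q • a n + d • a (n + 1)) := by
  obtain ⟨e, rfl⟩ : ∃ e, n = e + 1 := ⟨n - 1, by omega⟩
  have he : 1 ≤ e := by omega
  simp only [Nat.add_sub_cancel] at hq hl
  have hcoprime : Nat.Coprime m₁ d := hgcd
  have hkey : m₁ = q * e + l ∧ 1 ≤ l ∧ l ≤ e := by
    have hmod := Nat.div_add_mod (m₁ - 1) e
    have hmodlt : (m₁ - 1) % e < e := Nat.mod_lt _ he
    rw [← hq] at hmod
    have hc : q * e = e * q := Nat.mul_comm _ _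
    omega
  obtain ⟨hm₁eq, hl1, hle⟩ := hkey
  subst hm₁eq
  obtain ⟨w, rfl⟩ : ∃ w, e = l + w := ⟨e - l, by omega⟩
  clear hq hl hle
  -- convenient abbreviation for the value of m₁
  set M : ℕ := q * (l + w) + l with hMdef
  have hM1 : 1 ≤ M := by have := Nat.le_add_left l (q * (l + w)); omega
  have hm1 : m 1 = M := by rw [hm]; simp
  -- expansion lemma
  have hexpand : ∀ (lo hi : ℕ) (c : ℕ → ℕ),
      ∑ i ∈ Finset.Icc lo hi, c i * m i
        = (∑ i ∈ Finset.Icc lo hi, c i) * M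
          + (∑ i ∈ Finset.Icc lo hi, c i * (i - 1)) * d := by
    intro lo hi c
    rw [Finset.sum_mul, Finset.sum_mul, ← Finset.sum_add_distrib]
    refine Finset.sum_congr rfl fun i _ => ?_
    rw [hm i]; ring
  -- a two-term sum lemma
  have hsum : ∀ (lo hi j₁ j₂ x y : ℕ), j₁ ∈ Finset.Icc lo hi → j₂ ∈ Finset.Icc lo hi →
      ∑ i ∈ Finset.Icc lo hi,
        ((if i = j₁ then x else 0) + (if i = j₂ then y else 0)) * m i
        = x * m j₁ + y * m j₂ := by
    intro lo hi j₁ j₂ x y h1 h2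
    simp only [add_mul, Finset.sum_add_distrib, ite_mul, zero_mul]
    rw [Finset.sum_ite_eq' _ j₁ (fun i => x * m i), Finset.sum_ite_eq' _ j₂ (fun i => y * m i),
      if_pos h1, if_pos h2]
  refine ⟨⟨⟨by omega, ?_⟩, ?_⟩, ⟨⟨by omega, ?_⟩, ?_⟩, ?_⟩
  · -- (a) membership
    refine ⟨fun i => (if i = l + 1 then 1 else 0) + (if i = l + w + 1 then q else 0), ?_⟩
    rw [hsum 2 (l + w + 1) (l + 1) (l + w + 1) 1 q (by simp [Finset.mem_Icc]; omega)
      (by simp [Finset.mem_Icc]; omega)]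
    rw [hm1, hm (l + 1), hm (l + w + 1)]
    simp only [Nat.add_sub_cancel, hMdef]
    ring
  · -- (a) lower bound
    rintro b ⟨hb, c, hc⟩
    rw [hexpand, hm1] at hc
    set s := ∑ i ∈ Finset.Icc 2 (l + w + 1), c i with hs
    set t := ∑ i ∈ Finset.Icc 2 (l + w + 1), c i * (i - 1) with ht
    have hst : s ≤ t := by
      rw [hs, ht]
      refine Finset.sum_le_sum fun i hi => ?_
      simp only [Finset.mem_Icc] at hi
      have h1 : 1 ≤ i - 1 := by omega
      calc c i = c i * 1 := by ring
        _ ≤ c i * (i - 1) := Nat.mul_le_mul_left _ h1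
    have hte : t ≤ s * (l + w) := by
      rw [hs, ht, Finset.sum_mul]
      refine Finset.sum_le_sum fun i hi => ?_
      simp only [Finset.mem_Icc] at hi
      exact Nat.mul_le_mul_left _ (by omega)
    have hsb : s ≤ b := by
      refine Nat.le_of_mul_le_mul_right ?_ (show 0 < M by omega)
      rw [hc]; exact Nat.le_add_right _ _
    obtain ⟨u, rfl⟩ : ∃ u, b = s + u := ⟨b - s, by omega⟩
    have key : u * M = t * d := by
      have hc2 : s * M + u * M = s * M + t * d := by rw [← add_mul]; exact hc
      exact Nat.add_left_cancel hc2
    have htpos : 0 < t := by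
      rcases Nat.eq_zero_or_pos t with h0 | h; swap; · exact h
      exfalso
      have hu : u = 0 := by
        have : u * M = 0 := by rw [key, h0, zero_mul]
        rcases Nat.mul_eq_zero.mp this with h | h <;> omega
      omega
    have hdvd : M ∣ t := hcoprime.dvd_of_dvd_mul_right ⟨u, by rw [← key]; ring⟩
    have hMt : M ≤ t := Nat.le_of_dvd htpos hdvd
    have hqs : q < s := by
      by_contra hqs
      push_neg at hqs
      have h2 : s * (l + w) ≤ q * (l + w) := Nat.mul_le_mul_right _ hqs
      omega
    obtain ⟨k, hk⟩ := hdvd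
    have hk1 : 1 ≤ k := by
      rcases Nat.eq_zero_or_pos k with h0 | h; · rw [h0, Nat.mul_zero] at hk; omega
      · exact h
    have hud : u = k * d := by
      refine Nat.eq_of_mul_eq_mul_right (show 0 < M by omega) ?_
      rw [key, hk]; ring
    have hdu : d ≤ u := by
      rw [hud]
      calc d = 1 * d := (one_mul d).symm
        _ ≤ k * d := Nat.mul_le_mul_right _ hk1
    omega
  · -- (b) membership
    refine ⟨fun i => (if i = 1 then q + d else 0) + (if i = w + 1 then 1 else 0), ?_⟩
    simp only [Nat.add_sub_cancel]
    rw [hsum 1 (l + w) 1 (w + 1) (q + d) 1 (by simp [Finset.mem_Icc]; omega)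
      (by simp [Finset.mem_Icc]; omega)]
    rw [hm1, hm (l + w + 1), hm (w + 1)]
    simp only [Nat.add_sub_cancel, hMdef]
    ring
  · -- (b) lower bound
    rintro b ⟨hb, c, hc⟩
    simp only [Nat.add_sub_cancel] at hc
    rw [hexpand] at hc
    set s := ∑ i ∈ Finset.Icc 1 (l + w), c i with hs
    set t := ∑ i ∈ Finset.Icc 1 (l + w), c i * (i - 1) with ht
    have hmn : m (l + w + 1) = M + (l + w) * d := by rw [hm]; simp
    rw [hmn] at hc
    have ht' : t + s ≤ s * (l + w) := by
      rw [hs, ht, ← Finset.sum_add_distrib, Finset.sum_mul]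
      refine Finset.sum_le_sum fun i hi => ?_
      simp only [Finset.mem_Icc] at hi
      have h1 : c i * (i - 1) + c i = c i * i := by
        rw [← Nat.mul_succ]
        congr 1
        omega
      rw [h1]
      exact Nat.mul_le_mul_left _ hi.2
    have hsb : b ≤ s := by
      by_contra h
      push_neg at h
      obtain ⟨u, rfl⟩ : ∃ u, b = s + (u + 1) := ⟨b - s - 1, by omega⟩
      have h1 : (t + s) * d ≤ (s * (l + w)) * d := Nat.mul_le_mul_right d ht'
      nlinarith [hc, h1, hM1, hd]
    obtain ⟨u, hu⟩ : ∃ u, s = b + u := ⟨s - b, by omega⟩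
    rw [hu] at hc ht'
    have key0 : b * ((l + w) * d) = u * M + t * d := by
      have h := hc
      rw [mul_add, add_mul] at h
      linarith [h]
    have htb : t ≤ b * (l + w) := by
      refine Nat.le_of_mul_le_mul_right ?_ hd
      rw [mul_assoc]
      omega
    obtain ⟨v, hv⟩ : ∃ v, b * (l + w) = t + v := ⟨_, (Nat.add_sub_cancel' htb).symm⟩
    have key : v * d = u * M := by
      have h3 : (t + v) * d = u * M + t * d := by
        rw [← hv, mul_assoc]; exact key0
      have h4 : t * d + v * d = u * M + t * d := by rw [← add_mul]; exact h3
      omega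
    have hdvdv : M ∣ v := hcoprime.dvd_of_dvd_mul_right ⟨u, by rw [key]; ring⟩
    have hv1 : 0 < v := by
      rcases Nat.eq_zero_or_pos v with h0 | h; swap; · exact h
      exfalso
      have hu : u = 0 := by
        have : u * M = 0 := by rw [← key, h0, zero_mul]
        rcases Nat.mul_eq_zero.mp this with h | h <;> omega
      subst hu
      subst h0
      have h5 : (b + 0) * (l + w) = b * (l + w) := by ring
      omega
    have hMv : M ≤ v := Nat.le_of_dvd hv1 hdvdv
    have hqb : q * (l + w) < b * (l + w) := by omega
    have : q < b := Nat.lt_of_mul_lt_mul_right hqb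
    omega
  · -- (c)
    intro i hi1 hi2
    obtain ⟨j, rfl⟩ : ∃ j, i = j + 1 := ⟨i - 1, by omega⟩
    have hjw : j ≤ w := by omega
    obtain ⟨v, rfl⟩ : ∃ v, w = j + v := ⟨w - j, by omega⟩
    have hsub : ∀ x, x ≤ l + j + v →
        m (l + (j + v) + 1) - m (x + 1) = (l + j + v - x) * d := by
      intro x hx
      rw [hm, hm]
      simp only [Nat.add_sub_cancel]
      rw [show l + (j + v) = l + j + v by ring, Nat.add_sub_add_left, ← Nat.sub_mul]
    have ha1 : a 1 = (M, (l + j + v) * d) := by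
      rw [ha, if_neg (by omega)]
      have h0 := hsub 0 (by omega)
      rw [show (0:ℕ) + 1 = 1 from rfl] at h0
      rw [h0, Nat.sub_zero, hm1]
    have hai : a (j + 1) = (M + j * d, (l + v) * d) := by
      rw [ha, if_neg (by omega), hsub j (by omega), hm]
      simp only [Nat.add_sub_cancel]
      congr 2
      omega
    have hali : a (l + (j + 1)) = (M + (l + j) * d, v * d) := by
      rw [show l + (j + 1) = (l + j) + 1 by ring, ha, if_neg (by omega),
        hsub (l + j) (by omega), hm]
      simp only [Nat.add_sub_cancel]
      congr 2
      omega
    have han : a (l + (j + v) + 1) = (M + (l + j + v) * d, 0) := by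
      rw [ha, if_neg (by omega), hm]
      simp only [Nat.add_sub_cancel, Nat.sub_self]
      congr 2
      ring
    have han1 : a (l + (j + v) + 1 + 1) = (0, M + (l + j + v) * d) := by
      rw [ha, if_pos rfl, hm]
      simp only [Nat.add_sub_cancel]
      congr 2
      ring
    rw [ha1, hai, hali, han, han1]
    simp only [Prod.smul_mk, smul_eq_mul, Prod.mk_add_mk, Prod.mk.injEq, hMdef]
    constructor <;> ring
end

section
/- For every r ∈ {2, …, n−1}, one has m_r ∈ Σ_{i ∈ {1,…,n}\{r}} ℕm_i (i.e., m_r is a nonnegative integer combination of the remaining m_i) if and only if r > m_1. -/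
/-- For the arithmetic sequence `m_i = m_1 + (i-1)d` with
`gcd(m_1,d)=1` and `n ≥ 3`: for `r ∈ {2, …, n-1}`, `m_r` is a nonnegative integer
combination of the remaining `m_i` if and only if `r > m_1`. -/
theorem stmt_7 (n m₁ d : ℕ) (hn : 3 ≤ n) (hm₁ : 0 < m₁) (hd : 0 < d)
    (hgcd : Nat.gcd m₁ d = 1)
    (m : ℕ → ℕ) (hm : ∀ i, m i = m₁ + (i - 1) * d)
    (r : ℕ) (hr₁ : 2 ≤ r) (hr₂ : r ≤ n - 1) :
    (∃ c : ℕ → ℕ, m r = ∑ i ∈ (Finset.Icc 1 n).erase r, c i * m i) ↔ m₁ < r := by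
  set E := (Finset.Icc 1 n).erase r with hE
  have hE1 : (1:ℕ) ∈ E := by
    simp only [hE, Finset.mem_erase, Finset.mem_Icc]
    omega
  constructor
  · rintro ⟨c, hc⟩
    have hsum : m r = (∑ i ∈ E, c i) * m₁ + (∑ i ∈ E, c i * (i - 1)) * d := by
      rw [hc, Finset.sum_mul, Finset.sum_mul, ← Finset.sum_add_distrib]
      refine Finset.sum_congr rfl fun i _ => ?_
      rw [hm i]; ring
    rw [hm r] at hsum
    generalize hk : ∑ i ∈ E, c i = k at hsum
    generalize hS : ∑ i ∈ E, c i * (i - 1) = S at hsum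
    by_contra hlt
    push_neg at hlt
    rcases Nat.lt_or_ge k 2 with hk2 | hk2
    · interval_cases k
      · -- k = 0 : all c i = 0
        have hz : ∀ i ∈ E, c i = 0 := by
          rw [← Finset.sum_eq_zero_iff]; exact hk
        have hS0 : S = 0 := by
          rw [← hS]
          exact Finset.sum_eq_zero fun i hi => by rw [hz i hi, zero_mul]
        rw [hS0] at hsum
        omega
      · -- k = 1 : the combination is a single m_j, forcing j = r
        obtain ⟨j, hj, hcj⟩ : ∃ j ∈ E, c j ≠ 0 := by
          by_contra h
          push_neg at h
          rw [Finset.sum_eq_zero h] at hk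
          omega
        have hrest : ∑ i ∈ E.erase j, c i = 0 := by
          have h1 : ∑ i ∈ E.erase j, c i + c j = 1 := by
            rw [← hk]; exact Finset.sum_erase_add E c hj
          omega
        have hcj1 : c j = 1 := by
          have h1 : ∑ i ∈ E.erase j, c i + c j = 1 := by
            rw [← hk]; exact Finset.sum_erase_add E c hj
          omega
        have hrest0 : ∀ i ∈ E.erase j, c i = 0 := by
          rw [← Finset.sum_eq_zero_iff]; exact hrest
        have hSj : S = j - 1 := by
          rw [← hS, Finset.sum_eq_single_of_mem j hj, hcj1, one_mul]
          intro i hi hij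
          rw [hrest0 i (Finset.mem_erase.mpr ⟨hij, hi⟩), zero_mul]
        -- hsum : m₁ + (r-1)*d = 1*m₁ + S*d
        have hSr : S = r - 1 := by
          rw [one_mul] at hsum
          have : (r - 1) * d = S * d := by omega
          exact (Nat.eq_of_mul_eq_mul_right hd this.symm)
        have hj1 : 1 ≤ j := by
          have := Finset.mem_of_mem_erase hj
          exact (Finset.mem_Icc.mp this).1
        have hjr : j ≠ r := (Finset.mem_erase.mp hj).1
        omega
    · -- k ≥ 2
      obtain ⟨k', rfl⟩ : ∃ k', k = k' + 2 := ⟨k - 2, by omega⟩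
      have heq : (k' + 1) * m₁ + S * d = (r - 1) * d := by
        have h2 : (k' + 2) * m₁ = m₁ + (k' + 1) * m₁ := by ring
        linarith [hsum, h2]
      have hdvd : d ∣ (k' + 1) * m₁ := by
        have h1 : (k' + 1) * m₁ = (r - 1) * d - S * d := by omega
        rw [h1]
        exact Nat.dvd_sub (dvd_mul_left d (r - 1)) (dvd_mul_left d S)
      have hco : Nat.Coprime d m₁ := Nat.coprime_comm.mp hgcd
      have hdk : d ∣ (k' + 1) := hco.dvd_of_dvd_mul_right hdvd
      have hdle : d ≤ k' + 1 := Nat.le_of_dvd (by omega) hdk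
      have h3 : d * m₁ ≤ (r - 1) * d := by
        calc d * m₁ ≤ (k' + 1) * m₁ := Nat.mul_le_mul_right m₁ hdle
          _ ≤ (r - 1) * d := by omega
      have h4 : m₁ ≤ r - 1 := by
        have : m₁ * d ≤ (r - 1) * d := by rw [mul_comm] at h3; exact h3
        exact Nat.le_of_mul_le_mul_right this hd
      omega
  · intro hlt
    obtain ⟨s, hs⟩ : ∃ s, r = m₁ + s + 1 := ⟨r - m₁ - 1, by omega⟩
    have hE2 : r - m₁ ∈ E := by
      simp only [hE, Finset.mem_erase, Finset.mem_Icc]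
      omega
    refine ⟨fun i => (if i = 1 then d else 0) + (if i = r - m₁ then 1 else 0), ?_⟩
    have hcm : ∀ i ∈ E, ((if i = 1 then d else 0) + (if i = r - m₁ then 1 else 0)) * m i
        = (if i = 1 then d * m i else 0) + (if i = r - m₁ then m i else 0) := by
      intro i _
      split <;> split <;> ring
    rw [Finset.sum_congr rfl hcm, Finset.sum_add_distrib,
      Finset.sum_ite_eq' E 1 (fun i => d * m i), Finset.sum_ite_eq' E (r - m₁) m,
      if_pos hE1, if_pos hE2]
    have h1 : r - 1 = m₁ + s := by omega
    have h2 : r - m₁ = s + 1 := by omega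
    rw [hm r, hm 1, hm (r - m₁), h1, h2]
    simp only [Nat.add_sub_cancel, Nat.sub_self]
    ring
end

section
/- Suppose 2 ≤ m_1. Then S \ P_2 = {μ·a_1 + a_2 + λ·a_{n+1} : 0 ≤ μ ≤ q + d − 1 + ε, λ ∈ ℕ}, where ε = 1 if l = n − 1 and ε = 0 otherwise. -/
open Finset in
lemma mem_closure_iff_sum (f : ℕ → ℕ × ℕ) (F : Finset ℕ) (x : ℕ × ℕ) :
    x ∈ AddSubmonoid.closure (f '' ↑F) ↔ ∃ c : ℕ → ℕ, x = ∑ i ∈ F, c i • f i := by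
  constructor
  · intro hx
    induction hx using AddSubmonoid.closure_induction with
    | mem y hy =>
      obtain ⟨i, hi, rfl⟩ := hy
      refine ⟨fun j => if j = i then 1 else 0, ?_⟩
      have : ∀ j ∈ F, (if j = i then 1 else 0) • f j = if j = i then f j else 0 := by
        intro j _; split <;> simp
      rw [Finset.sum_congr rfl this, Finset.sum_ite_eq' F i f, if_pos (by simpa using hi)]
    | zero => exact ⟨0, by simp⟩
    | add x y hx hy ihx ihy =>
      obtain ⟨c₁, rfl⟩ := ihx
      obtain ⟨c₂, rfl⟩ := ihy
      exact ⟨c₁ + c₂, by rw [← Finset.sum_add_distrib]; simp [add_smul]⟩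
  · rintro ⟨c, rfl⟩
    exact AddSubmonoid.sum_mem _ fun i hi =>
      AddSubmonoid.nsmul_mem _ (AddSubmonoid.subset_closure (Set.mem_image_of_mem f (by simpa using hi))) _

lemma build_c (n A B C D u v : ℕ) (hn : 4 ≤ n) (hu : 3 ≤ u) (hu' : u ≤ n - 1)
    (hv : 3 ≤ v) (hv' : v ≤ n - 1) :
    ∃ c : ℕ → ℕ, c 2 = 0 ∧ (∀ i, i ∉ Finset.Icc 1 n → c i = 0) ∧
      (∑ i ∈ Finset.Icc 1 n, c i) = A + B + C + D ∧
      (∑ i ∈ Finset.Icc 1 n, c i * (i - 1)) = B * (n - 1) + C * (u - 1) + D * (v - 1) := by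
  refine ⟨fun i => (if i = 1 then A else 0) + (if i = n then B else 0) +
    (if i = u then C else 0) + (if i = v then D else 0), ?_, ?_, ?_, ?_⟩
  · simp only; split_ifs <;> omega
  · intro i hi
    simp only [Finset.mem_Icc, not_and_or, not_le] at hi
    simp only; split_ifs <;> omega
  · simp only [Finset.sum_add_distrib, Finset.sum_ite_eq' (Finset.Icc 1 n), Finset.mem_Icc]
    rw [if_pos (by omega), if_pos (by omega), if_pos (by omega), if_pos (by omega)]
  · have : ∀ i ∈ Finset.Icc 1 n,
        ((if i = 1 then A else 0) + (if i = n then B else 0) +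
        (if i = u then C else 0) + (if i = v then D else 0)) * (i - 1)
        = (if i = 1 then A * (i-1) else 0) + (if i = n then B * (i-1) else 0) +
        (if i = u then C * (i-1) else 0) + (if i = v then D * (i-1) else 0) := by
      intro i _; split_ifs <;> ring
    rw [Finset.sum_congr rfl this]
    simp only [Finset.sum_add_distrib, Finset.sum_ite_eq' (Finset.Icc 1 n), Finset.mem_Icc]
    rw [if_pos (by omega), if_pos (by omega), if_pos (by omega), if_pos (by omega)]
    simp

lemma repC (n k t : ℕ) (hn : 4 ≤ n) (ht : t ≤ k * (n - 1)) (ht1 : t ≠ 1) :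
    ∃ c : ℕ → ℕ, c 2 = 0 ∧ (∀ i, i ∉ Finset.Icc 1 n → c i = 0) ∧
      (∑ i ∈ Finset.Icc 1 n, c i) = k ∧
      (∑ i ∈ Finset.Icc 1 n, c i * (i - 1)) = t := by
  have hn1 : 0 < n - 1 := by omega
  obtain ⟨s, r, hdm, hrlt⟩ : ∃ s r, (n - 1) * s + r = t ∧ r < n - 1 :=
    ⟨t / (n - 1), t % (n - 1), Nat.div_add_mod t (n - 1), Nat.mod_lt _ hn1⟩
  have hkc : k * (n - 1) = (n - 1) * k := mul_comm _ _
  have hsk : s ≤ k := by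
    have h1 : (n - 1) * s ≤ (n - 1) * k := by omega
    exact Nat.le_of_mul_le_mul_left h1 hn1
  rcases Nat.eq_zero_or_pos t with ht0 | htpos
  · obtain ⟨c, h2, hsupp, hsum, hw⟩ :=
      build_c n k 0 0 0 3 3 hn (by omega) (by omega) (by omega) (by omega)
    exact ⟨c, h2, hsupp, by omega, by rw [hw]; omega⟩
  · have hskstrict : r ≠ 0 → s < k := by
      intro hr0
      have h1 : (n - 1) * s < (n - 1) * k := by omega
      exact Nat.lt_of_mul_lt_mul_left h1
    have hsc : s * (n - 1) = (n - 1) * s := mul_comm _ _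
    rcases Nat.lt_or_ge r 2 with hr2 | hr2
    · rcases Nat.eq_zero_or_pos r with hr0 | hr1
      · obtain ⟨c, h2, hsupp, hsum, hw⟩ :=
          build_c n (k - s) s 0 0 3 3 hn (by omega) (by omega) (by omega) (by omega)
        exact ⟨c, h2, hsupp, by omega, by rw [hw]; omega⟩
      · -- r = 1
        have hs1 : 1 ≤ s := by
          rcases Nat.eq_zero_or_pos s with h | h
          · subst h; simp at hdm; omega
          · exact h
        have hslt : s < k := hskstrict (by omega)
        obtain ⟨c, h2, hsupp, hsum, hw⟩ :=
          build_c n (k - s - 1) (s - 1) 1 1 (n - 1) 3 hn (by omega) (by omega) (by omega) (by omega)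
        refine ⟨c, h2, hsupp, by omega, ?_⟩
        rw [hw]
        have he : (s - 1) * (n - 1) + (n - 1) = s * (n - 1) := by
          have h3 : (s - 1 + 1) * (n - 1) = (s - 1) * (n - 1) + 1 * (n - 1) := add_mul _ _ _
          rw [show s - 1 + 1 = s by omega] at h3
          omega
        omega
    · -- r ≥ 2
      have hslt : s < k := hskstrict (by omega)
      obtain ⟨c, h2, hsupp, hsum, hw⟩ :=
        build_c n (k - s - 1) s 1 0 (r + 1) 3 hn (by omega) (by omega) (by omega) (by omega)
      exact ⟨c, h2, hsupp, by omega, by rw [hw]; omega⟩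

lemma t_ne_one (n : ℕ) (c : ℕ → ℕ) (h2 : c 2 = 0) :
    (∑ i ∈ Finset.Icc 1 n, c i * (i - 1)) ≠ 1 := by
  intro h
  have hex : ∃ i ∈ Finset.Icc 1 n, c i * (i - 1) ≠ 0 := by
    by_contra hno
    push_neg at hno
    rw [Finset.sum_eq_zero hno] at h
    omega
  obtain ⟨i, hi, hne⟩ := hex
  have hle : c i * (i - 1) ≤ 1 :=
    le_trans (Finset.single_le_sum (f := fun j => c j * (j - 1)) (fun j _ => Nat.zero_le _) hi)
      (le_of_eq h)
  have h1 : c i * (i - 1) = 1 := by omega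
  have hi0 : i - 1 ≠ 0 := by
    intro h0
    rw [h0, mul_zero] at h1
    omega
  have hi1 : i - 1 ≤ 1 := by
    have hcm : (i - 1) * c i = 1 := by rw [mul_comm]; exact h1
    exact Nat.le_of_dvd one_pos ⟨c i, hcm.symm⟩
  have hieq : i = 2 := by
    have : 1 ≤ i := (Finset.mem_Icc.mp hi).1
    omega
  rw [hieq, h2] at h1
  omega

lemma keyD (m₁ d k₁ k₂ t₂ : ℕ) (hm : 2 ≤ m₁) (hd : 0 < d) (hg : Nat.gcd m₁ d = 1)
    (heq : k₁ * m₁ + d = k₂ * m₁ + t₂ * d) (ht : t₂ ≠ 1) :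
    ∃ j, 1 ≤ j ∧ k₂ + j * d = k₁ ∧ t₂ = 1 + j * m₁ := by
  have hcop : Nat.Coprime d m₁ := (Nat.coprime_iff_gcd_eq_one.mpr hg).symm
  have hk : k₂ < k₁ := by
    rcases Nat.lt_or_ge k₂ k₁ with h | h
    · exact h
    · exfalso
      rcases Nat.eq_zero_or_pos t₂ with h0 | hpos
      · subst h0
        have hdvd : m₁ ∣ d := by
          have h1 : (k₂ - k₁) * m₁ = d := by
            have h2 := Nat.sub_mul k₂ k₁ m₁
            have h3 : k₁ * m₁ ≤ k₂ * m₁ := Nat.mul_le_mul h (le_refl m₁)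
            omega
          exact ⟨k₂ - k₁, by rw [← h1]; ring⟩
        have hB : m₁ ∣ 1 := hg ▸ Nat.dvd_gcd (dvd_refl m₁) hdvd
        have := Nat.le_of_dvd one_pos hB
        omega
      · have hA : k₁ * m₁ ≤ k₂ * m₁ := Nat.mul_le_mul h (le_refl m₁)
        have hB : 1 * d ≤ t₂ * d := Nat.mul_le_mul hpos (le_refl d)
        have ht2 : t₂ * d = 1 * d := by omega
        exact ht (Nat.eq_of_mul_eq_mul_right hd ht2)
  have ht1 : 1 ≤ t₂ := by
    rcases Nat.eq_zero_or_pos t₂ with h0 | hpos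
    · exfalso
      subst h0
      have := Nat.mul_le_mul (le_of_lt hk) (le_refl m₁)
      omega
    · exact hpos
  have heq2 : (k₁ - k₂) * m₁ = (t₂ - 1) * d := by
    have h1 := Nat.sub_mul k₁ k₂ m₁
    have h2 := Nat.sub_mul t₂ 1 d
    have h3 : k₂ * m₁ ≤ k₁ * m₁ := Nat.mul_le_mul (le_of_lt hk) (le_refl m₁)
    have h4 : 1 * d ≤ t₂ * d := Nat.mul_le_mul ht1 (le_refl d)
    omega
  have hdvd : d ∣ (k₁ - k₂) := by
    have : d ∣ (k₁ - k₂) * m₁ := ⟨t₂ - 1, by rw [heq2]; ring⟩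
    exact hcop.dvd_of_dvd_mul_right this
  obtain ⟨j, hj⟩ := hdvd
  have hb : d * j = j * d := mul_comm _ _
  have hj1 : 1 ≤ j := by
    rcases Nat.eq_zero_or_pos j with h0 | hpos
    · subst h0; omega
    · exact hpos
  refine ⟨j, hj1, by omega, ?_⟩
  have h5 : (t₂ - 1) * d = j * m₁ * d := by
    rw [← heq2, hj]; ring
  have h6 : t₂ - 1 = j * m₁ := Nat.eq_of_mul_eq_mul_right hd h5
  omega

lemma icc_split (n : ℕ) : Finset.Icc 1 (n + 1) = insert (n + 1) (Finset.Icc 1 n) := by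
  ext i
  simp only [Finset.mem_Icc, Finset.mem_insert]
  omega

lemma sum_fst (n m₁ d : ℕ) (m : ℕ → ℕ) (hm : ∀ i, m i = m₁ + (i - 1) * d)
    (a : ℕ → ℕ × ℕ) (ha : ∀ i, a i = if i = n + 1 then (0, m n) else (m i, m n - m i))
    (c : ℕ → ℕ) :
    (∑ i ∈ Finset.Icc 1 (n + 1), c i • a i).1
      = (∑ i ∈ Finset.Icc 1 n, c i) * m₁ + (∑ i ∈ Finset.Icc 1 n, c i * (i - 1)) * d := by
  rw [icc_split, Finset.sum_insert (by simp)]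
  rw [Prod.fst_add, Prod.fst_sum]
  have h1 : (c (n + 1) • a (n + 1)).1 = 0 := by
    rw [ha (n + 1), if_pos rfl]
    simp
  rw [h1, zero_add]
  have h2 : ∀ i ∈ Finset.Icc 1 n, (c i • a i).1 = c i * m₁ + c i * (i - 1) * d := by
    intro i hi
    have hin : i ≠ n + 1 := by
      have := (Finset.mem_Icc.mp hi).2
      omega
    rw [ha i, if_neg hin]
    have : (c i • (m i, m n - m i)).1 = c i * m i := by
      simp [smul_eq_mul]
    rw [this, hm i]
    ring
  rw [Finset.sum_congr rfl h2, Finset.sum_add_distrib, ← Finset.sum_mul, ← Finset.sum_mul]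

lemma sum_tot (n m₁ d : ℕ) (hn : 4 ≤ n) (m : ℕ → ℕ) (hm : ∀ i, m i = m₁ + (i - 1) * d)
    (a : ℕ → ℕ × ℕ) (ha : ∀ i, a i = if i = n + 1 then (0, m n) else (m i, m n - m i))
    (c : ℕ → ℕ) :
    (∑ i ∈ Finset.Icc 1 (n + 1), c i • a i).1 + (∑ i ∈ Finset.Icc 1 (n + 1), c i • a i).2
      = (∑ i ∈ Finset.Icc 1 (n + 1), c i) * (m₁ + (n - 1) * d) := by
  rw [Prod.fst_sum, Prod.snd_sum, ← Finset.sum_add_distrib, Finset.sum_mul]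
  refine Finset.sum_congr rfl ?_
  intro i hi
  have hmn : m n = m₁ + (n - 1) * d := hm n
  rcases eq_or_ne i (n + 1) with h | h
  · rw [h, ha (n + 1), if_pos rfl]
    simp [smul_eq_mul, hmn]
  · rw [ha i, if_neg h]
    have hile : i ≤ n := by
      have := (Finset.mem_Icc.mp hi).2
      omega
    have hmi : m i ≤ m n := by
      rw [hm i, hm n]
      have : (i - 1) * d ≤ (n - 1) * d := Nat.mul_le_mul (by omega) (le_refl d)
      omega
    have hsub : m i + (m n - m i) = m n := Nat.add_sub_cancel' hmi
    have : (c i • (m i, m n - m i)) = (c i * m i, c i * (m n - m i)) := by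
      simp [smul_eq_mul]
    rw [this]
    simp only
    rw [← Nat.mul_add, hsub, hmn]

lemma memP2 (n m₁ d : ℕ) (hn : 4 ≤ n) (m : ℕ → ℕ) (hm : ∀ i, m i = m₁ + (i - 1) * d)
    (a : ℕ → ℕ × ℕ) (ha : ∀ i, a i = if i = n + 1 then (0, m n) else (m i, m n - m i))
    (k t lam : ℕ) (ht : t ≤ k * (n - 1)) (ht1 : t ≠ 1) (x : ℕ × ℕ)
    (hx1 : x.1 = k * m₁ + t * d)
    (hxs : x.1 + x.2 = (k + lam) * (m₁ + (n - 1) * d)) :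
    x ∈ AddSubmonoid.closure (a '' (Set.Icc 1 (n + 1) \ {2})) := by
  obtain ⟨c, h2, hsupp, hsum, hw⟩ := repC n k t hn ht ht1
  set c' : ℕ → ℕ := fun i => if i = n + 1 then lam else c i with hc'
  have hceq : ∀ i ∈ Finset.Icc 1 n, c' i = c i := by
    intro i hi
    have : i ≠ n + 1 := by have := (Finset.mem_Icc.mp hi).2; omega
    simp [hc', this]
  have hs1 : ∑ i ∈ Finset.Icc 1 n, c' i = k := by
    rw [Finset.sum_congr rfl hceq, hsum]
  have hs2 : ∑ i ∈ Finset.Icc 1 n, c' i * (i - 1) = t := by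
    rw [Finset.sum_congr rfl (fun i hi => by rw [hceq i hi]), hw]
  have key1 : (∑ i ∈ Finset.Icc 1 (n + 1), c' i • a i).1 = k * m₁ + t * d := by
    rw [sum_fst n m₁ d m hm a ha c', hs1, hs2]
  have hstot : ∑ i ∈ Finset.Icc 1 (n + 1), c' i = k + lam := by
    rw [icc_split, Finset.sum_insert (by simp), hs1]
    simp only [hc', if_pos rfl]
    omega
  have key2 : (∑ i ∈ Finset.Icc 1 (n + 1), c' i • a i).1
      + (∑ i ∈ Finset.Icc 1 (n + 1), c' i • a i).2 = (k + lam) * (m₁ + (n - 1) * d) := by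
    rw [sum_tot n m₁ d hn m hm a ha c', hstot]
  have hxeq : x = ∑ i ∈ Finset.Icc 1 (n + 1), c' i • a i := by
    rw [Prod.ext_iff]
    constructor
    · omega
    · omega
  rw [hxeq]
  apply AddSubmonoid.sum_mem
  intro i hi
  rcases Nat.eq_zero_or_pos (c' i) with h0 | hpos
  · rw [h0, zero_smul]
    exact AddSubmonoid.zero_mem _
  · refine AddSubmonoid.nsmul_mem _ (AddSubmonoid.subset_closure ?_) _
    refine ⟨i, ⟨?_, ?_⟩, rfl⟩
    · rw [Set.mem_Icc]
      have := Finset.mem_Icc.mp hi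
      omega
    · intro hmem
      have hi2 : i = 2 := hmem
      have : c' 2 = 0 := by simp [hc', show (2:ℕ) ≠ n + 1 by omega, h2]
      rw [hi2] at hpos
      omega

lemma extractC (n m₁ d : ℕ) (hn : 4 ≤ n) (m : ℕ → ℕ) (hm : ∀ i, m i = m₁ + (i - 1) * d)
    (a : ℕ → ℕ × ℕ) (ha : ∀ i, a i = if i = n + 1 then (0, m n) else (m i, m n - m i))
    (x : ℕ × ℕ) (c : ℕ → ℕ) (hx : x = ∑ i ∈ Finset.Icc 1 (n + 1), c i • a i) :
    ∃ k t lam : ℕ, t ≤ k * (n - 1) ∧ x.1 = k * m₁ + t * d ∧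
      x.1 + x.2 = (k + lam) * (m₁ + (n - 1) * d) ∧ (c 2 = 0 → t ≠ 1) := by
  refine ⟨∑ i ∈ Finset.Icc 1 n, c i, ∑ i ∈ Finset.Icc 1 n, c i * (i - 1), c (n + 1),
    ?_, ?_, ?_, ?_⟩
  · rw [Finset.sum_mul]
    refine Finset.sum_le_sum ?_
    intro i hi
    have := (Finset.mem_Icc.mp hi).2
    exact Nat.mul_le_mul (le_refl (c i)) (by omega)
  · rw [hx, sum_fst n m₁ d m hm a ha c]
  · rw [hx, sum_tot n m₁ d hn m hm a ha c, icc_split, Finset.sum_insert (by simp)]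
    ring_nf
  · intro h2
    exact t_ne_one n c h2

/-- For the projective monomial curve associated to an arithmetic
sequence with `m_1 ≥ 2`, `S \ P_2 = {μ·a_1 + a_2 + λ·a_{n+1} : 0 ≤ μ ≤ q+d-1+ε, λ ∈ ℕ}`,
where `ε = 1` if `l = n-1` and `ε = 0` otherwise (here `μ ≤ q+d-1+ε` is written
`μ < q+d+ε`). -/
theorem stmt_8 (n m₁ d : ℕ) (hn : 4 ≤ n) (hm₁ : 2 ≤ m₁) (hd : 0 < d)
    (hgcd : Nat.gcd m₁ d = 1)
    (m : ℕ → ℕ) (hm : ∀ i, m i = m₁ + (i - 1) * d)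
    (a : ℕ → ℕ × ℕ)
    (ha : ∀ i, a i = if i = n + 1 then (0, m n) else (m i, m n - m i))
    (S : AddSubmonoid (ℕ × ℕ))
    (hS : S = AddSubmonoid.closure (a '' Set.Icc 1 (n + 1)))
    (P₂ : AddSubmonoid (ℕ × ℕ))
    (hP₂ : P₂ = AddSubmonoid.closure (a '' (Set.Icc 1 (n + 1) \ {2})))
    (q l ε : ℕ) (hq : q = (m₁ - 1) / (n - 1)) (hl : l = m₁ - q * (n - 1))
    (hε : ε = if l = n - 1 then 1 else 0) :
    (S : Set (ℕ × ℕ)) \ (P₂ : Set (ℕ × ℕ)) =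
      {x | ∃ μ lam : ℕ, μ < q + d + ε ∧ x = μ • a 1 + a 2 + lam • a (n + 1)} := by
  -- arithmetic facts about q, l, ε
  have hn1 : 0 < n - 1 := by omega
  have hdm : (n - 1) * q + (m₁ - 1) % (n - 1) = m₁ - 1 := by
    rw [hq]; exact Nat.div_add_mod _ _
  have hrlt : (m₁ - 1) % (n - 1) < n - 1 := Nat.mod_lt _ hn1
  have hql : q * (n - 1) = (n - 1) * q := mul_comm _ _
  have hlr : l = (m₁ - 1) % (n - 1) + 1 := by omega
  have hε01 : (ε = 0 ∧ l ≠ n - 1) ∨ (ε = 1 ∧ l = n - 1) := by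
    rw [hε]; split_ifs with h
    · right; exact ⟨rfl, h⟩
    · left; exact ⟨rfl, h⟩
  have hbound1 : (q + ε) * (n - 1) ≤ m₁ := by
    rcases hε01 with ⟨h0, hl0⟩ | ⟨h1, hl1⟩
    · subst h0
      have e1 : (q + 0) * (n - 1) = q * (n - 1) := by ring
      omega
    · subst h1
      have e1 : (q + 1) * (n - 1) = q * (n - 1) + (n - 1) := by ring
      omega
  have hbound2 : m₁ + 1 ≤ (q + ε + 1) * (n - 1) := by
    rcases hε01 with ⟨h0, hl0⟩ | ⟨h1, hl1⟩
    · subst h0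
      have e1 : (q + 0 + 1) * (n - 1) = q * (n - 1) + (n - 1) := by ring
      omega
    · subst h1
      have e1 : (q + 1 + 1) * (n - 1) = q * (n - 1) + 2 * (n - 1) := by ring
      omega
  -- basic values
  have hm1v : m 1 = m₁ := by rw [hm 1]; omega
  have hm2v : m 2 = m₁ + d := by rw [hm 2]; omega
  have hmnv : m n = m₁ + (n - 1) * d := hm n
  have ha1 : a 1 = (m₁, m n - m₁) := by rw [ha 1, if_neg (by omega), hm1v]
  have ha2 : a 2 = (m₁ + d, m n - (m₁ + d)) := by rw [ha 2, if_neg (by omega), hm2v]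
  have han1 : a (n + 1) = (0, m n) := by rw [ha (n + 1), if_pos rfl]
  have hdn : d ≤ (n - 1) * d := Nat.le_mul_of_pos_left d (by omega)
  ext x
  simp only [Set.mem_diff, SetLike.mem_coe, Set.mem_setOf_eq]
  constructor
  · rintro ⟨hxS, hxP⟩
    rw [hS, ← Finset.coe_Icc] at hxS
    obtain ⟨c, hxc⟩ := (mem_closure_iff_sum a (Finset.Icc 1 (n + 1)) x).mp hxS
    obtain ⟨k, t, lam, ht, hx1, hxs, -⟩ := extractC n m₁ d hn m hm a ha x c hxc
    rw [hP₂] at hxP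
    have ht1 : t = 1 := by
      by_contra h
      exact hxP (memP2 n m₁ d hn m hm a ha k t lam ht h x hx1 hxs)
    subst ht1
    have hk1 : 1 ≤ k := by
      rcases Nat.eq_zero_or_pos k with h0 | h; · subst h0; omega
      · exact h
    refine ⟨k - 1, lam, ?_, ?_⟩
    · by_contra hcon
      push_neg at hcon
      have hkbig : q + d + ε + 1 ≤ k := by omega
      apply hxP
      have harg1 : 1 + m₁ ≤ (k - d) * (n - 1) := by
        have h1 : (q + ε + 1) * (n - 1) ≤ (k - d) * (n - 1) :=
          Nat.mul_le_mul (by omega) (le_refl (n - 1))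
        omega
      have harg2 : x.1 = (k - d) * m₁ + (1 + m₁) * d := by
        have e1 : (k - d) * m₁ = k * m₁ - d * m₁ := Nat.sub_mul _ _ _
        have e2 : (1 + m₁) * d = d + m₁ * d := by ring
        have e3 : d * m₁ = m₁ * d := mul_comm _ _
        have e4 : d * m₁ ≤ k * m₁ := Nat.mul_le_mul (by omega) (le_refl m₁)
        omega
      have harg3 : x.1 + x.2 = (k - d + (lam + d)) * (m₁ + (n - 1) * d) := by
        rw [show k - d + (lam + d) = k + lam by omega]
        exact hxs
      exact memP2 n m₁ d hn m hm a ha (k - d) (1 + m₁) (lam + d) harg1 (by omega) x harg2 harg3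
    · -- x = (k-1) • a 1 + a 2 + lam • a (n+1)
      rw [ha1, ha2, han1, Prod.smul_mk, Prod.smul_mk, Prod.mk_add_mk, Prod.mk_add_mk]
      simp only [smul_eq_mul, mul_zero]
      rw [Prod.ext_iff]
      simp only
      have hmn1 : m₁ ≤ m n := by omega
      have hmn2 : m₁ + d ≤ m n := by omega
      have B1 : (k - 1) * (m n - m₁) + (k - 1) * m₁ = (k - 1) * (m n) := by
        rw [← Nat.mul_add, Nat.sub_add_cancel hmn1]
      have B2 : (k - 1) * (m n) + m n = k * m n := by
        have e : (k - 1 + 1) * m n = (k - 1) * m n + 1 * m n := add_mul _ _ _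
        rw [show k - 1 + 1 = k by omega] at e
        omega
      have B3 : (k - 1) * m₁ + m₁ = k * m₁ := by
        have e : (k - 1 + 1) * m₁ = (k - 1) * m₁ + 1 * m₁ := add_mul _ _ _
        rw [show k - 1 + 1 = k by omega] at e
        omega
      have B4 : (k + lam) * (m₁ + (n - 1) * d) = k * (m n) + lam * (m n) := by
        rw [← hmnv]; ring
      constructor
      · omega
      · omega
  · rintro ⟨μ, lam, hμ, rfl⟩
    set x := μ • a 1 + a 2 + lam • a (n + 1) with hx
    have hxval : x = (μ * m₁ + (m₁ + d), μ * (m n - m₁) + (m n - (m₁ + d)) + lam * m n) := by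
      rw [hx, ha1, ha2, han1, Prod.smul_mk, Prod.smul_mk, Prod.mk_add_mk, Prod.mk_add_mk]
      simp [smul_eq_mul]
    constructor
    · rw [hS]
      refine AddSubmonoid.add_mem _ (AddSubmonoid.add_mem _ ?_ ?_) ?_
      · exact AddSubmonoid.nsmul_mem _ (AddSubmonoid.subset_closure
          (Set.mem_image_of_mem a (by rw [Set.mem_Icc]; omega))) _
      · exact AddSubmonoid.subset_closure
          (Set.mem_image_of_mem a (by rw [Set.mem_Icc]; omega))
      · exact AddSubmonoid.nsmul_mem _ (AddSubmonoid.subset_closure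
          (Set.mem_image_of_mem a (by rw [Set.mem_Icc]; omega))) _
    · intro hxP
      rw [hP₂] at hxP
      have hcoe : a '' (Set.Icc 1 (n + 1) \ {2})
          = a '' ↑(Finset.Icc 1 (n + 1) \ {2}) := by
        rw [Finset.coe_sdiff, Finset.coe_Icc, Finset.coe_singleton]
      rw [hcoe] at hxP
      obtain ⟨c, hxc⟩ := (mem_closure_iff_sum a (Finset.Icc 1 (n + 1) \ {2}) x).mp hxP
      set c2 : ℕ → ℕ := fun i => if i = 2 then 0 else c i with hc2
      have step1 : ∑ i ∈ Finset.Icc 1 (n + 1) \ {2}, c i • a i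
          = ∑ i ∈ Finset.Icc 1 (n + 1) \ {2}, c2 i • a i := by
        refine Finset.sum_congr rfl ?_
        intro i hi
        have hne : i ≠ 2 := by
          have := (Finset.mem_sdiff.mp hi).2
          simpa using this
        simp [hc2, hne]
      have step2 : ∑ i ∈ Finset.Icc 1 (n + 1) \ {2}, c2 i • a i
          = ∑ i ∈ Finset.Icc 1 (n + 1), c2 i • a i := by
        refine Finset.sum_subset Finset.sdiff_subset ?_
        intro i hiF hiG
        have hi2 : i = 2 := by
          by_contra hne
          exact hiG (Finset.mem_sdiff.mpr ⟨hiF, by simpa using hne⟩)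
        rw [hi2]
        simp [hc2]
      have hxc2 : x = ∑ i ∈ Finset.Icc 1 (n + 1), c2 i • a i := by
        rw [hxc, step1, step2]
      obtain ⟨k₂, t₂, lam₂, ht₂, hx1₂, -, hne1⟩ := extractC n m₁ d hn m hm a ha x c2 hxc2
      have ht₂1 : t₂ ≠ 1 := hne1 (by simp [hc2])
      have hx1v : x.1 = (μ + 1) * m₁ + d := by
        rw [hxval]
        simp only
        have : (μ + 1) * m₁ = μ * m₁ + 1 * m₁ := add_mul _ _ _
        omega
      have heq : (μ + 1) * m₁ + d = k₂ * m₁ + t₂ * d := by omega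
      obtain ⟨j, hj1, hjk, hjt⟩ := keyD m₁ d (μ + 1) k₂ t₂ hm₁ hd hgcd heq ht₂1
      have hjd : 1 * d ≤ j * d := Nat.mul_le_mul hj1 (le_refl d)
      have hjm : 1 * m₁ ≤ j * m₁ := Nat.mul_le_mul hj1 (le_refl m₁)
      have hk2 : k₂ ≤ q + ε := by omega
      have hmul : k₂ * (n - 1) ≤ (q + ε) * (n - 1) := Nat.mul_le_mul hk2 (le_refl (n - 1))
      omega
end

section
/- Suppose m_1 = 1 (so 2 > m_1). Then S \ P_2 = {μ·a_1 + a_2 + λ·a_{n+1} : 0 ≤ μ ≤ d − 1 and 0 ≤ λ ≤ d − 1}. -/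
lemma stmt9_aux_rep (e d : ℕ) (P : AddSubmonoid (ℕ × ℕ))
    (h1 : ((1 : ℕ), (e + 3) * d) ∈ P)
    (hj : ∀ j, 3 ≤ j → j ≤ e + 4 → ((1 + (j - 1) * d : ℕ), (e + 4 - j) * d) ∈ P) :
    ∀ s k : ℕ, (s = 0 ∨ (2 ≤ s ∧ s ≤ k * (e + 3))) →
      ∃ y : ℕ × ℕ, y ∈ P ∧ y.1 = k + s * d ∧ y.1 + y.2 = k * (1 + (e + 3) * d) := by
  intro s
  induction s using Nat.strong_induction_on with
  | _ s IH =>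
    intro k hcond
    rcases hcond with rfl | ⟨hs2, hsk⟩
    · refine ⟨k • ((1 : ℕ), (e + 3) * d), nsmul_mem h1 k, ?_, ?_⟩
      · simp [smul_eq_mul]
      · simp [smul_eq_mul]; ring
    · rcases k with _ | k'
      · omega
      by_cases hsmall : s ≤ e + 3
      · obtain ⟨u, hu⟩ : ∃ u, e + 3 = s + u := ⟨e + 3 - s, by omega⟩
        refine ⟨k' • ((1 : ℕ), (e + 3) * d) + (1 + ((s + 1) - 1) * d, (e + 4 - (s + 1)) * d),
          add_mem (nsmul_mem h1 k') (hj (s + 1) (by omega) (by omega)), ?_, ?_⟩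
        · simp [smul_eq_mul]; ring
        · have h4 : e + 4 - (s + 1) = u := by omega
          simp only [Prod.fst_add, Prod.snd_add, Prod.smul_mk, smul_eq_mul, h4,
            Nat.add_sub_cancel]
          rw [show e + 3 = s + u from hu]
          ring
      · by_cases hs : s = e + 4
        · subst hs
          rcases k' with _ | k''
          · omega
          obtain ⟨y', hy'P, hy'1, hy'sum⟩ := IH 2 (by omega) (k'' + 1)
            (Or.inr ⟨le_refl 2, le_trans (by norm_num) (Nat.mul_le_mul (show 1 ≤ k'' + 1 by omega) (show 3 ≤ e + 3 by omega))⟩)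
          have hgen := hj (e + 3) (by omega) (by omega)
          have hg : ((1 + (e + 2) * d : ℕ), 1 * d) ∈ P := by
            have h1' : e + 3 - 1 = e + 2 := by omega
            have h2' : e + 4 - (e + 3) = 1 := by omega
            rwa [h1', h2'] at hgen
          refine ⟨(1 + (e + 2) * d, 1 * d) + y', add_mem hg hy'P, ?_, ?_⟩
          · simp only [Prod.fst_add]
            rw [hy'1]; ring
          · simp only [Prod.fst_add, Prod.snd_add]
            zify at hy'sum ⊢
            linear_combination hy'sum
        · obtain ⟨s', rfl⟩ : ∃ s', s = s' + (e + 3) := ⟨s - (e + 3), by omega⟩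
          have hs'2 : 2 ≤ s' := by omega
          have hexp : (k' + 1) * (e + 3) = k' * (e + 3) + (e + 3) := by ring
          have hs'k : s' ≤ k' * (e + 3) := by linarith
          obtain ⟨y', hy'P, hy'1, hy'sum⟩ := IH s' (by omega) k' (Or.inr ⟨hs'2, hs'k⟩)
          have hgen := hj (e + 4) (by omega) (by omega)
          have hg : ((1 + (e + 3) * d : ℕ), 0 * d) ∈ P := by
            have h1' : e + 4 - 1 = e + 3 := by omega
            have h2' : e + 4 - (e + 4) = 0 := by omega
            rwa [h1', h2'] at hgen
          refine ⟨(1 + (e + 3) * d, 0 * d) + y', add_mem hg hy'P, ?_, ?_⟩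
          · simp only [Prod.fst_add]
            rw [hy'1]; ring
          · simp only [Prod.fst_add, Prod.snd_add]
            zify at hy'sum ⊢
            linear_combination hy'sum

/-- For the projective monomial curve associated to an arithmetic
sequence with `m_1 = 1`, `S \ P_2 = {μ·a_1 + a_2 + λ·a_{n+1} : 0 ≤ μ ≤ d-1, 0 ≤ λ ≤ d-1}`
(written with `μ < d`, `λ < d`). -/
theorem stmt_9 (n m₁ d : ℕ) (hn : 4 ≤ n) (hm₁ : m₁ = 1) (hd : 0 < d)
    (hgcd : Nat.gcd m₁ d = 1)
    (m : ℕ → ℕ) (hm : ∀ i, m i = m₁ + (i - 1) * d)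
    (a : ℕ → ℕ × ℕ)
    (ha : ∀ i, a i = if i = n + 1 then (0, m n) else (m i, m n - m i))
    (S : AddSubmonoid (ℕ × ℕ))
    (hS : S = AddSubmonoid.closure (a '' Set.Icc 1 (n + 1)))
    (P₂ : AddSubmonoid (ℕ × ℕ))
    (hP₂ : P₂ = AddSubmonoid.closure (a '' (Set.Icc 1 (n + 1) \ {2}))) :
    (S : Set (ℕ × ℕ)) \ (P₂ : Set (ℕ × ℕ)) =
      {x | ∃ μ lam : ℕ, μ < d ∧ lam < d ∧ x = μ • a 1 + a 2 + lam • a (n + 1)} := by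
  subst hm₁
  obtain ⟨e, rfl⟩ : ∃ e, n = e + 4 := ⟨n - 4, by omega⟩
  have hai : ∀ i, 1 ≤ i → i ≤ e + 4 → a i = (1 + (i - 1) * d, (e + 4 - i) * d) := by
    intro i h1 h2
    rw [ha i, if_neg (by omega)]
    have hmn : m (e + 4) = 1 + (e + 3) * d := by
      rw [hm, show e + 4 - 1 = e + 3 from by omega]
    have hmi : m i = 1 + (i - 1) * d := hm i
    rw [hmn, hmi]
    congr 1
    have : (i - 1) * d + (e + 4 - i) * d = (e + 3) * d := by
      rw [← Nat.add_mul]; congr 1; omega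
    omega
  have ha1 : a 1 = (1, (e + 3) * d) := by
    rw [hai 1 (by omega) (by omega)]; norm_num
  have ha2 : a 2 = (1 + d, (e + 2) * d) := by
    rw [hai 2 (by omega) (by omega), show 2 - 1 = 1 from rfl,
      show e + 4 - 2 = e + 2 from by omega, one_mul]
  have han1 : a (e + 4 + 1) = (0, 1 + (e + 3) * d) := by
    rw [ha, if_pos rfl, hm, show e + 4 - 1 = e + 3 from by omega]
  have memS : ∀ i, 1 ≤ i → i ≤ e + 5 → a i ∈ S := by
    intro i h1 h2
    rw [hS]
    exact AddSubmonoid.subset_closure ⟨i, ⟨h1, by omega⟩, rfl⟩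
  have memP : ∀ i, 1 ≤ i → i ≤ e + 5 → i ≠ 2 → a i ∈ P₂ := by
    intro i h1 h2 h3
    rw [hP₂]
    exact AddSubmonoid.subset_closure ⟨i, ⟨⟨h1, by omega⟩, h3⟩, rfl⟩
  have hP1 : ((1 : ℕ), (e + 3) * d) ∈ P₂ := ha1 ▸ memP 1 (by omega) (by omega) (by omega)
  have hPj : ∀ j, 3 ≤ j → j ≤ e + 4 → ((1 + (j - 1) * d : ℕ), (e + 4 - j) * d) ∈ P₂ := by
    intro j h1 h2
    exact hai j (by omega) h2 ▸ memP j (by omega) (by omega) (by omega)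
  have hPn1 : ((0 : ℕ), 1 + (e + 3) * d) ∈ P₂ :=
    han1 ▸ memP (e + 4 + 1) (by omega) (by omega) (by omega)
  have hQS : ∀ x : ℕ × ℕ, x ∈ S → ∃ t k s : ℕ,
      x.1 + x.2 = t * (1 + (e + 3) * d) ∧ k ≤ t ∧ x.1 = k + s * d ∧ s ≤ k * (e + 3) := by
    intro x hx
    rw [hS] at hx
    induction hx using AddSubmonoid.closure_induction with
    | mem y hy =>
      obtain ⟨i, hi, rfl⟩ := hy
      obtain ⟨hi1, hi2⟩ := hi
      by_cases hcase : i = e + 4 + 1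
      · subst hcase
        refine ⟨1, 0, 0, ?_, by omega, ?_, by omega⟩
        · rw [han1]; simp
        · rw [han1]; simp
      · have hie : i ≤ e + 4 := by omega
        refine ⟨1, 1, i - 1, ?_, le_refl 1, ?_, by omega⟩
        · rw [hai i hi1 hie]
          show 1 + (i - 1) * d + (e + 4 - i) * d = 1 * (1 + (e + 3) * d)
          have h : (i - 1) * d + (e + 4 - i) * d = (e + 3) * d := by
            rw [← Nat.add_mul]; congr 1; omega
          rw [one_mul, ← h]; ring
        · rw [hai i hi1 hie]
    | zero => exact ⟨0, 0, 0, by simp, le_refl 0, by simp, by simp⟩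
    | add x y hx hy ihx ihy =>
      obtain ⟨t1, k1, s1, hsum1, hkt1, hx1, hsk1⟩ := ihx
      obtain ⟨t2, k2, s2, hsum2, hkt2, hx2, hsk2⟩ := ihy
      refine ⟨t1 + t2, k1 + k2, s1 + s2, ?_, by omega, ?_, ?_⟩
      · simp only [Prod.fst_add, Prod.snd_add]
        rw [Nat.add_mul]
        linarith
      · simp only [Prod.fst_add]
        rw [hx1, hx2, Nat.add_mul]
        ring
      · rw [Nat.add_mul]
        exact Nat.add_le_add hsk1 hsk2
  have hQP : ∀ x : ℕ × ℕ, x ∈ P₂ → ∃ t k s : ℕ,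
      x.1 + x.2 = t * (1 + (e + 3) * d) ∧ k ≤ t ∧ x.1 = k + s * d ∧
        (s = 0 ∨ (2 ≤ s ∧ s ≤ k * (e + 3))) := by
    intro x hx
    rw [hP₂] at hx
    induction hx using AddSubmonoid.closure_induction with
    | mem y hy =>
      obtain ⟨i, hi, rfl⟩ := hy
      obtain ⟨⟨hi1, hi2⟩, hi3⟩ := hi
      simp only [Set.mem_singleton_iff] at hi3
      by_cases hcase : i = e + 4 + 1
      · subst hcase
        refine ⟨1, 0, 0, ?_, by omega, ?_, Or.inl rfl⟩
        · rw [han1]; simp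
        · rw [han1]; simp
      · have hie : i ≤ e + 4 := by omega
        refine ⟨1, 1, i - 1, ?_, le_refl 1, ?_, ?_⟩
        · rw [hai i hi1 hie]
          show 1 + (i - 1) * d + (e + 4 - i) * d = 1 * (1 + (e + 3) * d)
          have h : (i - 1) * d + (e + 4 - i) * d = (e + 3) * d := by
            rw [← Nat.add_mul]; congr 1; omega
          rw [one_mul, ← h]; ring
        · rw [hai i hi1 hie]
        · rcases Nat.eq_or_lt_of_le hi1 with h | h
          · exact Or.inl (by omega)
          · exact Or.inr ⟨by omega, by omega⟩
    | zero => exact ⟨0, 0, 0, by simp, le_refl 0, by simp, Or.inl rfl⟩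
    | add x y hx hy ihx ihy =>
      obtain ⟨t1, k1, s1, hsum1, hkt1, hx1, hc1⟩ := ihx
      obtain ⟨t2, k2, s2, hsum2, hkt2, hx2, hc2⟩ := ihy
      refine ⟨t1 + t2, k1 + k2, s1 + s2, ?_, by omega, ?_, ?_⟩
      · simp only [Prod.fst_add, Prod.snd_add]
        rw [Nat.add_mul]
        linarith
      · simp only [Prod.fst_add]
        rw [hx1, hx2, Nat.add_mul]
        ring
      · have hexp : (k1 + k2) * (e + 3) = k1 * (e + 3) + k2 * (e + 3) := by ring
        rcases hc1 with rfl | ⟨h21, h22⟩ <;> rcases hc2 with rfl | ⟨h23, h24⟩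
        · exact Or.inl rfl
        · exact Or.inr ⟨by omega, by rw [hexp]; exact Nat.add_le_add (Nat.zero_le _) h24⟩
        · exact Or.inr ⟨by omega, by rw [hexp]; exact Nat.add_le_add h22 (Nat.zero_le _)⟩
        · exact Or.inr ⟨by omega, by rw [hexp]; exact Nat.add_le_add h22 h24⟩
  have AP := stmt9_aux_rep e d P₂ hP1 hPj
  ext x
  simp only [Set.mem_diff, SetLike.mem_coe, Set.mem_setOf_eq]
  constructor
  · rintro ⟨hxS, hxP⟩
    obtain ⟨t, k, s, hsum, hkt, hx1, hsle⟩ := hQS x hxS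
    have hmem : ∀ k' s', (s' = 0 ∨ (2 ≤ s' ∧ s' ≤ k' * (e + 3))) → k' ≤ t →
        k' + s' * d = x.1 → x ∈ P₂ := by
      intro k' s' hc hk't hx1'
      obtain ⟨y, hyP, hy1, hysum⟩ := AP s' k' hc
      obtain ⟨lam, rfl⟩ : ∃ lam, t = k' + lam := ⟨t - k', by omega⟩
      have hxy1 : x.1 = y.1 := by rw [hy1, hx1']
      have hx2 : x.2 = y.2 + lam * (1 + (e + 3) * d) := by
        zify at hsum hysum hxy1 ⊢
        linear_combination hsum - hysum - hxy1
      have hxeq : x = y + lam • ((0 : ℕ), 1 + (e + 3) * d) := by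
        apply Prod.ext
        · simp [hxy1, smul_eq_mul]
        · simp [hx2, smul_eq_mul]
      rw [hxeq]
      exact add_mem hyP (nsmul_mem hPn1 lam)
    have hs1 : s = 1 := by
      rcases s with _ | _ | s''
      · exact absurd (hmem k 0 (Or.inl rfl) hkt hx1.symm) hxP
      · rfl
      · exact absurd (hmem k (s'' + 2) (Or.inr ⟨by omega, hsle⟩) hkt hx1.symm) hxP
    subst hs1
    have hk1 : 1 ≤ k := by
      rcases k with _ | k
      · omega
      · omega
    have hkd : k ≤ d := by
      by_contra hkd
      push_neg at hkd
      obtain ⟨k'', rfl⟩ : ∃ k'', k = d + k'' + 1 := ⟨k - d - 1, by omega⟩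
      exact absurd (hmem (k'' + 1) 2
        (Or.inr ⟨le_refl 2, le_trans (by norm_num)
          (Nat.mul_le_mul (show 1 ≤ k'' + 1 by omega) (show 3 ≤ e + 3 by omega))⟩)
        (by omega) (by omega)) hxP
    have htlt : t < k + d := by
      by_contra ht
      push_neg at ht
      exact absurd (hmem x.1 0 (Or.inl rfl) (by omega) (by omega)) hxP
    obtain ⟨μ, rfl⟩ : ∃ μ, k = μ + 1 := ⟨k - 1, by omega⟩
    obtain ⟨lam, rfl⟩ : ∃ lam, t = (μ + 1) + lam := ⟨t - (μ + 1), by omega⟩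
    refine ⟨μ, lam, by omega, by omega, ?_⟩
    rw [ha1, ha2, han1]
    apply Prod.ext
    · simp only [Prod.fst_add, Prod.smul_mk, smul_eq_mul, mul_one, mul_zero]
      omega
    · simp only [Prod.snd_add, Prod.smul_mk, smul_eq_mul]
      zify at hsum hx1 ⊢
      linear_combination hsum - hx1
  · rintro ⟨μ, lam, hμ, hlam, rfl⟩
    constructor
    · exact add_mem (add_mem (nsmul_mem (memS 1 (by omega) (by omega)) μ)
        (memS 2 (by omega) (by omega))) (nsmul_mem (memS (e + 4 + 1) (by omega) (by omega)) lam)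
    · intro hxP
      obtain ⟨t, k, s, hsum, hkt, hx1, hc⟩ := hQP _ hxP
      rw [ha1, ha2, han1] at hsum hx1
      simp only [Prod.fst_add, Prod.snd_add, Prod.smul_mk, smul_eq_mul, mul_one, mul_zero,
        add_zero] at hsum hx1
      have ht : t = μ + 1 + lam := by
        have h2 : (μ + 1 + lam) * (1 + (e + 3) * d) = t * (1 + (e + 3) * d) := by
          rw [← hsum]; ring
        exact (Nat.eq_of_mul_eq_mul_right (by omega) h2).symm
      rcases hc with rfl | ⟨hs2, hsk⟩
      · omega
      · obtain ⟨s'', rfl⟩ : ∃ s'', s = s'' + 2 := ⟨s - 2, by omega⟩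
        have hexp : (s'' + 2) * d = s'' * d + 2 * d := by ring
        rw [hexp] at hx1
        have hk0 : k = 0 := by
          generalize s'' * d = A at hx1
          omega
        subst hk0
        omega
end

section
/- Suppose 3 ≤ r ≤ n − 2 and r ≤ m_1. Then S \ P_r = {a_r + λ·a_{n+1} : λ ∈ ℕ}. -/
/-- For the projective monomial curve associated to an arithmetic
sequence, if `3 ≤ r ≤ n-2` and `r ≤ m_1`, then `S \ P_r = {a_r + λ·a_{n+1} : λ ∈ ℕ}`. -/
theorem stmt_10 (n m₁ d : ℕ) (hn : 4 ≤ n) (hm₁ : 0 < m₁) (hd : 0 < d)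
    (hgcd : Nat.gcd m₁ d = 1)
    (m : ℕ → ℕ) (hm : ∀ i, m i = m₁ + (i - 1) * d)
    (a : ℕ → ℕ × ℕ)
    (ha : ∀ i, a i = if i = n + 1 then (0, m n) else (m i, m n - m i))
    (S : AddSubmonoid (ℕ × ℕ))
    (hS : S = AddSubmonoid.closure (a '' Set.Icc 1 (n + 1)))
    (r : ℕ) (hr₁ : 3 ≤ r) (hr₂ : r ≤ n - 2) (hrm : r ≤ m₁)
    (P : AddSubmonoid (ℕ × ℕ))
    (hP : P = AddSubmonoid.closure (a '' (Set.Icc 1 (n + 1) \ {r}))) :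
    (S : Set (ℕ × ℕ)) \ (P : Set (ℕ × ℕ)) =
      {x | ∃ lam : ℕ, x = a r + lam • a (n + 1)} := by
  subst hS hP
  have hrn : r ≤ n - 2 := hr₂
  -- basic values
  have hav : ∀ i, i ≤ n → a i = (m i, m n - m i) := by
    intro i h
    rw [ha i, if_neg (by omega)]
  have havtop : a (n + 1) = (0, m n) := by rw [ha, if_pos rfl]
  have hmono : ∀ i, i ≤ n → m i ≤ m n := by
    intro i h
    rw [hm i, hm n]
    have h3 : i - 1 ≤ n - 1 := by omega
    exact Nat.add_le_add_left (Nat.mul_le_mul_right d h3) m₁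
  -- the exchange identity
  have hswap : ∀ i j p q : ℕ, 1 ≤ i → i ≤ n → 1 ≤ j → j ≤ n → 1 ≤ p → p ≤ n → 1 ≤ q → q ≤ n →
      i + j = p + q → a i + a j = a p + a q := by
    intro i j p q hi1 hi2 hj1 hj2 hp1 hp2 hq1 hq2 hsum
    have e1 : (i - 1) + (j - 1) = (p - 1) + (q - 1) := by omega
    have efst : m i + m j = m p + m q := by
      rw [hm i, hm j, hm p, hm q]
      have e2 := congrArg (· * d) e1
      simp only [add_mul] at e2
      linarith
    have l1 := hmono i hi2
    have l2 := hmono j hj2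
    have l3 := hmono p hp2
    have l4 := hmono q hq2
    rw [hav i hi2, hav j hj2, hav p hp2, hav q hq2]
    simp only [Prod.mk_add_mk, Prod.mk.injEq]
    exact ⟨efst, by omega⟩
  -- generators
  have haS : ∀ i, 1 ≤ i → i ≤ n + 1 →
      a i ∈ AddSubmonoid.closure (a '' Set.Icc 1 (n + 1)) := by
    intro i h1 h2
    exact AddSubmonoid.subset_closure ⟨i, Set.mem_Icc.mpr ⟨h1, h2⟩, rfl⟩
  have haP : ∀ i, 1 ≤ i → i ≤ n + 1 → i ≠ r →
      a i ∈ AddSubmonoid.closure (a '' (Set.Icc 1 (n + 1) \ {r})) := by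
    intro i h1 h2 h3
    exact AddSubmonoid.subset_closure ⟨i, ⟨Set.mem_Icc.mpr ⟨h1, h2⟩, h3⟩, rfl⟩
  set P := AddSubmonoid.closure (a '' (Set.Icc 1 (n + 1) \ {r})) with hPdef
  set S := AddSubmonoid.closure (a '' Set.Icc 1 (n + 1)) with hSdef
  -- a_r + a_j ∈ P for j ∈ [1,n], j ≠ r
  have hpair : ∀ j, 1 ≤ j → j ≤ n → j ≠ r → a j + a r ∈ P := by
    intro j h1 h2 h3
    rcases lt_or_gt_of_ne h3 with hlt | hgt
    · rcases eq_or_lt_of_le h1 with h4 | h4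
      · -- j = 1 : a 1 + a r = a 2 + a (r-1)
        rw [hswap j r 2 (r - 1) h1 h2 (by omega) (by omega) (by omega) (by omega)
          (by omega) (by omega) (by omega)]
        exact add_mem (haP 2 (by omega) (by omega) (by omega))
          (haP (r - 1) (by omega) (by omega) (by omega))
      · -- 2 ≤ j < r : a j + a r = a (j-1) + a (r+1)
        rw [hswap j r (j - 1) (r + 1) h1 h2 (by omega) (by omega) (by omega) (by omega)
          (by omega) (by omega) (by omega)]
        exact add_mem (haP (j - 1) (by omega) (by omega) (by omega))
          (haP (r + 1) (by omega) (by omega) (by omega))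
    · rcases eq_or_lt_of_le h2 with h4 | h4
      · -- j = n : a n + a r = a (n-1) + a (r+1)
        rw [hswap j r (n - 1) (r + 1) h1 h2 (by omega) (by omega) (by omega) (by omega)
          (by omega) (by omega) (by omega)]
        exact add_mem (haP (n - 1) (by omega) (by omega) (by omega))
          (haP (r + 1) (by omega) (by omega) (by omega))
      · -- r < j < n : a j + a r = a (j+1) + a (r-1)
        rw [hswap j r (j + 1) (r - 1) h1 h2 (by omega) (by omega) (by omega) (by omega)
          (by omega) (by omega) (by omega)]
        exact add_mem (haP (j + 1) (by omega) (by omega) (by omega))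
          (haP (r - 1) (by omega) (by omega) (by omega))
  have h2ar : a r + a r = a (r - 1) + a (r + 1) :=
    hswap r r (r - 1) (r + 1) (by omega) (by omega) (by omega) (by omega) (by omega)
      (by omega) (by omega) (by omega) (by omega)
  -- sub-lemma about P
  have hPadd : ∀ p ∈ P, (∃ μ : ℕ, p = μ • a (n + 1)) ∨ p + a r ∈ P := by
    intro p hp
    induction hp using AddSubmonoid.closure_induction with
    | mem x hx =>
      obtain ⟨j, ⟨hj, hjr⟩, rfl⟩ := hx
      rw [Set.mem_Icc] at hj
      have hjr' : j ≠ r := hjr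
      rcases eq_or_lt_of_le hj.2 with h4 | h4
      · left; exact ⟨1, by rw [h4, one_smul]⟩
      · right; exact hpair j hj.1 (by omega) hjr'
    | zero => left; exact ⟨0, by simp⟩
    | add x y hx hy ihx ihy =>
      rcases ihx with ⟨μ1, rfl⟩ | hx'
      · rcases ihy with ⟨μ2, rfl⟩ | hy'
        · left; exact ⟨μ1 + μ2, by rw [add_smul]⟩
        · right
          have : μ1 • a (n + 1) + y + a r = μ1 • a (n + 1) + (y + a r) := by abel
          rw [this]
          exact add_mem (nsmul_mem (haP (n + 1) (by omega) (by omega) (by omega)) μ1) hy'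
      · right
        have : x + y + a r = (x + a r) + y := by abel
        rw [this]
        exact add_mem hx' hy
  -- main dichotomy
  have main : ∀ x ∈ S, x ∈ P ∨ ∃ lam : ℕ, x = a r + lam • a (n + 1) := by
    intro x hx
    induction hx using AddSubmonoid.closure_induction with
    | mem x hx =>
      obtain ⟨j, hj, rfl⟩ := hx
      rw [Set.mem_Icc] at hj
      by_cases hjr : j = r
      · right; exact ⟨0, by rw [hjr, zero_smul, add_zero]⟩
      · left; exact haP j hj.1 hj.2 hjr
    | zero => left; exact zero_mem P
    | add x y hx hy ihx ihy =>
      rcases ihx with hx' | ⟨lam, rfl⟩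
      · rcases ihy with hy' | ⟨mu, rfl⟩
        · left; exact add_mem hx' hy'
        · rcases hPadd x hx' with ⟨μ, rfl⟩ | hx''
          · right
            exact ⟨μ + mu, by rw [add_smul]; abel⟩
          · left
            have : x + (a r + mu • a (n + 1)) = (x + a r) + mu • a (n + 1) := by abel
            rw [this]
            exact add_mem hx''
              (nsmul_mem (haP (n + 1) (by omega) (by omega) (by omega)) mu)
      · rcases ihy with hy' | ⟨mu, rfl⟩
        · rcases hPadd y hy' with ⟨μ, rfl⟩ | hy''
          · right
            exact ⟨lam + μ, by rw [add_smul]; abel⟩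
          · left
            have : (a r + lam • a (n + 1)) + y = (y + a r) + lam • a (n + 1) := by abel
            rw [this]
            exact add_mem hy''
              (nsmul_mem (haP (n + 1) (by omega) (by omega) (by omega)) lam)
        · left
          have : (a r + lam • a (n + 1)) + (a r + mu • a (n + 1))
              = (a (r - 1) + a (r + 1)) + (lam + mu) • a (n + 1) := by
            rw [← h2ar, add_smul]; abel
          rw [this]
          exact add_mem (add_mem (haP (r - 1) (by omega) (by omega) (by omega))
              (haP (r + 1) (by omega) (by omega) (by omega)))
            (nsmul_mem (haP (n + 1) (by omega) (by omega) (by omega)) (lam + mu))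
  -- the invariant showing a_r + lam • a_{n+1} ∉ P
  have hQ : ∀ x ∈ P, ∃ k t : ℕ, x.1 = k * m₁ + t * d ∧ ¬(k = 1 ∧ t = r - 1) ∧ (k = 0 → t = 0) := by
    intro x hx
    induction hx using AddSubmonoid.closure_induction with
    | mem x hx =>
      obtain ⟨j, ⟨hj, hjr⟩, rfl⟩ := hx
      rw [Set.mem_Icc] at hj
      have hjr' : j ≠ r := hjr
      rcases eq_or_lt_of_le hj.2 with h4 | h4
      · refine ⟨0, 0, ?_, by omega, by omega⟩
        rw [h4, havtop]; simp
      · refine ⟨1, j - 1, ?_, by omega, by omega⟩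
        rw [hav j (by omega), hm j]
        simp
    | zero => exact ⟨0, 0, by simp, by omega, by omega⟩
    | add x y hx hy ihx ihy =>
      obtain ⟨k1, t1, e1, c1, z1⟩ := ihx
      obtain ⟨k2, t2, e2, c2, z2⟩ := ihy
      refine ⟨k1 + k2, t1 + t2, ?_, by omega, by omega⟩
      have : (x + y).1 = x.1 + y.1 := rfl
      rw [this, e1, e2]; ring
  have notinP : ∀ lam : ℕ, a r + lam • a (n + 1) ∉ P := by
    intro lam hmem
    obtain ⟨k, t, e1, c1, z1⟩ := hQ _ hmem
    have efst : (a r + lam • a (n + 1)).1 = m₁ + (r - 1) * d := by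
      rw [hav r (by omega), havtop, hm r]
      simp [Prod.smul_mk]
    rw [efst] at e1
    rcases Nat.lt_or_ge k 2 with hk | hk
    · interval_cases k
      · have ht0 := z1 rfl
        subst ht0
        simp at e1
        omega
      · rw [one_mul] at e1
        have : (r - 1) * d = t * d := by linarith
        have ht : t = r - 1 := (Nat.eq_of_mul_eq_mul_right hd this.symm)
        exact c1 ⟨rfl, ht⟩
    · obtain ⟨k', rfl⟩ : ∃ k', k = k' + 2 := ⟨k - 2, by omega⟩
      have htle : t ≤ r - 1 := by
        have e3 : m₁ ≤ (k' + 2) * m₁ := Nat.le_mul_of_pos_left m₁ (by omega)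
        have : t * d ≤ (r - 1) * d := by linarith
        exact Nat.le_of_mul_le_mul_right this hd
      obtain ⟨s, hs⟩ : ∃ s, r - 1 = t + s := ⟨r - 1 - t, by omega⟩
      have key : s * d = (k' + 1) * m₁ := by
        rw [hs] at e1
        have e3 : (t + s) * d = t * d + s * d := by ring
        have e4 : (k' + 2) * m₁ = (k' + 1) * m₁ + m₁ := by ring
        linarith
      have hspos : 0 < s := by
        rcases Nat.eq_zero_or_pos s with h | h
        · exfalso
          have hpos : 0 < (k' + 1) * m₁ := Nat.mul_pos (by omega) hm₁
          rw [h] at key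
          simp at key
          omega
        · exact h
      have hdvd : m₁ ∣ s * d := ⟨k' + 1, by linarith⟩
      have hcop : Nat.Coprime m₁ d := hgcd
      have hdvd2 : m₁ ∣ s := hcop.dvd_of_dvd_mul_right hdvd
      have := Nat.le_of_dvd hspos hdvd2
      omega
  -- conclusion
  ext x
  simp only [Set.mem_diff, SetLike.mem_coe, Set.mem_setOf_eq]
  constructor
  · rintro ⟨hxS, hxP⟩
    rcases main x hxS with h | h
    · exact absurd h hxP
    · exact h
  · rintro ⟨lam, rfl⟩
    refine ⟨add_mem (haS r (by omega) (by omega))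
      (nsmul_mem (haS (n + 1) (by omega) (by omega)) lam), notinP lam⟩
end

section
/- Suppose 3 ≤ r ≤ n − 2 and r > m_1. Then S \ P_r = {a_r + λ·a_{n+1} : 0 ≤ λ ≤ d − 1}; in particular S \ P_r is a finite set with exactly d elements. -/
/-- For the projective monomial curve associated to an arithmetic
sequence, if `3 ≤ r ≤ n-2` and `r > m_1`, then
`S \ P_r = {a_r + λ·a_{n+1} : 0 ≤ λ ≤ d-1}` (written with `λ < d`); in particular
`S \ P_r` is finite with exactly `d` elements. -/
theorem stmt_11 (n m₁ d : ℕ) (hn : 4 ≤ n) (hm₁ : 0 < m₁) (hd : 0 < d)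
    (hgcd : Nat.gcd m₁ d = 1)
    (m : ℕ → ℕ) (hm : ∀ i, m i = m₁ + (i - 1) * d)
    (a : ℕ → ℕ × ℕ)
    (ha : ∀ i, a i = if i = n + 1 then (0, m n) else (m i, m n - m i))
    (S : AddSubmonoid (ℕ × ℕ))
    (hS : S = AddSubmonoid.closure (a '' Set.Icc 1 (n + 1)))
    (r : ℕ) (hr₁ : 3 ≤ r) (hr₂ : r ≤ n - 2) (hrm : m₁ < r)
    (P : AddSubmonoid (ℕ × ℕ))
    (hP : P = AddSubmonoid.closure (a '' (Set.Icc 1 (n + 1) \ {r}))) :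
    (S : Set (ℕ × ℕ)) \ (P : Set (ℕ × ℕ)) =
      {x | ∃ lam : ℕ, lam < d ∧ x = a r + lam • a (n + 1)} ∧
    ((S : Set (ℕ × ℕ)) \ (P : Set (ℕ × ℕ))).Finite ∧
    ((S : Set (ℕ × ℕ)) \ (P : Set (ℕ × ℕ))).ncard = d := by
  have hmono : ∀ i j : ℕ, i ≤ j → m i ≤ m j := by
    intro i j hij
    rw [hm, hm]
    exact Nat.add_le_add_left (Nat.mul_le_mul_right _ (by omega)) _
  have hmn : 0 < m n := by rw [hm]; omega
  have hrn : r ≤ n := by omega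
  -- a i for i ≤ n
  have haval : ∀ i : ℕ, i ≤ n → a i = (m i, m n - m i) := by
    intro i hi
    rw [ha]
    simp [show i ≠ n + 1 by omega]
  have haval' : a (n + 1) = (0, m n) := by rw [ha]; simp
  -- generators in S
  have haS : ∀ i : ℕ, 1 ≤ i → i ≤ n + 1 → a i ∈ S := by
    intro i h1 h2
    rw [hS]
    exact AddSubmonoid.subset_closure ⟨i, ⟨h1, h2⟩, rfl⟩
  have haP : ∀ i : ℕ, 1 ≤ i → i ≤ n + 1 → i ≠ r → a i ∈ P := by
    intro i h1 h2 h3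
    rw [hP]
    exact AddSubmonoid.subset_closure ⟨i, ⟨⟨h1, h2⟩, h3⟩, rfl⟩
  -- the generic exchange relation
  have hpair : ∀ i j k l : ℕ, 1 ≤ i → i ≤ n → 1 ≤ j → j ≤ n → 1 ≤ k → k ≤ n →
      1 ≤ l → l ≤ n → i + j = k + l → a i + a j = a k + a l := by
    intro i j k l hi1 hi2 hj1 hj2 hk1 hk2 hl1 hl2 hsum
    have key : m i + m j = m k + m l := by
      rw [hm, hm, hm, hm]
      obtain ⟨i', rfl⟩ : ∃ i', i = i' + 1 := ⟨i - 1, by omega⟩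
      obtain ⟨j', rfl⟩ : ∃ j', j = j' + 1 := ⟨j - 1, by omega⟩
      obtain ⟨k', rfl⟩ : ∃ k', k = k' + 1 := ⟨k - 1, by omega⟩
      obtain ⟨l', rfl⟩ : ∃ l', l = l' + 1 := ⟨l - 1, by omega⟩
      simp only [Nat.add_sub_cancel]
      have h2 : i' + j' = k' + l' := by omega
      calc m₁ + i' * d + (m₁ + j' * d) = 2 * m₁ + (i' + j') * d := by ring
        _ = 2 * m₁ + (k' + l') * d := by rw [h2]
        _ = m₁ + k' * d + (m₁ + l' * d) := by ring
    have h1 := hmono i n hi2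
    have h2 := hmono j n hj2
    have h3 := hmono k n hk2
    have h4 := hmono l n hl2
    rw [haval i hi2, haval j hj2, haval k hk2, haval l hl2]
    simp only [Prod.mk_add_mk, Prod.mk.injEq]
    omega
  -- a r + a i ∈ P for all 1 ≤ i ≤ n
  have keyAdd : ∀ i : ℕ, 1 ≤ i → i ≤ n → a r + a i ∈ P := by
    intro i h1 h2
    by_cases hi : i = n
    · subst hi
      rw [hpair r i (r + 1) (i - 1) (by omega) (by omega) (by omega) (by omega)
        (by omega) (by omega) (by omega) (by omega) (by omega)]
      exact add_mem (haP (r + 1) (by omega) (by omega) (by omega))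
        (haP (i - 1) (by omega) (by omega) (by omega))
    · by_cases hi' : i = r - 1
      · subst hi'
        rw [hpair r (r - 1) (r + 1) (r - 2) (by omega) (by omega) (by omega) (by omega)
          (by omega) (by omega) (by omega) (by omega) (by omega)]
        exact add_mem (haP (r + 1) (by omega) (by omega) (by omega))
          (haP (r - 2) (by omega) (by omega) (by omega))
      · rw [hpair r i (r - 1) (i + 1) (by omega) (by omega) (by omega) (by omega)
          (by omega) (by omega) (by omega) (by omega) (by omega)]
        exact add_mem (haP (r - 1) (by omega) (by omega) (by omega))
          (haP (i + 1) (by omega) (by omega) (by omega))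
  -- the key relation using r > m₁
  have keyD : a r + d • a (n + 1) ∈ P := by
    have heq : a r + d • a (n + 1) = d • a 1 + a (r - m₁) := by
      rw [haval r (by omega), haval 1 (by omega), haval (r - m₁) (by omega), haval']
      have hm1 : m 1 = m₁ := by rw [hm]; simp
      have hfst : m r = d * m 1 + m (r - m₁) := by
        rw [hm1, hm r, hm (r - m₁)]
        have : r - m₁ - 1 + m₁ = r - 1 := by omega
        calc m₁ + (r - 1) * d = m₁ + (r - m₁ - 1 + m₁) * d := by rw [this]
          _ = d * m₁ + (m₁ + (r - m₁ - 1) * d) := by ring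
      have h1 : m (r - m₁) ≤ m n := hmono (r - m₁) n (by omega)
      have h2 : m r ≤ m n := hmono r n (by omega)
      have h3 : m 1 ≤ m n := hmono 1 n (by omega)
      have h4 : d * m 1 ≤ d * m n := Nat.mul_le_mul_left _ h3
      have h5 : d * (m n - m 1) = d * m n - d * m 1 := Nat.mul_sub _ _ _
      simp only [Prod.smul_mk, smul_eq_mul, Prod.mk_add_mk, Prod.mk.injEq,
        Nat.mul_zero, Nat.zero_add, Nat.add_zero]
      constructor
      · omega
      · rw [h5]; omega
    rw [heq]
    exact add_mem (nsmul_mem (haP 1 (by omega) (by omega) (by omega)) d)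
      (haP (r - m₁) (by omega) (by omega) (by omega))
  have hPn1 : a (n + 1) ∈ P := haP (n + 1) (by omega) (by omega) (by omega)
  -- key absorption lemma
  have hL : ∀ p ∈ P, ∀ lam : ℕ, a r + lam • a (n + 1) + p ∈ P ∨
      ∃ mu : ℕ, a r + lam • a (n + 1) + p = a r + mu • a (n + 1) := by
    intro p hp
    rw [hP] at hp
    induction hp using AddSubmonoid.closure_induction with
    | mem x hx =>
      obtain ⟨i, ⟨⟨hi1, hi2⟩, hir⟩, rfl⟩ := hx
      intro lam
      by_cases hi : i = n + 1
      · subst hi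
        right
        exact ⟨lam + 1, by rw [succ_nsmul]; abel⟩
      · left
        have : a r + lam • a (n + 1) + a i = a r + a i + lam • a (n + 1) := by abel
        rw [this]
        exact add_mem (keyAdd i hi1 (by omega)) (nsmul_mem hPn1 lam)
    | zero =>
      intro lam
      right
      exact ⟨lam, by simp⟩
    | add x y hx hy ihx ihy =>
      intro lam
      have hyP : y ∈ P := by rw [hP]; exact hy
      have hxP : x ∈ P := by rw [hP]; exact hx
      rcases ihx lam with h | ⟨mu, hmu⟩
      · left
        have : a r + lam • a (n + 1) + (x + y) = a r + lam • a (n + 1) + x + y := by abel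
        rw [this]
        exact add_mem h hyP
      · have : a r + lam • a (n + 1) + (x + y) = a r + mu • a (n + 1) + y := by
          rw [← hmu]; abel
        rcases ihy mu with h | ⟨nu, hnu⟩
        · left; rw [this]; exact h
        · right; exact ⟨nu, by rw [this, hnu]⟩
  -- S ⊆ P ∪ {a r + mu • a (n+1)}
  have hSP : ∀ x ∈ S, x ∈ P ∨ ∃ mu : ℕ, x = a r + mu • a (n + 1) := by
    intro x hx
    rw [hS] at hx
    induction hx using AddSubmonoid.closure_induction with
    | mem x hx =>
      obtain ⟨i, ⟨hi1, hi2⟩, rfl⟩ := hx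
      by_cases hi : i = r
      · subst hi; right; exact ⟨0, by simp⟩
      · left; exact haP i hi1 hi2 hi
    | zero => left; exact zero_mem P
    | add x y hx hy ihx ihy =>
      rcases ihx with hxP | ⟨mu, rfl⟩
      · rcases ihy with hyP | ⟨nu, rfl⟩
        · left; exact add_mem hxP hyP
        · have hxy : x + (a r + nu • a (n + 1)) = a r + nu • a (n + 1) + x := by abel
          rcases hL x hxP nu with h | ⟨mu', h⟩
          · left; rw [hxy]; exact h
          · right; exact ⟨mu', by rw [hxy, h]⟩
      · rcases ihy with hyP | ⟨nu, rfl⟩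
        · have hxy : a r + mu • a (n + 1) + y = a r + mu • a (n + 1) + y := rfl
          rcases hL y hyP mu with h | ⟨mu', h⟩
          · left; exact h
          · right; exact ⟨mu', h⟩
        · left
          have : a r + mu • a (n + 1) + (a r + nu • a (n + 1)) =
              (a r + a r) + (mu + nu) • a (n + 1) := by rw [add_nsmul]; abel
          rw [this]
          exact add_mem (keyAdd r (by omega) (by omega)) (nsmul_mem hPn1 _)
  -- counting lemma: a r + lam • a (n+1) ∉ P for lam < d
  have hG' : ∀ (l : Multiset (ℕ × ℕ)),
      (∀ y ∈ l, y ∈ a '' (Set.Icc 1 (n + 1) \ {r})) →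
      l.sum.1 + l.sum.2 = Multiset.card l * m n ∧
      ∃ k T : ℕ, l.sum.1 = k * m₁ + T * d ∧ k ≤ Multiset.card l ∧ (k = 0 → T = 0) ∧
        (k = 1 → ∃ i : ℕ, 1 ≤ i ∧ i ≤ n ∧ i ≠ r ∧ l.sum.1 = m i) := by
    intro l
    induction l using Multiset.induction_on with
    | empty =>
      intro _
      refine ⟨by simp, 0, 0, by simp, by simp, fun _ => rfl, by simp⟩
    | cons y t ih =>
      intro h
      obtain ⟨hB, k, T, h1, h2, h3, h4⟩ := ih (fun z hz => h z (Multiset.mem_cons_of_mem hz))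
      obtain ⟨i, ⟨⟨hi1, hi2⟩, hir⟩, rfl⟩ := h y (Multiset.mem_cons_self _ _)
      rw [Multiset.sum_cons, Multiset.card_cons]
      by_cases hi : i = n + 1
      · subst hi
        rw [haval']
        refine ⟨?_, k, T, ?_, by omega, h3, ?_⟩
        · simp only [Prod.fst_add, Prod.snd_add, add_mul, one_mul]
          omega
        · simpa using h1
        · intro hk
          obtain ⟨j, hj1, hj2, hj3, hj4⟩ := h4 hk
          exact ⟨j, hj1, hj2, hj3, by simpa using hj4⟩
      · have hin : i ≤ n := by omega
        rw [haval i hin]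
        have hmi : m i ≤ m n := hmono i n hin
        refine ⟨?_, k + 1, T + (i - 1), ?_, by omega, by omega, ?_⟩
        · simp only [Prod.fst_add, Prod.snd_add, add_mul, one_mul]
          omega
        · simp only [Prod.fst_add]
          rw [h1, hm i]
          ring
        · intro hk
          have hk0 : k = 0 := by omega
          have hT := h3 hk0
          refine ⟨i, hi1, hin, hir, ?_⟩
          simp only [Prod.fst_add]
          rw [h1, hk0, hT]
          simp
  have hnotP : ∀ lam : ℕ, lam < d → a r + lam • a (n + 1) ∉ P := by
    intro lam hlam hmem
    rw [hP] at hmem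
    obtain ⟨l, hl, hsum⟩ := AddSubmonoid.exists_multiset_of_mem_closure hmem
    obtain ⟨hB, k, T, h1, h2, h3, h4⟩ := hG' l hl
    have hfst : l.sum.1 = m r := by
      rw [hsum, haval r (by omega), haval']
      simp [smul_eq_mul]
    have hsnd : l.sum.2 = (m n - m r) + lam * m n := by
      rw [hsum, haval r (by omega), haval']
      simp [smul_eq_mul]
    have hmr : m r ≤ m n := hmono r n hrn
    have hcard : Multiset.card l = 1 + lam := by
      have : (1 + lam) * m n = Multiset.card l * m n := by
        rw [add_mul, one_mul]
        omega
      exact (Nat.eq_of_mul_eq_mul_right hmn this).symm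
    rw [hfst] at h1 h4
    rw [hcard] at h2
    -- now m r = k * m₁ + T * d, k ≤ 1 + lam ≤ d
    have hk0 : k ≠ 0 := by
      intro hk
      rw [hk, h3 hk] at h1
      simp at h1
      rw [hm] at h1
      omega
    have hmr' : m r = m₁ + (r - 1) * d := hm r
    have hdvd : d ∣ (k - 1) * m₁ := by
      have heq : (k - 1) * m₁ + T * d = (r - 1) * d := by
        have hk1 : k * m₁ = m₁ + (k - 1) * m₁ := by
          obtain ⟨k', rfl⟩ : ∃ k', k = k' + 1 := ⟨k - 1, by omega⟩
          simp [add_mul]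
          ring
        omega
      have hle : T * d ≤ (r - 1) * d := by omega
      have : (k - 1) * m₁ = (r - 1) * d - T * d := by omega
      rw [this]
      exact Nat.dvd_sub (dvd_mul_left d (r - 1)) (dvd_mul_left d T)
    have hcop : Nat.Coprime d m₁ := Nat.Coprime.symm hgcd
    have hdk : d ∣ (k - 1) := (Nat.Coprime.dvd_of_dvd_mul_right hcop) hdvd
    have hk1 : k = 1 := by
      have := Nat.eq_zero_of_dvd_of_lt hdk (show k - 1 < d by omega)
      omega
    obtain ⟨i, hi1, hi2, hir, hieq⟩ := h4 hk1
    rw [hm, hm] at hieq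
    have : i - 1 = r - 1 := Nat.eq_of_mul_eq_mul_right hd (by omega)
    omega
  -- assemble
  have hDT : (S : Set (ℕ × ℕ)) \ (P : Set (ℕ × ℕ)) =
      {x | ∃ lam : ℕ, lam < d ∧ x = a r + lam • a (n + 1)} := by
    ext x
    constructor
    · rintro ⟨hxS, hxP⟩
      rcases hSP x hxS with h | ⟨mu, rfl⟩
      · exact absurd h hxP
      · by_cases hmu : mu < d
        · exact ⟨mu, hmu, rfl⟩
        · exfalso
          apply hxP
          have : a r + mu • a (n + 1) = (a r + d • a (n + 1)) + (mu - d) • a (n + 1) := by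
            rw [add_assoc, ← add_nsmul]
            congr 2
            omega
          rw [this]
          exact add_mem keyD (nsmul_mem hPn1 _)
    · rintro ⟨lam, hlam, rfl⟩
      exact ⟨add_mem (haS r (by omega) (by omega))
        (nsmul_mem (haS (n + 1) (by omega) (by omega)) _), hnotP lam hlam⟩
  have himg : {x : ℕ × ℕ | ∃ lam : ℕ, lam < d ∧ x = a r + lam • a (n + 1)} =
      (fun lam : ℕ => a r + lam • a (n + 1)) '' Set.Iio d := by
    ext x
    simp only [Set.mem_setOf_eq, Set.mem_image, Set.mem_Iio]
    constructor
    · rintro ⟨lam, h1, h2⟩; exact ⟨lam, h1, h2.symm⟩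
    · rintro ⟨lam, h1, h2⟩; exact ⟨lam, h1, h2.symm⟩
  have hinj : Set.InjOn (fun lam : ℕ => a r + lam • a (n + 1)) (Set.Iio d) := by
    intro x _ y _ hxy
    simp only at hxy
    have := congrArg Prod.snd hxy
    rw [haval r (by omega), haval'] at this
    simp only [Prod.smul_mk, smul_eq_mul, Prod.snd_add] at this
    have : x * m n = y * m n := by omega
    exact Nat.eq_of_mul_eq_mul_right hmn this
  refine ⟨hDT, ?_, ?_⟩
  · rw [hDT, himg]
    exact (Set.finite_Iio d).image _
  · rw [hDT, himg, Set.ncard_image_of_injOn hinj]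
    rw [← Finset.coe_Iio, Set.ncard_coe_finset]
    exact Nat.card_Iio d
end
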